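/- arXiv:1902.02452 — 6 statements merged into one kernel-verified Lean document; each statement's English description precedes it below -/
import Mathlib

section
/- SURE is unbiased for the MSE in one dimension: for y = x + n with n ~ N(0, σ²) and h: ℝ → ℝ differentiable with bounded derivative, E[(x - h(y))²] = E[(y - h(y))² - σ² + 2σ²·h'(y)]. -/
open MeasureTheory ProbabilityTheory Real
open scoped NNReal ENNReal

namespace SureAux

variable {v : ℝ≥0}

noncomputable def phi (v : ℝ≥0) (t : ℝ) : ℝ := gaussianPDFReal 0 v t

lemma phi_eq (v : ℝ≥0) (t : ℝ) :
    phi v t = (√(2*π*v))⁻¹ * rexp (-((2*(v:ℝ))⁻¹ * t^2)) := by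
  rw [phi, gaussianPDFReal, show (-(t-0)^2/(2*(v:ℝ))) = -((2*(v:ℝ))⁻¹ * t^2) by ring]

lemma phi_nonneg (v : ℝ≥0) (t : ℝ) : 0 ≤ phi v t := gaussianPDFReal_nonneg 0 v t

lemma measurable_phi (v : ℝ≥0) : Measurable (phi v) := measurable_gaussianPDFReal 0 v

lemma integrable_phi (v : ℝ≥0) : Integrable (phi v) := integrable_gaussianPDFReal 0 v

lemma hasDerivAt_phi (hv : v ≠ 0) (t : ℝ) :
    HasDerivAt (phi v) (-(t/(v:ℝ)) * phi v t) t := by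
  have hv' : (0:ℝ) < v := by positivity
  set b : ℝ := (2*(v:ℝ))⁻¹ with hb
  have h1 : HasDerivAt (fun s : ℝ => -(b * s^2)) (-(b * (2*t))) t := by
    exact (((hasDerivAt_pow 2 t).const_mul b).neg).congr_deriv (by simp)
  have h2 := (h1.exp).const_mul (√(2*π*v))⁻¹
  have : ∀ s : ℝ, phi v s = (√(2*π*v))⁻¹ * rexp (-(b * s^2)) := fun s => phi_eq v s
  rw [funext this]
  refine h2.congr_deriv ?_
  rw [hb]
  field_simp

lemma integrable_abs_mul_phi (hv : v ≠ 0) : Integrable (fun t => |t| * phi v t) := by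
  have hv' : (0:ℝ) < v := by positivity
  have hb : (0:ℝ) < (2*(v:ℝ))⁻¹ := by positivity
  have h1 : Integrable (fun t : ℝ => t * rexp (-(2*(v:ℝ))⁻¹ * t^2)) := by
    have := integrable_rpow_mul_exp_neg_mul_sq hb (by norm_num : (-1:ℝ) < 1)
    simpa using this
  have h2 := h1.abs.const_mul (√(2*π*v))⁻¹
  apply h2.congr
  filter_upwards with t
  rw [phi_eq]
  rw [abs_mul, abs_of_pos (exp_pos _)]
  ring_nf

lemma integrable_sq_mul_phi (hv : v ≠ 0) : Integrable (fun t => t^2 * phi v t) := by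
  have hb : (0:ℝ) < (2*(v:ℝ))⁻¹ := by positivity
  have h1 : Integrable (fun t : ℝ => t^2 * rexp (-(2*(v:ℝ))⁻¹ * t^2)) := by
    have := integrable_rpow_mul_exp_neg_mul_sq hb (by norm_num : (-1:ℝ) < 2)
    apply this.congr
    filter_upwards with t
    rw [show ((2:ℝ):ℝ) = ((2:ℕ):ℝ) by norm_num, rpow_natCast]
  have h2 := h1.const_mul (√(2*π*v))⁻¹
  apply h2.congr
  filter_upwards with t
  rw [phi_eq]
  ring

/-- Any measurable function with at-most-quadratic growth is integrable against the
gaussian density. -/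
lemma integrable_poly_bound (hv : v ≠ 0) {f : ℝ → ℝ}
    (hf : AEStronglyMeasurable f volume) {A B D : ℝ}
    (hbd : ∀ t, |f t| ≤ A + B * |t| + D * t^2) :
    Integrable (fun t => f t * phi v t) := by
  refine Integrable.mono'
    (g := fun t => A * phi v t + B * (|t| * phi v t) + D * (t^2 * phi v t))
    (((integrable_phi v).const_mul A).add
      (((integrable_abs_mul_phi hv).const_mul B).add
        ((integrable_sq_mul_phi hv).const_mul D)) |>.congr
        (by filter_upwards with t; simp [Pi.add_apply]; ring))
    (hf.mul (measurable_phi v).aestronglyMeasurable) ?_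
  filter_upwards with t
  have h0 := phi_nonneg v t
  have h1 := hbd t
  rw [Real.norm_eq_abs, abs_mul, abs_of_nonneg h0]
  nlinarith [abs_nonneg (f t), abs_nonneg t]

lemma growth {g : ℝ → ℝ} (hg : Differentiable ℝ g) {C : ℝ}
    (hC : ∀ t, |deriv g t| ≤ C) (t : ℝ) : |g t| ≤ |g 0| + C * |t| := by
  have hC0 : 0 ≤ C := le_trans (abs_nonneg _) (hC 0)
  have hlip : LipschitzWith (Real.toNNReal C) g := by
    apply lipschitzWith_of_nnnorm_deriv_le hg
    intro x
    rw [← NNReal.coe_le_coe, coe_nnnorm, Real.coe_toNNReal _ hC0, Real.norm_eq_abs]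
    exact hC x
  have := hlip.dist_le_mul t 0
  rw [Real.dist_eq, Real.dist_eq, sub_zero, Real.coe_toNNReal _ hC0] at this
  calc |g t| ≤ |g t - g 0| + |g 0| := by
        have := abs_sub_abs_le_abs_sub (g t) (g 0); linarith [abs_sub_abs_le_abs_sub (g t) (g 0)]
    _ ≤ |g 0| + C * |t| := by linarith

/-- Stein's lemma, weighted-volume form. -/
lemma stein (hv : v ≠ 0) {g : ℝ → ℝ} (hg : Differentiable ℝ g) {C : ℝ}
    (hC : ∀ t, |deriv g t| ≤ C) :
    ∫ t, t * g t * phi v t = (v:ℝ) * ∫ t, deriv g t * phi v t := by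
  have hv' : (0:ℝ) < v := by positivity
  have hC0 : 0 ≤ C := le_trans (abs_nonneg _) (hC 0)
  have hgrow := growth hg hC
  have hgm : AEStronglyMeasurable g volume := hg.continuous.aestronglyMeasurable
  -- F = g * phi
  have hF' : ∀ t, HasDerivAt (fun s => g s * phi v s)
      (deriv g t * phi v t + g t * (-(t/(v:ℝ)) * phi v t)) t :=
    fun t => ((hg t).hasDerivAt).mul (hasDerivAt_phi hv t)
  have intF : Integrable (fun t => g t * phi v t) :=
    integrable_poly_bound hv hgm (A := |g 0|) (B := C) (D := 0)
      (fun t => by have := hgrow t; nlinarith)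
  have int1 : Integrable (fun t => deriv g t * phi v t) :=
    integrable_poly_bound hv (measurable_deriv g).aestronglyMeasurable
      (A := C) (B := 0) (D := 0) (fun t => by have := hC t; nlinarith [abs_nonneg t, sq_nonneg t])
  have int2 : Integrable (fun t => (g t * -(t/(v:ℝ))) * phi v t) := by
    have hmeas : AEStronglyMeasurable (fun t : ℝ => g t * -(t/(v:ℝ))) volume :=
      hgm.mul (Continuous.aestronglyMeasurable (by fun_prop))
    apply integrable_poly_bound hv hmeas
      (A := 0) (B := |g 0|/(v:ℝ)) (D := C/(v:ℝ))
    intro t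
    have h1 := hgrow t
    have h2 : |g t * -(t/(v:ℝ))| = |g t| * |t| / (v:ℝ) := by
      rw [abs_mul, abs_neg, abs_div, abs_of_pos hv']
      ring
    rw [h2, show (0 + |g 0|/(v:ℝ) * |t| + C/(v:ℝ) * t^2)
        = (|g 0| * |t| + C * t^2)/(v:ℝ) by ring]
    gcongr
    nlinarith [abs_nonneg t, sq_abs t]
  have int2' : Integrable (fun t => g t * (-(t/(v:ℝ)) * phi v t)) :=
    int2.congr (by filter_upwards with t; ring)
  have hzero : ∫ t, (deriv g t * phi v t + g t * (-(t/(v:ℝ)) * phi v t)) = 0 :=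
    integral_eq_zero_of_hasDerivAt_of_integrable hF' (int1.add int2') intF
  rw [integral_add int1 int2'] at hzero
  have key : ∫ t, g t * (-(t/(v:ℝ)) * phi v t)
      = -((v:ℝ)⁻¹ * ∫ t, t * g t * phi v t) := by
    rw [← integral_const_mul, ← integral_neg]
    congr 1; ext t; ring
  rw [key] at hzero
  have : ∫ t, deriv g t * phi v t = (v:ℝ)⁻¹ * ∫ t, t * g t * phi v t := by linarith
  rw [this]
  field_simp

lemma gaussian_eq_withDensity (hv : v ≠ 0) :
    gaussianReal 0 v = volume.withDensity (fun t => ((Real.toNNReal (phi v t) : ℝ≥0) : ℝ≥0∞)) := by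
  rw [gaussianReal_of_var_ne_zero _ hv]
  rfl

lemma integral_gaussian_eq (hv : v ≠ 0) (f : ℝ → ℝ) :
    ∫ t, f t ∂(gaussianReal 0 v) = ∫ t, f t * phi v t := by
  rw [gaussian_eq_withDensity hv,
    integral_withDensity_eq_integral_smul ((measurable_phi v).real_toNNReal) f]
  congr 1; ext t
  rw [NNReal.smul_def, smul_eq_mul, Real.coe_toNNReal _ (phi_nonneg v t), mul_comm]

lemma integrable_gaussian_iff (hv : v ≠ 0) (f : ℝ → ℝ) :
    Integrable f (gaussianReal 0 v) ↔ Integrable (fun t => f t * phi v t) volume := by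
  rw [gaussian_eq_withDensity hv,
    integrable_withDensity_iff_integrable_smul ((measurable_phi v).real_toNNReal)]
  constructor <;> intro h <;> refine h.congr (by
    filter_upwards with t
    rw [NNReal.smul_def, smul_eq_mul, Real.coe_toNNReal _ (phi_nonneg v t), mul_comm])

/-- Stein's lemma for the gaussian measure. -/
lemma stein_gaussian (hv : v ≠ 0) {g : ℝ → ℝ} (hg : Differentiable ℝ g) {C : ℝ}
    (hC : ∀ t, |deriv g t| ≤ C) :
    ∫ t, t * g t ∂(gaussianReal 0 v) = (v:ℝ) * ∫ t, deriv g t ∂(gaussianReal 0 v) := by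
  rw [integral_gaussian_eq hv, integral_gaussian_eq hv]
  exact stein hv hg hC

end SureAux


open SureAux
/-- SURE is an unbiased estimator of the MSE in one dimension: for `y = x + n` with
`n ~ N(0, σ²)` and `h : ℝ → ℝ` differentiable with bounded derivative,
`E[(x - h(y))²] = E[(y - h(y))² - σ² + 2σ²·h'(y)]`. -/
theorem sure_unbiased_one_dim (x : ℝ) (σ : ℝ≥0) (hσ : 0 < σ)
    (h : ℝ → ℝ) (hdiff : Differentiable ℝ h)
    (C : ℝ) (hC : ∀ t : ℝ, |deriv h t| ≤ C) :
    ∫ n, (x - h (x + n)) ^ 2 ∂(gaussianReal 0 (σ ^ 2))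
      = ∫ n, ((x + n - h (x + n)) ^ 2 - (σ : ℝ) ^ 2
          + 2 * (σ : ℝ) ^ 2 * deriv h (x + n)) ∂(gaussianReal 0 (σ ^ 2)) := by
  set v : ℝ≥0 := σ ^ 2 with hvdef
  have hv : v ≠ 0 := pow_ne_zero 2 hσ.ne'
  have hvr : ((σ : ℝ)) ^ 2 = (v : ℝ) := by rw [hvdef]; push_cast; ring
  have hC0 : 0 ≤ C := le_trans (abs_nonneg _) (hC 0)
  -- the shifted function and its properties
  set G : ℝ → ℝ := fun t => h (x + t) with hGdef
  have hGdiff : Differentiable ℝ G := hdiff.comp (differentiable_id.const_add x)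
  have hGderiv : ∀ t, deriv G t = deriv h (x + t) := fun t => deriv_comp_const_add h x t
  have hCG : ∀ t, |deriv G t| ≤ C := fun t => by rw [hGderiv]; exact hC _
  -- the residual function
  set U : ℝ → ℝ := fun t => x + t - G t with hUdef
  have hUdiff : Differentiable ℝ U := (differentiable_id.const_add x).sub hGdiff
  have hUderiv : ∀ t, deriv U t = 1 - deriv G t := by
    intro t
    have h1 : HasDerivAt U (1 - deriv G t) t :=
      (((hasDerivAt_id t).const_add x)).sub ((hGdiff t).hasDerivAt)
    exact h1.deriv
  have hCU : ∀ t, |deriv U t| ≤ 1 + C := by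
    intro t
    rw [hUderiv]
    calc |1 - deriv G t| ≤ |(1:ℝ)| + |deriv G t| := abs_sub _ _
      _ ≤ 1 + C := by simpa using hCG t
  -- growth bounds
  have hGgrow : ∀ t, |G t| ≤ |G 0| + C * |t| := growth hGdiff hCG
  set K : ℝ := |x| + |G 0| with hKdef
  set L : ℝ := 1 + C with hLdef
  have hK0 : 0 ≤ K := by positivity
  have hL0 : 0 ≤ L := by positivity
  have hUgrow : ∀ t, |U t| ≤ K + L * |t| := by
    intro t
    have h1 : |U t| ≤ |x + t| + |G t| := abs_sub _ _
    have h2 : |x + t| ≤ |x| + |t| := abs_add_le _ _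
    have h3 := hGgrow t
    rw [hKdef, hLdef]; linarith
  -- integrability facts under the gaussian measure
  set γ : Measure ℝ := gaussianReal 0 v with hγdef
  have intU2 : Integrable (fun t => U t ^ 2) γ := by
    rw [hγdef, integrable_gaussian_iff hv]
    refine integrable_poly_bound hv ((hUdiff.continuous.pow 2).aestronglyMeasurable)
      (A := K^2) (B := 2*K*L) (D := L^2) ?_
    intro t
    have h1 := hUgrow t
    rw [show |U t ^ 2| = |U t|^2 by rw [sq_abs, abs_of_nonneg (sq_nonneg _)]]
    nlinarith [abs_nonneg (U t), abs_nonneg t, sq_abs t,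
      mul_self_le_mul_self (abs_nonneg (U t)) h1]
  have intTU : Integrable (fun t => t * U t) γ := by
    rw [hγdef, integrable_gaussian_iff hv]
    refine integrable_poly_bound hv
      (continuous_id.aestronglyMeasurable.mul hUdiff.continuous.aestronglyMeasurable)
      (A := 0) (B := K) (D := L) ?_
    intro t
    have h1 := hUgrow t
    rw [abs_mul]
    nlinarith [abs_nonneg (U t), abs_nonneg t, sq_abs t]
  have intTT : Integrable (fun t : ℝ => t * t) γ := by
    rw [hγdef, integrable_gaussian_iff hv]
    refine integrable_poly_bound hv
      (continuous_id.aestronglyMeasurable.mul continuous_id.aestronglyMeasurable)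
      (A := 0) (B := 0) (D := 1) ?_
    intro t
    rw [abs_mul]
    nlinarith [abs_nonneg t, sq_abs t]
  have intDG : Integrable (fun t => deriv G t) γ := by
    rw [hγdef, integrable_gaussian_iff hv]
    refine integrable_poly_bound hv (measurable_deriv G).aestronglyMeasurable
      (A := C) (B := 0) (D := 0) ?_
    intro t
    have := hCG t
    nlinarith [abs_nonneg t, sq_nonneg t]
  -- Stein's lemma applications
  have SU : ∫ t, t * U t ∂γ = (v:ℝ) * (1 - ∫ t, deriv G t ∂γ) := by
    rw [hγdef, stein_gaussian hv hUdiff hCU]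
    congr 1
    have : ∫ t, deriv U t ∂(gaussianReal 0 v) = ∫ t, (1 - deriv G t) ∂(gaussianReal 0 v) := by
      apply integral_congr_ae
      filter_upwards with t
      exact hUderiv t
    rw [this, integral_sub (integrable_const 1) (by rw [← hγdef]; exact intDG)]
    simp
  have SID : ∫ t : ℝ, t * t ∂γ = (v:ℝ) := by
    have hid : Differentiable ℝ (fun t : ℝ => t) := differentiable_id
    have hCid : ∀ t : ℝ, |deriv (fun s : ℝ => s) t| ≤ 1 := by
      intro t; rw [deriv_id'']; norm_num
    rw [hγdef, stein_gaussian hv hid hCid]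
    have : ∫ t : ℝ, deriv (fun s : ℝ => s) t ∂(gaussianReal 0 v) = 1 := by
      simp [deriv_id'']
    rw [this, mul_one]
  -- expand the left-hand side
  have lhs_eq : ∫ n, (x - h (x + n)) ^ 2 ∂(gaussianReal 0 (σ^2))
      = (∫ t, U t ^ 2 ∂γ) - 2 * ∫ t, t * U t ∂γ + ∫ t : ℝ, t * t ∂γ := by
    rw [show gaussianReal 0 (σ^2) = γ from rfl]
    have : ∫ n, (x - h (x + n)) ^ 2 ∂γ
        = ∫ n, (U n ^ 2 - 2 * (n * U n) + n * n) ∂γ := by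
      apply integral_congr_ae
      filter_upwards with t
      rw [hUdef]; simp only [hGdef]; ring
    have i1 : Integrable (fun n => U n ^ 2 - 2 * (n * U n)) γ :=
      intU2.sub (intTU.const_mul 2)
    rw [this, integral_add i1 intTT,
      integral_sub intU2 (intTU.const_mul 2), integral_const_mul]
  -- expand the right-hand side
  have rhs_eq : ∫ n, ((x + n - h (x + n)) ^ 2 - (σ : ℝ) ^ 2
          + 2 * (σ : ℝ) ^ 2 * deriv h (x + n)) ∂(gaussianReal 0 (σ^2))
      = (∫ t, U t ^ 2 ∂γ) - (v:ℝ) + 2 * (v:ℝ) * ∫ t, deriv G t ∂γ := by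
    rw [show gaussianReal 0 (σ^2) = γ from rfl]
    have : ∫ n, ((x + n - h (x + n)) ^ 2 - (σ : ℝ) ^ 2
          + 2 * (σ : ℝ) ^ 2 * deriv h (x + n)) ∂γ
        = ∫ n, (U n ^ 2 - (v:ℝ) + 2 * (v:ℝ) * deriv G n) ∂γ := by
      apply integral_congr_ae
      filter_upwards with t
      rw [hUdef, hvr, hGderiv]
    have i1 : Integrable (fun n => U n ^ 2 - (v:ℝ)) γ :=
      intU2.sub (integrable_const _)
    have i2 : Integrable (fun n => 2 * (v:ℝ) * deriv G n) γ := intDG.const_mul _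
    rw [this, integral_add i1 i2,
      integral_sub intU2 (integrable_const _), integral_const_mul]
    have : IsProbabilityMeasure γ := by rw [hγdef]; infer_instance
    simp
  rw [lhs_eq, rhs_eq, SU, SID]
  ring
end

section
/- Multivariate SURE is unbiased: for y = x + n ∈ ℝ^N with n ~ N(0, σ²I) and h: ℝ^N → ℝ^N continuously differentiable with bounded partial derivatives, E[(1/N)·‖x - h(y)‖²] = E[(1/N)·‖y - h(y)‖² - σ² + (2σ²/N)·∑ᵢ ∂hᵢ(y)/∂yᵢ]. -/
open MeasureTheory ProbabilityTheory Real Filter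
open scoped NNReal ENNReal Topology

namespace SUREAux

variable {v : ℝ≥0}

lemma gauss_integral_eq (hv : v ≠ 0) (g : ℝ → ℝ) :
    ∫ t, g t ∂(gaussianReal 0 v) = ∫ t, gaussianPDFReal 0 v t * g t := by
  rw [gaussianReal_of_var_ne_zero _ hv, gaussianPDF_def]
  have : (fun x => ENNReal.ofReal (gaussianPDFReal 0 v x))
      = (fun x => ((gaussianPDFReal 0 v x).toNNReal : ℝ≥0∞)) := rfl
  rw [this, integral_withDensity_eq_integral_smul
    (by exact (measurable_gaussianPDFReal 0 v).real_toNNReal) g]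
  congr 1
  ext t
  simp [NNReal.smul_def, Real.coe_toNNReal _ (gaussianPDFReal_nonneg 0 v t)]

lemma gauss_integrable_iff (hv : v ≠ 0) (g : ℝ → ℝ) :
    Integrable g (gaussianReal 0 v) ↔
      Integrable (fun t => gaussianPDFReal 0 v t * g t) volume := by
  rw [gaussianReal_of_var_ne_zero _ hv, gaussianPDF_def]
  have : (fun x => ENNReal.ofReal (gaussianPDFReal 0 v x))
      = (fun x => ((gaussianPDFReal 0 v x).toNNReal : ℝ≥0∞)) := rfl
  rw [this, integrable_withDensity_iff_integrable_smul
    (by exact (measurable_gaussianPDFReal 0 v).real_toNNReal)]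
  constructor <;> intro hh <;> refine hh.congr (Filter.Eventually.of_forall fun t => ?_) <;>
    simp [NNReal.smul_def, Real.coe_toNNReal _ (gaussianPDFReal_nonneg 0 v t)]

lemma integrable_sq_mul_exp {b : ℝ} (hb : 0 < b) :
    Integrable (fun x : ℝ => x ^ 2 * rexp (-b * x ^ 2)) volume := by
  have maj : Integrable (fun x : ℝ => (2 / b) * rexp (-(b / 2) * x ^ 2)) volume :=
    (integrable_exp_neg_mul_sq (by linarith)).const_mul _
  refine maj.mono' (Continuous.aestronglyMeasurable (by continuity)) ?_
  refine Filter.Eventually.of_forall fun x => ?_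
  have h1 : x ^ 2 ≤ (2 / b) * rexp ((b / 2) * x ^ 2) := by
    have := Real.add_one_le_exp ((b / 2) * x ^ 2)
    have hb' : 0 < b / 2 := by linarith
    rw [div_mul_eq_mul_div, le_div_iff₀ hb]
    nlinarith [sq_nonneg x]
  have h2 : rexp ((b / 2) * x ^ 2) * rexp (-b * x ^ 2) = rexp (-(b / 2) * x ^ 2) := by
    rw [← Real.exp_add]; ring_nf
  rw [Real.norm_eq_abs, abs_of_nonneg (by positivity)]
  calc x ^ 2 * rexp (-b * x ^ 2)
      ≤ (2 / b) * rexp ((b / 2) * x ^ 2) * rexp (-b * x ^ 2) :=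
        mul_le_mul_of_nonneg_right h1 (Real.exp_pos _).le
    _ = (2 / b) * rexp (-(b / 2) * x ^ 2) := by rw [mul_assoc, h2]

lemma pdf_eq (t : ℝ) : gaussianPDFReal 0 v t
    = (√(2 * π * v))⁻¹ * rexp (-(2 * (v : ℝ))⁻¹ * t ^ 2) := by
  rw [gaussianPDFReal, sub_zero]
  congr 1
  rw [div_eq_mul_inv, neg_mul, mul_comm]
  ring_nf

lemma integrable_pdfmaj (hv : v ≠ 0) (a b : ℝ) :
    Integrable (fun t => gaussianPDFReal 0 v t * (a + b * t ^ 2)) volume := by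
  have hv' : (0 : ℝ) < v := by positivity
  have hβ : (0 : ℝ) < (2 * (v : ℝ))⁻¹ := by positivity
  have h1 : Integrable (fun t : ℝ =>
      a * (√(2 * π * v))⁻¹ * rexp (-(2 * (v : ℝ))⁻¹ * t ^ 2)
      + b * (√(2 * π * v))⁻¹ * (t ^ 2 * rexp (-(2 * (v : ℝ))⁻¹ * t ^ 2))) volume :=
    ((integrable_exp_neg_mul_sq hβ).const_mul _).add
      ((integrable_sq_mul_exp hβ).const_mul _)
  refine h1.congr (Filter.Eventually.of_forall fun t => ?_)
  simp only [pdf_eq]; ring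

lemma gauss_integrable_of_quad (hv : v ≠ 0) (φ : ℝ → ℝ) (hc : Continuous φ)
    (a b : ℝ) (hq : ∀ t, |φ t| ≤ a + b * t ^ 2) :
    Integrable φ (gaussianReal 0 v) := by
  rw [gauss_integrable_iff hv]
  refine (integrable_pdfmaj hv a b).mono'
    (((measurable_gaussianPDFReal 0 v).mul hc.measurable).aestronglyMeasurable) ?_
  refine Filter.Eventually.of_forall fun t => ?_
  rw [Real.norm_eq_abs, abs_mul, abs_of_nonneg (gaussianPDFReal_nonneg 0 v t)]
  exact mul_le_mul_of_nonneg_left (hq t) (gaussianPDFReal_nonneg 0 v t)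


section
variable {v : ℝ≥0}

lemma pdf_eq' (t : ℝ) : gaussianPDFReal 0 v t
    = (√(2 * π * v))⁻¹ * rexp (-(2 * (v : ℝ))⁻¹ * t ^ 2) := by
  rw [gaussianPDFReal, sub_zero]
  congr 1
  rw [div_eq_mul_inv, neg_mul, mul_comm]
  ring_nf

lemma hasDerivAt_pdf (hv : v ≠ 0) (t : ℝ) :
    HasDerivAt (fun s => -(v : ℝ) * gaussianPDFReal 0 v s)
      (t * gaussianPDFReal 0 v t) t := by
  have hv' : (0 : ℝ) < v := by positivity
  have h : ∀ s : ℝ, -(v : ℝ) * gaussianPDFReal 0 v s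
      = -(v : ℝ) * (√(2 * π * v))⁻¹ * rexp (-(2 * (v : ℝ))⁻¹ * s ^ 2) := by
    intro s; rw [pdf_eq']; ring
  simp only [h]
  have h1 : HasDerivAt (fun s : ℝ => -(2 * (v : ℝ))⁻¹ * s ^ 2)
      (-(2 * (v : ℝ))⁻¹ * (2 * t)) t := by
    simpa using ((hasDerivAt_pow 2 t).const_mul (-(2 * (v : ℝ))⁻¹))
  have h2 := (h1.exp).const_mul (-(v : ℝ) * (√(2 * π * v))⁻¹)
  refine h2.congr_deriv ?_
  rw [pdf_eq']
  field_simp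
end

section stein
variable {v : ℝ≥0}

lemma tendsto_pdfmaj (hv : v ≠ 0) (a b : ℝ) :
    Tendsto (fun t => gaussianPDFReal 0 v t * (a + b * |t|)) atTop (𝓝 0)
    ∧ Tendsto (fun t => gaussianPDFReal 0 v t * (a + b * |t|)) atBot (𝓝 0) := by
  have hv' : (0 : ℝ) < v := by positivity
  have hβ : (0 : ℝ) < (2 * (v : ℝ))⁻¹ := by positivity
  set β : ℝ := (2 * (v : ℝ))⁻¹ with hβdef
  have hexp : Tendsto (fun t : ℝ => rexp (-β * t ^ 2)) atTop (𝓝 0) := by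
    have : Tendsto (fun t : ℝ => -β * t ^ 2) atTop atBot := by
      apply Tendsto.const_mul_atTop_of_neg (by linarith : -β < 0)
      exact tendsto_pow_atTop (by norm_num)
    exact Real.tendsto_exp_atBot.comp this
  have hexp1 : Tendsto (fun t : ℝ => t * rexp (-β * t ^ 2)) atTop (𝓝 0) := by
    have hlo := rpow_mul_exp_neg_mul_sq_isLittleO_exp_neg hβ 1
    have h0 : Tendsto (fun t : ℝ => rexp (-(1/2) * t)) atTop (𝓝 0) := by
      refine Real.tendsto_exp_atBot.comp ?_
      exact Tendsto.const_mul_atTop_of_neg (by norm_num) tendsto_id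
    have := hlo.trans_tendsto h0
    refine this.congr' ?_
    filter_upwards [eventually_gt_atTop (0 : ℝ)] with t ht
    rw [Real.rpow_one]
  have key : Tendsto (fun t : ℝ => rexp (-β * t ^ 2) * (a + b * |t|)) atTop (𝓝 0) := by
    have : Tendsto (fun t : ℝ => a * rexp (-β * t ^ 2) + b * (t * rexp (-β * t ^ 2)))
        atTop (𝓝 (a * 0 + b * 0)) := ((hexp.const_mul a).add (hexp1.const_mul b))
    rw [mul_zero, mul_zero, add_zero] at this
    refine this.congr' ?_
    filter_upwards [eventually_ge_atTop (0 : ℝ)] with t ht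
    rw [abs_of_nonneg ht]; ring
  have keyB : Tendsto (fun t : ℝ => rexp (-β * t ^ 2) * (a + b * |t|)) atBot (𝓝 0) := by
    have := key.comp tendsto_neg_atBot_atTop
    refine this.congr fun t => ?_
    simp [Function.comp, neg_sq]
  constructor
  · have := key.const_mul (√(2 * π * v))⁻¹
    rw [mul_zero] at this
    refine this.congr fun t => ?_
    rw [pdf_eq']; ring
  · have := keyB.const_mul (√(2 * π * v))⁻¹
    rw [mul_zero] at this
    refine this.congr fun t => ?_
    rw [pdf_eq']; ring
end stein

section stein2
variable {v : ℝ≥0}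


lemma stein1 (hv : v ≠ 0) (g g' : ℝ → ℝ) (C : ℝ)
    (hd : ∀ t, HasDerivAt g (g' t) t) (hc : Continuous g')
    (hC : ∀ t, |g' t| ≤ C) :
    ∫ t, t * g t ∂(gaussianReal 0 v)
      = (v : ℝ) * ∫ t, g' t ∂(gaussianReal 0 v) := by
  have hv' : (0 : ℝ) < v := by positivity
  have gcont : Continuous g := by
    rw [continuous_iff_continuousAt]; exact fun t => (hd t).continuousAt
  have hC0 : 0 ≤ C := le_trans (abs_nonneg _) (hC 0)
  have growth : ∀ t, |g t| ≤ |g 0| + C * |t| := by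
    intro t
    have := Convex.norm_image_sub_le_of_norm_hasDerivWithin_le
      (f := g) (f' := g') (fun x _ => (hd x).hasDerivWithinAt)
      (fun x _ => hC x) convex_univ (Set.mem_univ 0) (Set.mem_univ t)
    simp only [Real.norm_eq_abs, sub_zero] at this
    calc |g t| ≤ |g 0| + |g t - g 0| := by
          have := abs_sub_abs_le_abs_sub (g t) (g 0); linarith [abs_sub_comm (g t) (g 0)]
      _ ≤ |g 0| + C * |t| := by linarith
  set pdf : ℝ → ℝ := gaussianPDFReal 0 v with hpdf
  -- integrability facts
  have quad1 : ∀ t : ℝ, |t * g t| ≤ |g 0| / 2 + (|g 0| / 2 + C) * t ^ 2 := by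
    intro t
    have h1 : |t * g t| ≤ |t| * (|g 0| + C * |t|) := by
      rw [abs_mul]; exact mul_le_mul_of_nonneg_left (growth t) (abs_nonneg t)
    have h2 : |t| ≤ (1 + t ^ 2) / 2 := by nlinarith [sq_nonneg (|t| - 1), sq_abs t]
    nlinarith [abs_nonneg t, abs_nonneg (g 0), sq_abs t, sq_nonneg t, abs_nonneg (g t)]
  have muI1 : Integrable (fun t => t * g t) (gaussianReal 0 v) :=
    gauss_integrable_of_quad hv _ (continuous_id.mul gcont) _ _ quad1
  have muI2 : Integrable g' (gaussianReal 0 v) :=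
    gauss_integrable_of_quad hv _ hc C 0 (fun t => by simpa using hC t)
  have E1 : Integrable (fun t => pdf t * (t * g t)) volume :=
    (gauss_integrable_iff hv _).mp muI1
  have E2 : Integrable (fun t => pdf t * g' t) volume :=
    (gauss_integrable_iff hv _).mp muI2
  -- the boundary function
  set F : ℝ → ℝ := fun t => (-(v : ℝ) * pdf t) * g t with hFdef
  have hF : ∀ t, HasDerivAt F (t * pdf t * g t + (-(v : ℝ) * pdf t) * g' t) t :=
    fun t => (hasDerivAt_pdf hv t).mul (hd t)
  set F' : ℝ → ℝ := fun t => t * pdf t * g t + (-(v : ℝ) * pdf t) * g' t with hF'def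
  have intF' : Integrable F' volume := by
    refine (E1.add (E2.const_mul (-(v : ℝ)))).congr
      (Filter.Eventually.of_forall fun t => ?_)
    simp only [hF'def, Pi.add_apply]; ring
  -- limits at infinity
  have hmaj := tendsto_pdfmaj (v := v) hv ((v : ℝ) * |g 0|) ((v : ℝ) * C)
  have bound : ∀ t, ‖F t‖ ≤ pdf t * ((v : ℝ) * |g 0| + (v : ℝ) * C * |t|) := by
    intro t
    have hp : 0 ≤ pdf t := gaussianPDFReal_nonneg 0 v t
    rw [hFdef]
    simp only [Real.norm_eq_abs, abs_mul, abs_neg, abs_of_nonneg hp,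
      abs_of_nonneg (le_of_lt hv')]
    calc (v : ℝ) * pdf t * |g t| ≤ (v : ℝ) * pdf t * (|g 0| + C * |t|) := by
          refine mul_le_mul_of_nonneg_left (growth t) (by positivity)
      _ = pdf t * ((v : ℝ) * |g 0| + (v : ℝ) * C * |t|) := by ring
  have tendTop : Tendsto F atTop (𝓝 0) := squeeze_zero_norm bound hmaj.1
  have tendBot : Tendsto F atBot (𝓝 0) := squeeze_zero_norm bound hmaj.2
  have hIoi : ∫ t in Set.Ioi (0:ℝ), F' t = 0 - F 0 :=
    integral_Ioi_of_hasDerivAt_of_tendsto' (fun x _ => hF x) intF'.integrableOn tendTop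
  have hIic : ∫ t in Set.Iic (0:ℝ), F' t = F 0 - 0 :=
    integral_Iic_of_hasDerivAt_of_tendsto' (fun x _ => hF x) intF'.integrableOn tendBot
  have total : ∫ t, F' t = 0 := by
    rw [← intervalIntegral.integral_Iic_add_Ioi (b := (0:ℝ)) intF'.integrableOn intF'.integrableOn,
      hIoi, hIic]
    ring
  -- conclusion
  rw [gauss_integral_eq hv, gauss_integral_eq hv]
  have split : ∀ t, pdf t * (t * g t) = F' t + (v : ℝ) * (pdf t * g' t) := by
    intro t; simp only [hF'def]; ring
  calc ∫ t, pdf t * (t * g t)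
      = ∫ t, (F' t + (v : ℝ) * (pdf t * g' t)) := by
        exact integral_congr_ae (Filter.Eventually.of_forall split)
    _ = (∫ t, F' t) + (v : ℝ) * ∫ t, pdf t * g' t := by
        rw [integral_add intF' (E2.const_mul _), integral_const_mul]
    _ = (v : ℝ) * ∫ t, pdf t * g' t := by rw [total]; ring
end stein2




lemma update_insertNth {M : ℕ} (i : Fin (M + 1)) (t s : ℝ) (w : Fin M → ℝ) :
    Function.update (Fin.insertNth (α := fun _ => ℝ) i t w) i s
      = Fin.insertNth (α := fun _ => ℝ) i s w := by
  funext j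
  refine Fin.succAboveCases i ?_ ?_ j
  · simp
  · intro k
    have hne : i.succAbove k ≠ i := Fin.succAbove_ne i k
    simp [Function.update_of_ne hne]

lemma stein_pi {M : ℕ} (hv : v ≠ 0) (i : Fin (M + 1))
    (f f' : (Fin (M + 1) → ℝ) → ℝ)
    (hf : Continuous f) (hf' : Continuous f') (C : ℝ) (hC : ∀ n, |f' n| ≤ C)
    (hd : ∀ n : Fin (M + 1) → ℝ,
      HasDerivAt (fun s => f (Function.update n i s)) (f' n) (n i))
    (hint : Integrable (fun n => n i * f n)
      (Measure.pi fun _ : Fin (M + 1) => gaussianReal 0 v)) :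
    ∫ n, n i * f n ∂(Measure.pi fun _ : Fin (M + 1) => gaussianReal 0 v)
      = (v : ℝ) * ∫ n, f' n ∂(Measure.pi fun _ : Fin (M + 1) => gaussianReal 0 v) := by
  set μ1 : Measure ℝ := gaussianReal 0 v with hμ1
  set ν : Measure (Fin (M + 1) → ℝ) := Measure.pi fun _ => μ1 with hν
  set π2 : Measure (Fin M → ℝ) := Measure.pi fun _ => μ1 with hπ2
  set e := MeasurableEquiv.piFinSuccAbove (fun _ : Fin (M + 1) => ℝ) i with he
  have mp : MeasurePreserving e ν (μ1.prod π2) :=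
    measurePreserving_piFinSuccAbove (fun _ : Fin (M + 1) => μ1) i
  have hsymm : ∀ p : ℝ × (Fin M → ℝ), e.symm p = i.insertNth p.1 p.2 := by
    intro p; rfl
  -- transfer lemmas
  have transfer : ∀ F : (Fin (M + 1) → ℝ) → ℝ,
      ∫ n, F n ∂ν = ∫ p, F (i.insertNth p.1 p.2) ∂(μ1.prod π2) := by
    intro F
    rw [← (MeasurePreserving.symm e mp).integral_comp e.symm.measurableEmbedding F]
    exact integral_congr_ae (Filter.Eventually.of_forall fun p => by simp only [hsymm])
  have transferInt : ∀ F : (Fin (M + 1) → ℝ) → ℝ, Integrable F ν →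
      Integrable (fun p : ℝ × (Fin M → ℝ) => F (i.insertNth p.1 p.2)) (μ1.prod π2) := by
    intro F hF
    have := ((MeasurePreserving.symm e mp).integrable_comp_emb e.symm.measurableEmbedding).mpr hF
    exact this.congr (Filter.Eventually.of_forall fun p => by simp only [Function.comp_apply, hsymm])
  -- integrability of f'
  have intf' : Integrable f' ν :=
    (integrable_const C).mono' hf'.aestronglyMeasurable
      (Filter.Eventually.of_forall fun n => by simpa using hC n)
  -- main computation
  have step1 : ∫ n, n i * f n ∂ν
      = ∫ p : ℝ × (Fin M → ℝ), p.1 * f (i.insertNth p.1 p.2) ∂(μ1.prod π2) := by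
    rw [transfer (fun n => n i * f n)]
    exact integral_congr_ae (Filter.Eventually.of_forall fun p => by
      simp only [Fin.insertNth_apply_same])
  have intProd : Integrable (fun p : ℝ × (Fin M → ℝ) => p.1 * f (i.insertNth p.1 p.2))
      (μ1.prod π2) := by
    have := transferInt (fun n => n i * f n) hint
    exact this.congr (Filter.Eventually.of_forall fun p => by
      simp only [Fin.insertNth_apply_same])
  have intf'Prod : Integrable (fun p : ℝ × (Fin M → ℝ) => f' (i.insertNth p.1 p.2))
      (μ1.prod π2) := transferInt f' intf'
  have inner : ∀ w : Fin M → ℝ,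
      ∫ t, t * f (i.insertNth t w) ∂μ1
        = (v : ℝ) * ∫ t, f' (i.insertNth t w) ∂μ1 := by
    intro w
    refine stein1 hv _ _ C ?_ ?_ (fun t => hC _)
    · intro t
      have h := hd (i.insertNth t w)
      rw [Fin.insertNth_apply_same] at h
      refine h.congr_of_eventuallyEq (Filter.Eventually.of_forall fun s => ?_)
      simp only [update_insertNth]
    · have hcu : (fun t : ℝ => Fin.insertNth (α := fun _ => ℝ) i t w)
          = fun t => Function.update (Fin.insertNth (α := fun _ => ℝ) i 0 w) i t := by
        funext t; rw [update_insertNth]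
      refine hf'.comp ?_
      rw [hcu]
      exact continuous_const.update i continuous_id
  calc ∫ n, n i * f n ∂ν
      = ∫ p : ℝ × (Fin M → ℝ), p.1 * f (i.insertNth p.1 p.2) ∂(μ1.prod π2) := step1
    _ = ∫ w, ∫ t, t * f (i.insertNth t w) ∂μ1 ∂π2 := integral_prod_symm _ intProd
    _ = ∫ w, (v : ℝ) * ∫ t, f' (i.insertNth t w) ∂μ1 ∂π2 :=
        integral_congr_ae (Filter.Eventually.of_forall fun w => inner w)
    _ = (v : ℝ) * ∫ w, ∫ t, f' (i.insertNth t w) ∂μ1 ∂π2 := integral_const_mul _ _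
    _ = (v : ℝ) * ∫ p : ℝ × (Fin M → ℝ), f' (i.insertNth p.1 p.2) ∂(μ1.prod π2) := by
        rw [integral_prod_symm _ intf'Prod]
    _ = (v : ℝ) * ∫ n, f' n ∂ν := by rw [transfer f']

section pi2
variable {v : ℝ≥0} {M : ℕ}

lemma pi_transfer (i : Fin (M + 1)) (F : (Fin (M + 1) → ℝ) → ℝ) :
    ∫ n, F n ∂(Measure.pi fun _ : Fin (M + 1) => gaussianReal 0 v)
      = ∫ p : ℝ × (Fin M → ℝ), F (i.insertNth p.1 p.2)
          ∂((gaussianReal 0 v).prod (Measure.pi fun _ : Fin M => gaussianReal 0 v)) := by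
  set μ1 : Measure ℝ := gaussianReal 0 v
  set e := MeasurableEquiv.piFinSuccAbove (fun _ : Fin (M + 1) => ℝ) i with he
  have mp : MeasurePreserving e (Measure.pi fun _ => μ1)
      (μ1.prod (Measure.pi fun _ => μ1)) :=
    measurePreserving_piFinSuccAbove (fun _ : Fin (M + 1) => μ1) i
  have hsymm : ∀ p : ℝ × (Fin M → ℝ), e.symm p = i.insertNth p.1 p.2 := fun p => rfl
  rw [← (MeasurePreserving.symm e mp).integral_comp e.symm.measurableEmbedding F]
  exact integral_congr_ae (Filter.Eventually.of_forall fun p => by simp only [hsymm])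

lemma pi_transfer_integrable (i : Fin (M + 1)) (F : (Fin (M + 1) → ℝ) → ℝ) :
    Integrable F (Measure.pi fun _ : Fin (M + 1) => gaussianReal 0 v)
      ↔ Integrable (fun p : ℝ × (Fin M → ℝ) => F (i.insertNth p.1 p.2))
          ((gaussianReal 0 v).prod (Measure.pi fun _ : Fin M => gaussianReal 0 v)) := by
  set μ1 : Measure ℝ := gaussianReal 0 v
  set e := MeasurableEquiv.piFinSuccAbove (fun _ : Fin (M + 1) => ℝ) i with he
  have mp : MeasurePreserving e (Measure.pi fun _ => μ1)
      (μ1.prod (Measure.pi fun _ => μ1)) :=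
    measurePreserving_piFinSuccAbove (fun _ : Fin (M + 1) => μ1) i
  have hsymm : ∀ p : ℝ × (Fin M → ℝ), e.symm p = i.insertNth p.1 p.2 := fun p => rfl
  rw [← (MeasurePreserving.symm e mp).integrable_comp_emb e.symm.measurableEmbedding]
  constructor <;> intro hh <;>
    exact hh.congr (Filter.Eventually.of_forall fun p => by
      simp only [Function.comp_apply, hsymm])

lemma coord_integrable (i : Fin (M + 1)) (φ : ℝ → ℝ)
    (hφ : Integrable φ (gaussianReal 0 v)) :
    Integrable (fun n : Fin (M + 1) → ℝ => φ (n i))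
      (Measure.pi fun _ : Fin (M + 1) => gaussianReal 0 v) := by
  rw [pi_transfer_integrable i]
  have := hφ.mul_prod (integrable_const (1 : ℝ)
    (μ := Measure.pi fun _ : Fin M => gaussianReal 0 v))
  refine this.congr (Filter.Eventually.of_forall fun p => ?_)
  simp [Fin.insertNth_apply_same]

lemma coord_integral (i : Fin (M + 1)) (φ : ℝ → ℝ) :
    ∫ n, φ (n i) ∂(Measure.pi fun _ : Fin (M + 1) => gaussianReal 0 v)
      = ∫ t, φ t ∂(gaussianReal 0 v) := by
  rw [pi_transfer i (fun n => φ (n i))]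
  have h1 : ∀ p : ℝ × (Fin M → ℝ), φ (Fin.insertNth (α := fun _ => ℝ) i p.1 p.2 i) = φ p.1 * 1 := by
    intro p; rw [Fin.insertNth_apply_same, mul_one]
  rw [integral_congr_ae (Filter.Eventually.of_forall h1)]
  have h2 := integral_prod_mul (μ := gaussianReal 0 v)
    (ν := Measure.pi fun _ : Fin M => gaussianReal 0 v) φ (fun _ => (1 : ℝ))
  simpa using h2

lemma moment_one (hv : v ≠ 0) : ∫ t, t ∂(gaussianReal 0 v) = 0 := by
  have := stein1 hv (fun _ => 1) (fun _ => 0) 0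
    (fun t => hasDerivAt_const t 1) continuous_const (fun t => by simp)
  simpa using this

lemma moment_two (hv : v ≠ 0) : ∫ t, t ^ 2 ∂(gaussianReal 0 v) = (v : ℝ) := by
  have := stein1 hv (fun t => t) (fun _ => 1) 1
    (fun t => hasDerivAt_id t) continuous_const (fun t => by simp)
  simp only [integral_const, measure_univ, ENNReal.toReal_one, probReal_univ, smul_eq_mul, mul_one] at this
  rw [← this]
  exact integral_congr_ae (Filter.Eventually.of_forall fun t => by ring)

lemma integrable_pi_quad (hv : v ≠ 0) (a b : ℝ) (G : (Fin (M + 1) → ℝ) → ℝ)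
    (hG : Continuous G)
    (hq : ∀ n, |G n| ≤ a + b * ∑ j, (n j) ^ 2) :
    Integrable G (Measure.pi fun _ : Fin (M + 1) => gaussianReal 0 v) := by
  have hsq : Integrable (fun t : ℝ => t ^ 2) (gaussianReal 0 v) :=
    gauss_integrable_of_quad hv _ (by continuity) 0 1 (fun t => by
      rw [abs_of_nonneg (sq_nonneg t)]; ring_nf; exact le_rfl)
  have hmaj : Integrable (fun n : Fin (M + 1) → ℝ => a + b * ∑ j, (n j) ^ 2)
      (Measure.pi fun _ : Fin (M + 1) => gaussianReal 0 v) := by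
    refine (integrable_const a).add (Integrable.const_mul ?_ b)
    refine integrable_finset_sum _ fun j _ => ?_
    exact coord_integrable j _ hsq
  exact hmaj.mono' hG.aestronglyMeasurable
    (Filter.Eventually.of_forall fun n => by simpa using hq n)

end pi2


section main
variable {M : ℕ} (x : Fin (M + 1) → ℝ)
  (h : (Fin (M + 1) → ℝ) → (Fin (M + 1) → ℝ)) (hdiff : ContDiff ℝ 1 h)
  (C : ℝ) (hC : ∀ (y : Fin (M + 1) → ℝ) (i j : Fin (M + 1)),
    |fderiv ℝ h y (Pi.single j 1) i| ≤ C)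

include hdiff hC in
lemma opnorm_bound : ∀ y : Fin (M + 1) → ℝ, ‖fderiv ℝ h y‖ ≤ (M + 1 : ℝ) * C := by
  intro y
  have hC0 : 0 ≤ C := le_trans (abs_nonneg _) (hC y 0 0)
  refine ContinuousLinearMap.opNorm_le_bound _ (by positivity) fun z => ?_
  have hz : z = ∑ j, z j • (Pi.single j 1 : Fin (M+1) → ℝ) := by
    rw [← Finset.univ_sum_single z]
    refine Finset.sum_congr rfl fun j _ => ?_
    rw [← Pi.single_smul, smul_eq_mul, mul_one]
    simp
  have hrepr : fderiv ℝ h y z = ∑ j, z j • fderiv ℝ h y (Pi.single j 1) := by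
    conv_lhs => rw [hz]
    rw [map_sum]
    exact Finset.sum_congr rfl fun j _ => by rw [ContinuousLinearMap.map_smul]
  rw [hrepr]
  refine (pi_norm_le_iff_of_nonneg (by positivity)).2 fun i => ?_
  calc ‖(∑ j, z j • fderiv ℝ h y (Pi.single j 1)) i‖
      = |∑ j, z j * fderiv ℝ h y (Pi.single j 1) i| := by
        simp [Finset.sum_apply]
    _ ≤ ∑ j, |z j * fderiv ℝ h y (Pi.single j 1) i| := Finset.abs_sum_le_sum_abs _ _
    _ ≤ ∑ j : Fin (M + 1), ‖z‖ * C := by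
        refine Finset.sum_le_sum fun j _ => ?_
        rw [abs_mul]
        exact mul_le_mul (le_trans (le_abs_self _) (by
          simpa using norm_le_pi_norm z j)) (hC y i j) (abs_nonneg _) (norm_nonneg z)
    _ = (M + 1 : ℝ) * C * ‖z‖ := by
        rw [Finset.sum_const, Finset.card_univ, Fintype.card_fin]
        push_cast; ring

include hdiff hC in
lemma growth_H : ∀ (i : Fin (M + 1)) (n : Fin (M + 1) → ℝ),
    |h (x + n) i| ≤ ‖h x‖ + ((M + 1 : ℝ) * C) * ∑ j, |n j| := by
  intro i n
  have hdf : Differentiable ℝ h := hdiff.differentiable one_ne_zero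
  have hlip : ‖h (x + n) - h x‖ ≤ ((M + 1 : ℝ) * C) * ‖n‖ := by
    have := Convex.norm_image_sub_le_of_norm_fderiv_le
      (f := h) (C := (M + 1 : ℝ) * C) (fun z _ => hdf z)
      (fun z _ => opnorm_bound h hdiff C hC z) convex_univ
      (Set.mem_univ x) (Set.mem_univ (x + n))
    simpa using this
  have hsum : ‖n‖ ≤ ∑ j, |n j| := by
    refine (pi_norm_le_iff_of_nonneg (Finset.sum_nonneg fun j _ => abs_nonneg _)).2 fun j => ?_
    exact Finset.single_le_sum (f := fun j => |n j|) (fun k _ => abs_nonneg _)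
      (Finset.mem_univ j)
  calc |h (x + n) i| ≤ |h x i| + |h (x + n) i - h x i| := by
        have := abs_sub_abs_le_abs_sub (h (x + n) i) (h x i); linarith
    _ ≤ ‖h x‖ + ‖h (x + n) - h x‖ := by
        gcongr
        · exact norm_le_pi_norm (h x) i
        · exact le_trans (le_of_eq (by simp [Pi.sub_apply])) (norm_le_pi_norm (h (x+n) - h x) i)
    _ ≤ ‖h x‖ + ((M + 1 : ℝ) * C) * ∑ j, |n j| := by
        have hC0 : 0 ≤ C := le_trans (abs_nonneg _) (hC x 0 0)
        refine add_le_add le_rfl (le_trans hlip ?_)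
        exact mul_le_mul_of_nonneg_left hsum (by positivity)

include hdiff in
lemma deriv_H (i : Fin (M + 1)) (n : Fin (M + 1) → ℝ) :
    HasDerivAt (fun s => h (x + Function.update n i s) i)
      (fderiv ℝ h (x + n) (Pi.single i 1) i) (n i) := by
  have hdf : Differentiable ℝ h := hdiff.differentiable one_ne_zero
  have hA : ∀ s : ℝ, x + Function.update n i s
      = (x + n) + (s - n i) • (Pi.single i 1 : Fin (M+1) → ℝ) := by
    intro s; funext j
    by_cases hj : j = i
    · subst hj; simp
    · simp [Function.update_of_ne hj, Pi.single_eq_of_ne hj]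
  have hAder : HasDerivAt (fun s : ℝ => (x + n) + (s - n i) • (Pi.single i 1 : Fin (M+1) → ℝ))
      (Pi.single i 1 : Fin (M+1) → ℝ) (n i) := by
    have h1 : HasDerivAt (fun s : ℝ => s - n i) 1 (n i) :=
      (hasDerivAt_id (n i)).sub_const (n i)
    have h2 := h1.smul_const (Pi.single i 1 : Fin (M+1) → ℝ)
    simpa using h2.const_add (x + n)
  have hcomp : HasDerivAt (fun s : ℝ => h ((x + n) + (s - n i) • (Pi.single i 1 : Fin (M+1) → ℝ)))
      (fderiv ℝ h (x + n) (Pi.single i 1)) (n i) := by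
    have hfd : HasFDerivAt h (fderiv ℝ h (x + n)) ((x + n) + ((n i) - n i) • (Pi.single i 1 : Fin (M+1) → ℝ)) := by
      simpa using (hdf (x + n)).hasFDerivAt
    exact hfd.comp_hasDerivAt (n i) hAder
  have hproj := (ContinuousLinearMap.proj (R := ℝ) (φ := fun _ : Fin (M+1) => ℝ) i).hasFDerivAt.comp_hasDerivAt (n i) hcomp
  have hfinal : HasDerivAt
      (fun s : ℝ => h ((x + n) + (s - n i) • (Pi.single i 1 : Fin (M+1) → ℝ)) i)
      (fderiv ℝ h (x + n) (Pi.single i 1) i) (n i) := by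
    exact hproj
  refine hfinal.congr_of_eventuallyEq (Filter.Eventually.of_forall fun s => ?_)
  simp only [hA s]

include hdiff in
lemma cont_H (i : Fin (M + 1)) : Continuous fun n : Fin (M + 1) → ℝ => h (x + n) i :=
  (continuous_apply i).comp ((hdiff.continuous).comp (continuous_const.add continuous_id))

include hdiff in
lemma cont_D (i : Fin (M + 1)) :
    Continuous fun n : Fin (M + 1) → ℝ => fderiv ℝ h (x + n) (Pi.single i 1) i := by
  have hfd : Continuous (fderiv ℝ h) := hdiff.continuous_fderiv one_ne_zero
  exact (continuous_apply i).comp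
    ((hfd.comp (continuous_const.add continuous_id)).clm_apply continuous_const)

end main


lemma quad_sq {M : ℕ} (a L : ℝ) (ha : 0 ≤ a) (hL : 0 ≤ L) (n : Fin (M + 1) → ℝ) (r : ℝ)
    (hr : |r| ≤ a + L * ∑ j, |n j|) :
    |r ^ 2| ≤ 2 * a ^ 2 + (2 * L ^ 2 * (M + 1)) * ∑ j, (n j) ^ 2 := by
  set s := ∑ j, |n j| with hs
  set q := ∑ j, (n j) ^ 2 with hq
  have hs0 : 0 ≤ s := Finset.sum_nonneg fun j _ => abs_nonneg _
  have hq0 : 0 ≤ q := Finset.sum_nonneg fun j _ => sq_nonneg _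
  have hcheb : s ^ 2 ≤ (M + 1 : ℝ) * q := by
    have := sq_sum_le_card_mul_sum_sq (s := Finset.univ) (f := fun j => |n j|)
    simp only [Finset.card_univ, Fintype.card_fin, sq_abs] at this
    exact_mod_cast this
  rw [abs_pow]
  nlinarith [sq_nonneg (a - L * s), mul_le_mul_of_nonneg_left hcheb (sq_nonneg L),
    mul_nonneg hL hs0, abs_nonneg r]

lemma quad_mul {M : ℕ} (a L : ℝ) (ha : 0 ≤ a) (hL : 0 ≤ L) (n : Fin (M + 1) → ℝ)
    (i : Fin (M + 1)) (r : ℝ) (hr : |r| ≤ a + L * ∑ j, |n j|) :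
    |n i * r| ≤ a / 2 + ((a / 2 + L) * (M + 1)) * ∑ j, (n j) ^ 2 := by
  set s := ∑ j, |n j| with hs
  set q := ∑ j, (n j) ^ 2 with hq
  have hs0 : 0 ≤ s := Finset.sum_nonneg fun j _ => abs_nonneg _
  have hq0 : 0 ≤ q := Finset.sum_nonneg fun j _ => sq_nonneg _
  have hcheb : s ^ 2 ≤ (M + 1 : ℝ) * q := by
    have := sq_sum_le_card_mul_sum_sq (s := Finset.univ) (f := fun j => |n j|)
    simp only [Finset.card_univ, Fintype.card_fin, sq_abs] at this
    exact_mod_cast this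
  have hni : |n i| ≤ s := Finset.single_le_sum (f := fun j => |n j|)
    (fun k _ => abs_nonneg _) (Finset.mem_univ i)
  have h1 : |n i * r| ≤ s * (a + L * s) := by
    rw [abs_mul]
    exact mul_le_mul hni hr (abs_nonneg r) hs0
  have h2 : s * a ≤ a / 2 * (1 + s ^ 2) := by nlinarith [sq_nonneg (s - 1)]
  nlinarith [mul_le_mul_of_nonneg_left hcheb hL,
    mul_le_mul_of_nonneg_left hcheb (by linarith : (0:ℝ) ≤ a / 2)]

section work
variable {v : ℝ≥0} {M : ℕ} (hv : v ≠ 0) (x : Fin (M + 1) → ℝ)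
  (h : (Fin (M + 1) → ℝ) → (Fin (M + 1) → ℝ)) (hdiff : ContDiff ℝ 1 h)
  (C : ℝ) (hC : ∀ (y : Fin (M + 1) → ℝ) (i j : Fin (M + 1)),
    |fderiv ℝ h y (Pi.single j 1) i| ≤ C)

include hdiff hC in
lemma bound_u : ∀ (i : Fin (M + 1)) (n : Fin (M + 1) → ℝ),
    |(x + n) i - h (x + n) i| ≤ (|x i| + ‖h x‖) + ((M + 1 : ℝ) * C + 1) * ∑ j, |n j| := by
  intro i n
  have h1 := growth_H x h hdiff C hC i n
  have h2 : |n i| ≤ ∑ j, |n j| := Finset.single_le_sum (f := fun j => |n j|)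
    (fun k _ => abs_nonneg _) (Finset.mem_univ i)
  have h3 : |(x + n) i - h (x + n) i| ≤ |x i| + |n i| + |h (x + n) i| := by
    have : (x + n) i = x i + n i := rfl
    rw [this]
    calc |x i + n i - h (x + n) i| ≤ |x i + n i| + |h (x + n) i| := abs_sub _ _
      _ ≤ |x i| + |n i| + |h (x + n) i| := by
          have := abs_add_le (x i) (n i); linarith
  linarith

include hv hdiff hC in
lemma int_sq1 (i : Fin (M + 1)) :
    Integrable (fun n : Fin (M + 1) → ℝ => (x i - h (x + n) i) ^ 2)
      (Measure.pi fun _ : Fin (M + 1) => gaussianReal 0 v) := by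
  have hC0 : 0 ≤ C := le_trans (abs_nonneg _) (hC x 0 0)
  refine integrable_pi_quad hv (2 * (|x i| + ‖h x‖) ^ 2)
    (2 * ((M + 1 : ℝ) * C) ^ 2 * (M + 1)) _
    ((continuous_const.sub (cont_H x h hdiff i)).pow 2) fun n => ?_
  refine quad_sq _ _ (by positivity) (by positivity) n _ ?_
  have h1 := growth_H x h hdiff C hC i n
  calc |x i - h (x + n) i| ≤ |x i| + |h (x + n) i| := abs_sub _ _
    _ ≤ |x i| + ‖h x‖ + ((M + 1 : ℝ) * C) * ∑ j, |n j| := by linarith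

include hv hdiff hC in
lemma int_sq2 (i : Fin (M + 1)) :
    Integrable (fun n : Fin (M + 1) → ℝ => ((x + n) i - h (x + n) i) ^ 2)
      (Measure.pi fun _ : Fin (M + 1) => gaussianReal 0 v) := by
  have hC0 : 0 ≤ C := le_trans (abs_nonneg _) (hC x 0 0)
  refine integrable_pi_quad hv (2 * (|x i| + ‖h x‖) ^ 2)
    (2 * ((M + 1 : ℝ) * C + 1) ^ 2 * (M + 1)) _
    ((((continuous_apply i).comp (continuous_const.add continuous_id)).sub
      (cont_H x h hdiff i)).pow 2) fun n => ?_
  exact quad_sq _ _ (by positivity) (by positivity) n _ (bound_u x h hdiff C hC i n)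

include hv hdiff hC in
lemma int_niH (i : Fin (M + 1)) :
    Integrable (fun n : Fin (M + 1) → ℝ => n i * h (x + n) i)
      (Measure.pi fun _ : Fin (M + 1) => gaussianReal 0 v) := by
  have hC0 : 0 ≤ C := le_trans (abs_nonneg _) (hC x 0 0)
  refine integrable_pi_quad hv (‖h x‖ / 2)
    ((‖h x‖ / 2 + (M + 1 : ℝ) * C) * (M + 1)) _
    ((continuous_apply i).mul (cont_H x h hdiff i)) fun n => ?_
  exact quad_mul _ _ (by positivity) (by positivity) n i _ (growth_H x h hdiff C hC i n)

include hv hdiff hC in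
lemma int_niu (i : Fin (M + 1)) :
    Integrable (fun n : Fin (M + 1) → ℝ => n i * ((x + n) i - h (x + n) i))
      (Measure.pi fun _ : Fin (M + 1) => gaussianReal 0 v) := by
  have hC0 : 0 ≤ C := le_trans (abs_nonneg _) (hC x 0 0)
  refine integrable_pi_quad hv ((|x i| + ‖h x‖) / 2)
    (((|x i| + ‖h x‖) / 2 + ((M + 1 : ℝ) * C + 1)) * (M + 1)) _
    ((continuous_apply i).mul
      ((((continuous_apply i).comp (continuous_const.add continuous_id)).sub
        (cont_H x h hdiff i)))) fun n => ?_
  exact quad_mul _ _ (by positivity) (by positivity) n i _ (bound_u x h hdiff C hC i n)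

include hv hdiff hC in
lemma int_D (i : Fin (M + 1)) :
    Integrable (fun n : Fin (M + 1) → ℝ => fderiv ℝ h (x + n) (Pi.single i 1) i)
      (Measure.pi fun _ : Fin (M + 1) => gaussianReal 0 v) := by
  refine (integrable_const C).mono' (cont_D x h hdiff i).aestronglyMeasurable
    (Filter.Eventually.of_forall fun n => by simpa using hC (x + n) i i)

include hv hdiff hC in
lemma key_coord (i : Fin (M + 1)) :
    ∫ n, (x i - h (x + n) i) ^ 2 ∂(Measure.pi fun _ : Fin (M + 1) => gaussianReal 0 v)
      = (∫ n, ((x + n) i - h (x + n) i) ^ 2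
          ∂(Measure.pi fun _ : Fin (M + 1) => gaussianReal 0 v))
        - (v : ℝ)
        + 2 * (v : ℝ) * ∫ n, fderiv ℝ h (x + n) (Pi.single i 1) i
            ∂(Measure.pi fun _ : Fin (M + 1) => gaussianReal 0 v) := by
  set ν := Measure.pi fun _ : Fin (M + 1) => gaussianReal 0 v with hν
  have hsqint : Integrable (fun t : ℝ => t ^ 2) (gaussianReal 0 v) :=
    gauss_integrable_of_quad hv _ (by continuity) 0 1 (fun t => by
      rw [abs_of_nonneg (sq_nonneg t)]; ring_nf; exact le_rfl)
  have hidint : Integrable (fun t : ℝ => x i * t) (gaussianReal 0 v) :=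
    gauss_integrable_of_quad hv _ (by continuity) (|x i| / 2) (|x i| / 2) (fun t => by
      rw [abs_mul]
      have h2 : |t| ≤ (1 + t ^ 2) / 2 := by nlinarith [sq_nonneg (|t| - 1), sq_abs t]
      nlinarith [abs_nonneg (x i), abs_nonneg t, sq_nonneg t])
  have I_ni2 : Integrable (fun n : Fin (M + 1) → ℝ => (n i) ^ 2) ν :=
    coord_integrable i _ hsqint
  have I_xni : Integrable (fun n : Fin (M + 1) → ℝ => x i * n i) ν :=
    coord_integrable i _ hidint
  have E_ni2 : ∫ n, (n i) ^ 2 ∂ν = (v : ℝ) := by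
    rw [hν, coord_integral i (fun t => t ^ 2), moment_two hv]
  have E_xni : ∫ n, x i * n i ∂ν = 0 := by
    have : ∫ n, x i * n i ∂ν = x i * ∫ n, n i ∂ν := integral_const_mul _ _
    rw [this, hν, coord_integral i (fun t => t), moment_one hv, mul_zero]
  -- Stein applied to H i
  have E_niH : ∫ n, n i * h (x + n) i ∂ν
      = (v : ℝ) * ∫ n, fderiv ℝ h (x + n) (Pi.single i 1) i ∂ν := by
    refine stein_pi hv i _ _ (cont_H x h hdiff i) (cont_D x h hdiff i) C
      (fun n => by simpa using hC (x + n) i i) ?_ (int_niH hv x h hdiff C hC i)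
    intro n
    exact deriv_H x h hdiff i n
  -- integral of n i * u
  have E_niu : ∫ n, n i * ((x + n) i - h (x + n) i) ∂ν
      = (v : ℝ) - (v : ℝ) * ∫ n, fderiv ℝ h (x + n) (Pi.single i 1) i ∂ν := by
    have expand : ∀ n : Fin (M + 1) → ℝ,
        n i * ((x + n) i - h (x + n) i)
          = x i * n i + (n i) ^ 2 - n i * h (x + n) i := by
      intro n
      have : (x + n) i = x i + n i := rfl
      rw [this]; ring
    calc ∫ n, n i * ((x + n) i - h (x + n) i) ∂ν
        = ∫ n, (x i * n i + (n i) ^ 2 - n i * h (x + n) i) ∂ν :=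
          integral_congr_ae (Filter.Eventually.of_forall expand)
      _ = (∫ n, x i * n i ∂ν) + (∫ n, (n i) ^ 2 ∂ν) - ∫ n, n i * h (x + n) i ∂ν := by
          have hadd : Integrable (fun n : Fin (M + 1) → ℝ => x i * n i + (n i) ^ 2) ν :=
            I_xni.add I_ni2
          rw [integral_sub hadd (int_niH hv x h hdiff C hC i), integral_add I_xni I_ni2]
      _ = (v : ℝ) - (v : ℝ) * ∫ n, fderiv ℝ h (x + n) (Pi.single i 1) i ∂ν := by
          rw [E_xni, E_ni2, E_niH]; ring
  -- main expansion
  have expand2 : ∀ n : Fin (M + 1) → ℝ,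
      (x i - h (x + n) i) ^ 2
        = ((x + n) i - h (x + n) i) ^ 2 - 2 * (n i * ((x + n) i - h (x + n) i))
          + (n i) ^ 2 := by
    intro n
    have : (x + n) i = x i + n i := rfl
    rw [this]; ring
  calc ∫ n, (x i - h (x + n) i) ^ 2 ∂ν
      = ∫ n, (((x + n) i - h (x + n) i) ^ 2 - 2 * (n i * ((x + n) i - h (x + n) i))
          + (n i) ^ 2) ∂ν := integral_congr_ae (Filter.Eventually.of_forall expand2)
    _ = (∫ n, ((x + n) i - h (x + n) i) ^ 2 ∂ν)
        - 2 * (∫ n, n i * ((x + n) i - h (x + n) i) ∂ν) + ∫ n, (n i) ^ 2 ∂ν := by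
        have hmul : Integrable (fun n : Fin (M + 1) → ℝ =>
            2 * (n i * ((x + n) i - h (x + n) i))) ν :=
          (int_niu hv x h hdiff C hC i).const_mul 2
        have hsub : Integrable (fun n : Fin (M + 1) → ℝ =>
            ((x + n) i - h (x + n) i) ^ 2 - 2 * (n i * ((x + n) i - h (x + n) i))) ν :=
          (int_sq2 hv x h hdiff C hC i).sub hmul
        rw [integral_add hsub I_ni2, integral_sub (int_sq2 hv x h hdiff C hC i) hmul,
          integral_const_mul]
    _ = _ := by rw [E_niu, E_ni2]; ring
end work

end SUREAux

open SUREAux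
open MeasureTheory ProbabilityTheory
open scoped NNReal

/-- Multivariate SURE is unbiased: for `y = x + n ∈ ℝ^N` with `n ~ N(0, σ²I)` and
`h : ℝ^N → ℝ^N` continuously differentiable with bounded partial derivatives,
`E[(1/N)‖x - h(y)‖²] = E[(1/N)‖y - h(y)‖² - σ² + (2σ²/N)·∑ᵢ ∂hᵢ(y)/∂yᵢ]`. -/
theorem sure_unbiased_multivariate (N : ℕ) (hN : 0 < N) (x : Fin N → ℝ)
    (σ : ℝ≥0) (hσ : 0 < σ)
    (h : (Fin N → ℝ) → (Fin N → ℝ)) (hdiff : ContDiff ℝ 1 h)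
    (C : ℝ) (hC : ∀ (y : Fin N → ℝ) (i j : Fin N),
      |fderiv ℝ h y (Pi.single j 1) i| ≤ C) :
    ∫ n, (1 / (N : ℝ)) * ∑ i, (x i - h (x + n) i) ^ 2
        ∂(Measure.pi fun _ : Fin N => gaussianReal 0 (σ ^ 2))
      = ∫ n, ((1 / (N : ℝ)) * ∑ i, ((x + n) i - h (x + n) i) ^ 2 - (σ : ℝ) ^ 2
          + (2 * (σ : ℝ) ^ 2 / (N : ℝ)) * ∑ i, fderiv ℝ h (x + n) (Pi.single i 1) i)
        ∂(Measure.pi fun _ : Fin N => gaussianReal 0 (σ ^ 2)) := by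
  obtain ⟨M, rfl⟩ : ∃ M, N = M + 1 := ⟨N - 1, (Nat.succ_pred_eq_of_pos hN).symm⟩
  have hv : (σ ^ 2 : ℝ≥0) ≠ 0 := pow_ne_zero 2 hσ.ne'
  set v : ℝ≥0 := σ ^ 2 with hvdef
  have hvR : ((v : ℝ≥0) : ℝ) = (σ : ℝ) ^ 2 := by push_cast; rfl
  set ν := Measure.pi fun _ : Fin (M + 1) => gaussianReal 0 v with hν
  set NR : ℝ := ((M + 1 : ℕ) : ℝ) with hNR
  have hNR1 : NR = (M : ℝ) + 1 := by rw [hNR]; push_cast; ring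
  have hNR0 : NR ≠ 0 := by rw [hNR1]; positivity
  -- integrability
  have I1 : ∀ i, Integrable (fun n : Fin (M + 1) → ℝ => (x i - h (x + n) i) ^ 2) ν :=
    fun i => int_sq1 hv x h hdiff C hC i
  have I2 : ∀ i, Integrable (fun n : Fin (M + 1) → ℝ => ((x + n) i - h (x + n) i) ^ 2) ν :=
    fun i => int_sq2 hv x h hdiff C hC i
  have I3 : ∀ i, Integrable
      (fun n : Fin (M + 1) → ℝ => fderiv ℝ h (x + n) (Pi.single i 1) i) ν :=
    fun i => int_D hv x h hdiff C hC i
  -- LHS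
  have hLHS : ∫ n, (1 / NR) * ∑ i, (x i - h (x + n) i) ^ 2 ∂ν
      = (1 / NR) * ∑ i, ∫ n, (x i - h (x + n) i) ^ 2 ∂ν := by
    rw [integral_const_mul, integral_finset_sum _ (fun i _ => I1 i)]
  -- RHS
  have intA : Integrable (fun n : Fin (M + 1) → ℝ =>
      (1 / NR) * ∑ i, ((x + n) i - h (x + n) i) ^ 2) ν :=
    (integrable_finset_sum _ (fun i _ => I2 i)).const_mul _
  have intB : Integrable (fun n : Fin (M + 1) → ℝ =>
      (2 * (σ : ℝ) ^ 2 / NR) * ∑ i, fderiv ℝ h (x + n) (Pi.single i 1) i) ν :=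
    (integrable_finset_sum _ (fun i _ => I3 i)).const_mul _
  have intAc : Integrable (fun n : Fin (M + 1) → ℝ =>
      (1 / NR) * ∑ i, ((x + n) i - h (x + n) i) ^ 2 - (σ : ℝ) ^ 2) ν :=
    intA.sub (integrable_const _)
  have hRHS : ∫ n, ((1 / NR) * ∑ i, ((x + n) i - h (x + n) i) ^ 2 - (σ : ℝ) ^ 2
        + (2 * (σ : ℝ) ^ 2 / NR) * ∑ i, fderiv ℝ h (x + n) (Pi.single i 1) i) ∂ν
      = (1 / NR) * (∑ i, ∫ n, ((x + n) i - h (x + n) i) ^ 2 ∂ν) - (σ : ℝ) ^ 2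
        + (2 * (σ : ℝ) ^ 2 / NR)
          * ∑ i, ∫ n, fderiv ℝ h (x + n) (Pi.single i 1) i ∂ν := by
    rw [integral_add intAc intB, integral_sub intA (integrable_const _),
      integral_const_mul, integral_const_mul, integral_const,
      integral_finset_sum _ (fun i _ => I2 i), integral_finset_sum _ (fun i _ => I3 i)]
    simp [measure_univ]
  rw [hLHS, hRHS]
  -- per-coordinate identity
  have hkey : ∀ i, ∫ n, (x i - h (x + n) i) ^ 2 ∂ν
      = (∫ n, ((x + n) i - h (x + n) i) ^ 2 ∂ν) - (v : ℝ)
        + 2 * (v : ℝ) * ∫ n, fderiv ℝ h (x + n) (Pi.single i 1) i ∂ν :=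
    fun i => key_coord hv x h hdiff C hC i
  rw [Finset.sum_congr rfl fun i _ => hkey i]
  rw [Finset.sum_add_distrib, Finset.sum_sub_distrib, ← Finset.mul_sum,
    Finset.sum_const, Finset.card_univ, Fintype.card_fin, nsmul_eq_mul]
  rw [hvR]
  have hcast : ((M + 1 : ℕ) : ℝ) = NR := rfl
  rw [hcast]
  field_simp
end

section
/- The directional-difference Monte-Carlo approximation of the divergence converges: if h: ℝ^N → ℝ^N is continuously differentiable with bounded derivative and ñ ~ N(0, I) is independent of y, then lim_{ε→0} E_ñ[ ñᵀ (h(y + ε·ñ) - h(y)) / ε ] = ∑ᵢ ∂hᵢ(y)/∂yᵢ. -/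
open MeasureTheory ProbabilityTheory Filter
open scoped NNReal Topology

section MCDivAux

open Real Set
open scoped ENNReal


lemma gpdf_eq (x : ℝ) : gaussianPDFReal 0 1 x = (√(2 * π))⁻¹ * rexp (-(2⁻¹) * x ^ 2) := by
  simp only [gaussianPDFReal, NNReal.coe_one, mul_one, sub_zero]
  ring_nf

lemma gauss_integral_eq (g : ℝ → ℝ) :
    ∫ x, g x ∂(gaussianReal 0 1) = ∫ x, gaussianPDFReal 0 1 x * g x := by
  rw [gaussianReal_of_var_ne_zero 0 one_ne_zero, gaussianPDF_def]
  have : (fun x => ENNReal.ofReal (gaussianPDFReal 0 1 x))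
      = fun x => (Real.toNNReal (gaussianPDFReal 0 1 x) : ℝ≥0∞) := by
    ext x; simp [ENNReal.ofReal]
  rw [this, integral_withDensity_eq_integral_smul
    ((measurable_gaussianPDFReal 0 1).real_toNNReal) g]
  congr 1; ext x
  simp [NNReal.smul_def, Real.coe_toNNReal _ (gaussianPDFReal_nonneg 0 1 x)]

lemma gauss_integrable_iff (g : ℝ → ℝ) :
    Integrable g (gaussianReal 0 1) ↔ Integrable (fun x => gaussianPDFReal 0 1 x * g x) := by
  rw [gaussianReal_of_var_ne_zero 0 one_ne_zero, gaussianPDF_def]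
  have : (fun x => ENNReal.ofReal (gaussianPDFReal 0 1 x))
      = fun x => (Real.toNNReal (gaussianPDFReal 0 1 x) : ℝ≥0∞) := by
    ext x; simp [ENNReal.ofReal]
  rw [this, integrable_withDensity_iff_integrable_smul
    ((measurable_gaussianPDFReal 0 1).real_toNNReal)]
  refine integrable_congr (ae_of_all _ fun x => ?_)
  simp [NNReal.smul_def, Real.coe_toNNReal _ (gaussianPDFReal_nonneg 0 1 x)]

lemma integrable_mul_gexp : Integrable (fun x : ℝ => x * rexp (-2⁻¹ * x ^ 2)) :=
  integrable_mul_exp_neg_mul_sq (by norm_num : (0:ℝ) < 2⁻¹)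

lemma integrable_sq_gexp : Integrable (fun x : ℝ => x ^ 2 * rexp (-2⁻¹ * x ^ 2)) := by
  have := integrable_rpow_mul_exp_neg_mul_sq (b := 2⁻¹) (by norm_num) (s := 2) (by norm_num)
  simpa [Real.rpow_two] using this

lemma integral_mul_gexp_zero : ∫ x : ℝ, x * rexp (-2⁻¹ * x ^ 2) = 0 := by
  have h1 := integral_neg_eq_self (fun x : ℝ => x * rexp (-2⁻¹ * x ^ 2)) (volume : Measure ℝ)
  simp only [neg_sq, neg_mul] at h1
  rw [integral_neg] at h1
  simp only [← neg_mul] at h1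
  linarith

lemma integral_Ioi_sq_sub : ∫ x in Ioi (0:ℝ), (x ^ 2 - 1) * rexp (-2⁻¹ * x ^ 2) = 0 := by
  have hD : ∀ x : ℝ, HasDerivAt (fun x : ℝ => -x * rexp (-2⁻¹ * x ^ 2))
      ((x ^ 2 - 1) * rexp (-2⁻¹ * x ^ 2)) x := by
    intro x
    have := ((hasDerivAt_id' x).fun_neg.fun_mul (((hasDerivAt_pow 2 x).const_mul (-2⁻¹ : ℝ)).exp))
    refine this.congr_deriv ?_
    simp only [id_eq, pow_one, Nat.cast_ofNat]
    ring
  have hT : Tendsto (fun x : ℝ => -x * rexp (-2⁻¹ * x ^ 2)) atTop (𝓝 0) := by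
    have ho := rpow_mul_exp_neg_mul_sq_isLittleO_exp_neg (b := 2⁻¹) (by norm_num) 1
    have hto : Tendsto (fun x : ℝ => rexp (-(1/2) * x)) atTop (𝓝 0) :=
      Real.tendsto_exp_atBot.comp
        (Tendsto.const_mul_atTop_of_neg (by norm_num : (-(1/2):ℝ) < 0) tendsto_id)
    have := ho.isBigO.trans_tendsto hto
    have heq : (fun x : ℝ => -x * rexp (-2⁻¹ * x ^ 2))
        =ᶠ[atTop] fun x : ℝ => -(x ^ (1:ℝ) * rexp (-2⁻¹ * x ^ 2)) := by
      filter_upwards [eventually_ge_atTop (0:ℝ)] with x hx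
      rw [Real.rpow_one]; ring
    rw [tendsto_congr' heq]
    simpa using this.neg
  have hI : IntegrableOn (fun x : ℝ => (x ^ 2 - 1) * rexp (-2⁻¹ * x ^ 2)) (Ioi 0) := by
    have : (fun x : ℝ => (x ^ 2 - 1) * rexp (-2⁻¹ * x ^ 2))
        = fun x : ℝ => x ^ 2 * rexp (-2⁻¹ * x ^ 2) - rexp (-2⁻¹ * x ^ 2) := by
      ext x; ring
    rw [this]
    exact (integrable_sq_gexp.sub (integrable_exp_neg_mul_sq (by norm_num : (0:ℝ) < 2⁻¹))).integrableOn
  have := integral_Ioi_of_hasDerivAt_of_tendsto (f := fun x : ℝ => -x * rexp (-2⁻¹ * x ^ 2))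
    (f' := fun x : ℝ => (x ^ 2 - 1) * rexp (-2⁻¹ * x ^ 2)) (a := 0)
    ((hD 0).continuousAt.continuousWithinAt) (fun x _ => hD x) hI hT
  simpa using this

lemma integral_sq_gexp : ∫ x : ℝ, x ^ 2 * rexp (-2⁻¹ * x ^ 2) = √(2 * π) := by
  have heven : ∀ g : ℝ → ℝ, (∀ x, g (-x) = g x) → Integrable g →
      (∫ x : ℝ, g x) = 2 * ∫ x in Ioi (0:ℝ), g x := by
    intro g hg hgi
    rw [← integral_comp_abs (f := g)]
    congr 1; ext x
    rcases le_or_gt 0 x with hx | hx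
    · rw [abs_of_nonneg hx]
    · rw [abs_of_neg hx, hg]
  have hIoi : (∫ x in Ioi (0:ℝ), x ^ 2 * rexp (-2⁻¹ * x ^ 2))
      = ∫ x in Ioi (0:ℝ), rexp (-2⁻¹ * x ^ 2) := by
    have h1 : IntegrableOn (fun x : ℝ => x ^ 2 * rexp (-2⁻¹ * x ^ 2)) (Ioi 0) :=
      integrable_sq_gexp.integrableOn
    have h2 : IntegrableOn (fun x : ℝ => rexp (-2⁻¹ * x ^ 2)) (Ioi 0) :=
      (integrable_exp_neg_mul_sq (by norm_num : (0:ℝ) < 2⁻¹)).integrableOn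
    have := integral_Ioi_sq_sub
    rw [show (fun x : ℝ => (x ^ 2 - 1) * rexp (-2⁻¹ * x ^ 2))
        = fun x : ℝ => x ^ 2 * rexp (-2⁻¹ * x ^ 2) - rexp (-2⁻¹ * x ^ 2) from by ext x; ring,
      integral_sub h1 h2, sub_eq_zero] at this
    exact this
  rw [heven _ (fun x => by rw [neg_pow]; ring_nf) integrable_sq_gexp, hIoi,
    ← heven _ (fun x => by rw [neg_pow]; ring_nf)
      (integrable_exp_neg_mul_sq (by norm_num : (0:ℝ) < 2⁻¹))]
  rw [integral_gaussian]
  norm_num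
  ring


lemma sqrt_two_pi_pos : (0:ℝ) < √(2 * π) := Real.sqrt_pos.2 (by positivity)

lemma gauss_integrable_id : Integrable (fun x : ℝ => x) (gaussianReal 0 1) := by
  rw [gauss_integrable_iff]
  have : (fun x : ℝ => gaussianPDFReal 0 1 x * x)
      = fun x : ℝ => (√(2 * π))⁻¹ * (x * rexp (-2⁻¹ * x ^ 2)) := by
    ext x; rw [gpdf_eq]; ring
  rw [this]
  exact integrable_mul_gexp.const_mul _

lemma gauss_integrable_sq : Integrable (fun x : ℝ => x ^ 2) (gaussianReal 0 1) := by
  rw [gauss_integrable_iff]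
  have : (fun x : ℝ => gaussianPDFReal 0 1 x * x ^ 2)
      = fun x : ℝ => (√(2 * π))⁻¹ * (x ^ 2 * rexp (-2⁻¹ * x ^ 2)) := by
    ext x; rw [gpdf_eq]; ring
  rw [this]
  exact integrable_sq_gexp.const_mul _

lemma gauss_integral_id : ∫ x : ℝ, x ∂(gaussianReal 0 1) = 0 := by
  rw [gauss_integral_eq]
  have : (fun x : ℝ => gaussianPDFReal 0 1 x * x)
      = fun x : ℝ => (√(2 * π))⁻¹ * (x * rexp (-2⁻¹ * x ^ 2)) := by
    ext x; rw [gpdf_eq]; ring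
  rw [this, integral_const_mul, integral_mul_gexp_zero, mul_zero]

lemma gauss_integral_sq : ∫ x : ℝ, x ^ 2 ∂(gaussianReal 0 1) = 1 := by
  rw [gauss_integral_eq]
  have : (fun x : ℝ => gaussianPDFReal 0 1 x * x ^ 2)
      = fun x : ℝ => (√(2 * π))⁻¹ * (x ^ 2 * rexp (-2⁻¹ * x ^ 2)) := by
    ext x; rw [gpdf_eq]; ring
  rw [this, integral_const_mul, integral_sq_gexp,
    inv_mul_cancel₀ (ne_of_gt sqrt_two_pi_pos)]

section Pi
variable {N : ℕ}

lemma pi_gauss_prod_integrable (f : Fin N → ℝ → ℝ)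
    (hf : ∀ i, Integrable (f i) (gaussianReal 0 1)) :
    Integrable (fun x : Fin N → ℝ => ∏ i, f i (x i))
      (Measure.pi fun _ : Fin N => gaussianReal 0 1) := by
  letI : MeasureSpace ℝ := ⟨gaussianReal 0 1⟩
  haveI : SigmaFinite (volume : Measure ℝ) := by
    change SigmaFinite (gaussianReal 0 1); infer_instance
  have hv : (Measure.pi fun _ : Fin N => gaussianReal 0 1) = (volume : Measure (Fin N → ℝ)) :=
    (volume_pi).symm
  rw [hv]
  exact Integrable.fintype_prod hf

lemma pi_gauss_prod_integral (f : Fin N → ℝ → ℝ) :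
    ∫ x : Fin N → ℝ, ∏ i, f i (x i) ∂(Measure.pi fun _ : Fin N => gaussianReal 0 1)
      = ∏ i, ∫ x, f i x ∂(gaussianReal 0 1) := by
  letI : MeasureSpace ℝ := ⟨gaussianReal 0 1⟩
  haveI : SigmaFinite (volume : Measure ℝ) := by
    change SigmaFinite (gaussianReal 0 1); infer_instance
  have hv : (Measure.pi fun _ : Fin N => gaussianReal 0 1) = (volume : Measure (Fin N → ℝ)) :=
    (volume_pi).symm
  rw [hv]
  exact integral_fintype_prod_eq_prod f

lemma mul_single_eq_prod (i j : Fin N) (g : ℝ → ℝ) (x : Fin N → ℝ) :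
    g (x i) * g (x j) = ∏ k, ((if k = i then g (x k) else 1) * (if k = j then g (x k) else 1)) := by
  rw [Finset.prod_mul_distrib, Finset.prod_ite_eq' Finset.univ i (fun k => g (x k)),
    Finset.prod_ite_eq' Finset.univ j (fun k => g (x k))]
  simp

lemma gauss_if_integrable (i j k : Fin N) (g : ℝ → ℝ) (hg1 : Integrable g (gaussianReal 0 1))
    (hg2 : Integrable (fun t => g t * g t) (gaussianReal 0 1)) :
    Integrable (fun t : ℝ => (if k = i then g t else 1) * (if k = j then g t else 1))
      (gaussianReal 0 1) := by
  by_cases hi : k = i <;> by_cases hj : k = j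
  · simp only [if_pos hi, if_pos hj]; exact hg2
  · simp only [if_pos hi, if_neg hj, mul_one]; exact hg1
  · simp only [if_neg hi, if_pos hj, one_mul]; exact hg1
  · simp only [if_neg hi, if_neg hj, mul_one]; exact integrable_const 1

lemma pi_gauss_integral_mul (i j : Fin N) :
    ∫ x : Fin N → ℝ, x i * x j ∂(Measure.pi fun _ : Fin N => gaussianReal 0 1)
      = if i = j then 1 else 0 := by
  have hrw : ∀ x : Fin N → ℝ, x i * x j
      = ∏ k, ((if k = i then x k else 1) * (if k = j then x k else 1)) := by
    intro x; simpa using mul_single_eq_prod i j id x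
  have e1 : (fun x : Fin N → ℝ => x i * x j)
      = fun x : Fin N → ℝ => ∏ k,
        (fun k (t : ℝ) => (if k = i then t else 1) * (if k = j then t else 1)) k (x k) := by
    ext x; exact hrw x
  rw [e1, pi_gauss_prod_integral
    (fun k (t : ℝ) => (if k = i then t else 1) * (if k = j then t else 1))]
  by_cases hij : i = j
  · subst hij
    rw [Finset.prod_eq_single i]
    · simp only [if_pos rfl]
      have : (fun x : ℝ => x * x) = fun x : ℝ => x ^ 2 := by ext x; ring
      rw [show (∫ x : ℝ, (if True then x else 1) * (if True then x else 1) ∂(gaussianReal 0 1))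
          = ∫ x : ℝ, x ^ 2 ∂(gaussianReal 0 1) from by simp [sq]]
      · rw [gauss_integral_sq]; simp
    · intro k _ hk
      simp only [if_neg hk, mul_one]
      simp
    · simp
  · rw [if_neg hij, Finset.prod_eq_zero (Finset.mem_univ i)]
    simp only [if_pos rfl, if_neg hij, mul_one]
    exact gauss_integral_id

lemma pi_gauss_integrable_mul (i j : Fin N) :
    Integrable (fun x : Fin N → ℝ => x i * x j)
      (Measure.pi fun _ : Fin N => gaussianReal 0 1) := by
  have hrw : (fun x : Fin N → ℝ => x i * x j)
      = fun x : Fin N → ℝ => ∏ k, ((if k = i then x k else 1) * (if k = j then x k else 1)) := by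
    ext x; simpa using mul_single_eq_prod i j id x
  rw [hrw]
  exact pi_gauss_prod_integrable _ fun k => gauss_if_integrable i j k id gauss_integrable_id
    (by simpa [sq] using gauss_integrable_sq)

lemma pi_gauss_integrable_abs_mul (i j : Fin N) :
    Integrable (fun x : Fin N → ℝ => |x i| * |x j|)
      (Measure.pi fun _ : Fin N => gaussianReal 0 1) := by
  have hrw : (fun x : Fin N → ℝ => |x i| * |x j|)
      = fun x : Fin N → ℝ =>
        ∏ k, ((if k = i then |x k| else 1) * (if k = j then |x k| else 1)) := by
    ext x; exact mul_single_eq_prod i j abs x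
  rw [hrw]
  exact pi_gauss_prod_integrable _ fun k => gauss_if_integrable i j k abs
    gauss_integrable_id.abs (by
      have : (fun t : ℝ => |t| * |t|) = fun t : ℝ => t ^ 2 := by
        ext t; rw [← abs_mul, ← sq, abs_sq]
      rw [this]; exact gauss_integrable_sq)

end Pi


/-- Monte-Carlo divergence approximation: for `h : ℝ^N → ℝ^N` C¹ with bounded derivative
and `nt ~ N(0, I)`, `lim_{ε→0⁺} E_nt[ntᵀ(h(y + ε·nt) - h(y))/ε] = ∑ᵢ ∂hᵢ(y)/∂yᵢ`. -/
theorem mc_divergence_limit (N : ℕ) (hN : 0 < N) (y : Fin N → ℝ)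
    (h : (Fin N → ℝ) → (Fin N → ℝ)) (hdiff : ContDiff ℝ 1 h)
    (C : ℝ) (hC : ∀ v : Fin N → ℝ, ‖fderiv ℝ h v‖ ≤ C) :
    Tendsto
      (fun ε : ℝ =>
        ∫ nt, (∑ i, nt i * (h (y + ε • nt) i - h y i)) / ε
          ∂(Measure.pi fun _ : Fin N => gaussianReal 0 1))
      (𝓝[>] 0)
      (𝓝 (∑ i, fderiv ℝ h y (Pi.single i 1) i)) := by
  set μ : Measure (Fin N → ℝ) := Measure.pi fun _ : Fin N => gaussianReal 0 1 with hμ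
  set D : (Fin N → ℝ) →L[ℝ] (Fin N → ℝ) := fderiv ℝ h y with hD
  have hC0 : 0 ≤ C := le_trans (norm_nonneg _) (hC y)
  have hdible : Differentiable ℝ h := hdiff.differentiable one_ne_zero
  have hcont : Continuous h := hdiff.continuous
  have lip : ∀ a b : Fin N → ℝ, ‖h a - h b‖ ≤ C * ‖a - b‖ := fun a b =>
    Convex.norm_image_sub_le_of_norm_fderiv_le (fun x _ => hdible x)
      (fun x _ => hC x) convex_univ (mem_univ b) (mem_univ a)
  -- the limit function
  set f : (Fin N → ℝ) → ℝ := fun nt => ∑ i, nt i * D nt i with hf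
  -- dominated convergence
  have htend : Tendsto
      (fun ε : ℝ => ∫ nt, (∑ i, nt i * (h (y + ε • nt) i - h y i)) / ε ∂μ)
      (𝓝[>] 0) (𝓝 (∫ nt, f nt ∂μ)) := by
    apply tendsto_integral_filter_of_dominated_convergence
      (bound := fun nt => C * ∑ i, ∑ j, |nt i| * |nt j|)
    · -- measurability
      refine Eventually.of_forall fun ε => (Continuous.aestronglyMeasurable ?_)
      have hline : Continuous fun nt : Fin N → ℝ => y + ε • nt :=
        continuous_const.add (continuous_id.const_smul ε)
      refine Continuous.div_const (continuous_finset_sum _ fun i _ => ?_) ε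
      exact (continuous_apply i).mul
        (((continuous_apply i).comp (hcont.comp hline)).sub continuous_const)
    · -- bound
      filter_upwards [self_mem_nhdsWithin] with ε (hε : ε ∈ Ioi (0:ℝ))
      refine Eventually.of_forall fun nt => ?_
      have hε0 : (0:ℝ) < ε := hε
      set S : ℝ := ∑ j, |nt j| with hS
      have hS0 : 0 ≤ S := Finset.sum_nonneg fun j _ => abs_nonneg _
      have hntS : ‖nt‖ ≤ S := by
        refine (pi_norm_le_iff_of_nonneg hS0).2 fun i => ?_
        exact Finset.single_le_sum (fun j _ => abs_nonneg (nt j)) (Finset.mem_univ i)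
      have hdelta : ∀ i, |h (y + ε • nt) i - h y i| ≤ C * (ε * S) := by
        intro i
        calc |h (y + ε • nt) i - h y i| = ‖(h (y + ε • nt) - h y) i‖ := by
              simp [Real.norm_eq_abs]
          _ ≤ ‖h (y + ε • nt) - h y‖ := norm_le_pi_norm _ i
          _ ≤ C * ‖(y + ε • nt) - y‖ := lip _ _
          _ = C * (ε * ‖nt‖) := by
              rw [add_sub_cancel_left, norm_smul, Real.norm_eq_abs, abs_of_pos hε0]
          _ ≤ C * (ε * S) := by
              exact mul_le_mul_of_nonneg_left
                (mul_le_mul_of_nonneg_left hntS hε0.le) hC0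
      rw [Real.norm_eq_abs, abs_div, abs_of_pos hε0, div_le_iff₀ hε0]
      calc |∑ i, nt i * (h (y + ε • nt) i - h y i)|
          ≤ ∑ i, |nt i * (h (y + ε • nt) i - h y i)| := Finset.abs_sum_le_sum_abs _ _
        _ ≤ ∑ i, |nt i| * (C * (ε * S)) := by
            refine Finset.sum_le_sum fun i _ => ?_
            rw [abs_mul]
            exact mul_le_mul_of_nonneg_left (hdelta i) (abs_nonneg _)
        _ = C * (S * S) * ε := by
            rw [← Finset.sum_mul]
            ring
        _ = C * (∑ i, ∑ j, |nt i| * |nt j|) * ε := by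
            rw [← Finset.sum_mul_sum]
    · -- bound integrable
      exact (integrable_finset_sum _ fun i _ =>
        integrable_finset_sum _ fun j _ => pi_gauss_integrable_abs_mul i j).const_mul C
    · -- pointwise limit
      refine Eventually.of_forall fun nt => ?_
      set Φ : ℝ → ℝ := fun ε => ∑ i, nt i * h (y + ε • nt) i with hΦ
      have hline : HasDerivAt (fun ε : ℝ => y + ε • nt) nt 0 := by
        simpa using ((hasDerivAt_id (0:ℝ)).smul_const nt).const_add y
      have hfd : HasFDerivAt h D ((fun ε : ℝ => y + ε • nt) 0) := by
        simpa using (hdible y).hasFDerivAt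
      have hcd : HasDerivAt (fun ε : ℝ => h (y + ε • nt)) (D nt) 0 :=
        hfd.comp_hasDerivAt 0 hline
      have hPhi : HasDerivAt Φ (f nt) 0 := by
        refine HasDerivAt.fun_sum fun i _ => ?_
        have hi : HasDerivAt (fun ε : ℝ => h (y + ε • nt) i) (D nt i) 0 :=
          (ContinuousLinearMap.proj (R := ℝ) (φ := fun _ : Fin N => ℝ)
            i).hasFDerivAt.comp_hasDerivAt 0 hcd
        exact hi.const_mul (nt i)
      have hslope := hasDerivAt_iff_tendsto_slope.mp hPhi
      have hmono : 𝓝[>] (0:ℝ) ≤ 𝓝[≠] (0:ℝ) :=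
        nhdsWithin_mono 0 fun x hx => ne_of_gt hx
      refine (hslope.mono_left hmono).congr' ?_
      filter_upwards [self_mem_nhdsWithin] with ε (hε : ε ∈ Ioi (0:ℝ))
      have hε0 : ε ≠ 0 := ne_of_gt hε
      have hΦ0 : Φ 0 = ∑ i, nt i * h y i := by simp [hΦ]
      rw [slope_def_field, sub_zero, hΦ0]
      simp only [hΦ]
      rw [← Finset.sum_sub_distrib]
      exact congrArg (· / ε) (Finset.sum_congr rfl fun i _ => (mul_sub _ _ _).symm)
  -- compute the limit integral
  have hval : ∫ nt, f nt ∂μ = ∑ i, D (Pi.single i 1) i := by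
    have hrepr : ∀ nt : Fin N → ℝ,
        f nt = ∑ i, ∑ j, D (Pi.single j 1) i * (nt i * nt j) := by
      intro nt
      have hnt : nt = ∑ j, nt j • (Pi.single j 1 : Fin N → ℝ) := by
        ext k
        rw [Finset.sum_apply]
        simp [Pi.single_apply]
      calc f nt = ∑ i, nt i * D (∑ j, nt j • (Pi.single j 1 : Fin N → ℝ)) i := by rw [hf, ← hnt]
        _ = ∑ i, ∑ j, D (Pi.single j 1) i * (nt i * nt j) := by
            refine Finset.sum_congr rfl fun i _ => ?_
            rw [map_sum, Finset.sum_apply, Finset.mul_sum]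
            refine Finset.sum_congr rfl fun j _ => ?_
            rw [_root_.map_smul]
            simp only [Pi.smul_apply, smul_eq_mul]
            ring
    rw [hμ]
    calc (∫ nt, f nt ∂(Measure.pi fun _ : Fin N => gaussianReal 0 1))
        = ∫ nt, ∑ i, ∑ j, D (Pi.single j 1) i * (nt i * nt j)
            ∂(Measure.pi fun _ : Fin N => gaussianReal 0 1) := by
          exact integral_congr_ae (ae_of_all _ fun nt => hrepr nt)
      _ = ∑ i, ∑ j, D (Pi.single j 1) i
            * ∫ nt : Fin N → ℝ, nt i * nt j ∂(Measure.pi fun _ : Fin N => gaussianReal 0 1) := by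
          rw [integral_finset_sum _ (fun i _ => integrable_finset_sum _ fun j _ =>
            (pi_gauss_integrable_mul i j).const_mul _)]
          refine Finset.sum_congr rfl fun i _ => ?_
          rw [integral_finset_sum _ (fun j _ => (pi_gauss_integrable_mul i j).const_mul _)]
          exact Finset.sum_congr rfl fun j _ => integral_const_mul _ _
      _ = ∑ i, D (Pi.single i 1) i := by
          simp_rw [pi_gauss_integral_mul]
          simp
  rw [hval] at htend
  exact htend

end MCDivAux
end

section
/- Noise2Noise correctness: if x, y, z are jointly distributed random vectors in ℝ^N such that conditionally on x, the vector z - x has mean zero and is uncorrelated with (independent of) y, then E[‖x - h(y)‖²] = E[‖z - h(y)‖²] - E[‖z - x‖²] for any measurable h with h(y) square-integrable. In particular the Noise2Noise loss E[‖z - h(y)‖²] differs from the true MSE E[‖x - h(y)‖²] by a constant independent of h. -/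
open MeasureTheory ProbabilityTheory MeasurableSpace Set
open scoped NNReal ENNReal

private lemma n2n_rat_Iic_spanning : IsCountablySpanning (⋃ a : ℚ, {Set.Iic (a : ℝ)}) := by
  refine ⟨fun n => Set.Iic ((n : ℚ) : ℝ), fun n => Set.mem_iUnion.2 ⟨n, rfl⟩, ?_⟩
  ext v
  simp only [Set.mem_iUnion, Set.mem_Iic, Set.mem_univ, iff_true]
  obtain ⟨n, hn⟩ := exists_nat_ge v
  exact ⟨n, by push_cast; exact hn⟩

private lemma n2n_exists_pi_system (N : ℕ) :
    ∃ S : Set (Set (Fin N → ℝ)), S.Countable ∧ IsPiSystem S ∧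
      (MeasurableSpace.pi : MeasurableSpace (Fin N → ℝ)) = MeasurableSpace.generateFrom S := by
  classical
  set C : Set (Set ℝ) := ⋃ a : ℚ, {Set.Iic (a : ℝ)} with hC_def
  refine ⟨Set.pi Set.univ '' Set.pi Set.univ (fun _ : Fin N => C), ?_, ?_, ?_⟩
  · refine Set.Countable.image ?_ _
    have hC : C.Countable := Set.countable_iUnion fun a => Set.countable_singleton _
    have heq : Set.pi Set.univ (fun _ : Fin N => C) = {f : Fin N → Set ℝ | ∀ i, f i ∈ C} := by
      ext f; simp [Set.mem_univ_pi]
    rw [heq]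
    exact Set.countable_pi fun _ => hC
  · exact IsPiSystem.pi fun _ => Real.isPiSystem_Iic_rat
  · exact (generateFrom_eq_pi
      (fun _ => (BorelSpace.measurable_eq.trans Real.borel_eq_generateFrom_Iic_rat).symm)
      (fun _ => n2n_rat_Iic_spanning)).symm

private lemma n2n_ae_indepFun {Ω : Type*} [mΩ : MeasurableSpace Ω]
    [StandardBorelSpace Ω] {μ : Measure Ω} [IsProbabilityMeasure μ] {N : ℕ}
    {m' : MeasurableSpace Ω} (hm : m' ≤ mΩ) {f g : Ω → (Fin N → ℝ)}
    (hf : Measurable[mΩ] f) (hg : Measurable[mΩ] g)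
    (hindep : CondIndepFun m' hm f g μ) :
    ∀ᵐ ω ∂μ, IndepFun f g (condExpKernel (mΩ := mΩ) μ m' ω) := by
  obtain ⟨S, hSc, hSpi, hSgen⟩ := n2n_exists_pi_system N
  have hAll : ∀ᵐ ω ∂μ, ∀ A ∈ S, ∀ B ∈ S,
      condExpKernel (mΩ := mΩ) μ m' ω (f ⁻¹' A ∩ g ⁻¹' B)
        = condExpKernel (mΩ := mΩ) μ m' ω (f ⁻¹' A) * condExpKernel (mΩ := mΩ) μ m' ω (g ⁻¹' B) := by
    rw [ae_ball_iff hSc]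
    intro A hA
    rw [ae_ball_iff hSc]
    intro B hB
    refine ae_of_ae_trim hm ?_
    have hA' : MeasurableSet[MeasurableSpace.pi] A := by
      rw [hSgen]; exact measurableSet_generateFrom hA
    have hB' : MeasurableSet[MeasurableSpace.pi] B := by
      rw [hSgen]; exact measurableSet_generateFrom hB
    exact hindep (f ⁻¹' A) (g ⁻¹' B) ⟨A, hA', rfl⟩ ⟨B, hB', rfl⟩
  filter_upwards [hAll] with ω hω
  refine IndepSets.indep (hf.comap_le) (hg.comap_le)
    (hSpi.comap f) (hSpi.comap g) ?_ ?_ ?_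
  · rw [show (MeasurableSpace.pi : MeasurableSpace (Fin N → ℝ)) = generateFrom S from hSgen,
      MeasurableSpace.comap_generateFrom]
    rfl
  · rw [show (MeasurableSpace.pi : MeasurableSpace (Fin N → ℝ)) = generateFrom S from hSgen,
      MeasurableSpace.comap_generateFrom]
    rfl
  · rintro t1 t2 ⟨A, hA, rfl⟩ ⟨B, hB, rfl⟩
    exact Filter.Eventually.of_forall fun _ => hω A hA B hB

private lemma n2n_integrable_mul {Ω : Type*} [MeasurableSpace Ω] {μ : Measure Ω}
    {f g : Ω → ℝ} (hf : MemLp f 2 μ) (hg : MemLp g 2 μ) :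
    Integrable (fun ω => f ω * g ω) μ := by
  have h := hf.smul (φ := g) hg (r := 1)
    (hpqr := ⟨by rw [inv_one]; exact ENNReal.inv_two_add_inv_two⟩)
  rw [memLp_one_iff_integrable] at h
  have h' : Integrable (f * g) μ := by simpa [Pi.smul_apply, smul_eq_mul, mul_comm] using h
  exact h'

/-- Noise2Noise correctness: if, conditionally on `x`, the vector `z - x` has mean zero
and is independent of `y`, then `E[‖x - h(y)‖²] = E[‖z - h(y)‖²] - E[‖z - x‖²]` for any
measurable `h` with `h(y)` square-integrable; i.e. the Noise2Noise loss differs from the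
true MSE by a constant independent of `h`. -/
theorem noise2noise_correctness {Ω : Type*} [MeasurableSpace Ω] [StandardBorelSpace Ω]
    (μ : Measure Ω) [IsProbabilityMeasure μ] (N : ℕ)
    (x y z : Ω → (Fin N → ℝ))
    (hx : Measurable x) (hy : Measurable y) (hz : Measurable z)
    (hx2 : MemLp x 2 μ) (hy2 : MemLp y 2 μ) (hz2 : MemLp z 2 μ)
    (hm : MeasurableSpace.comap x inferInstance ≤ ‹MeasurableSpace Ω›)
    -- conditionally on x, z - x has mean zero:
    (hmean : ∀ i, μ[fun ω => z ω i - x ω i | MeasurableSpace.comap x inferInstance]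
      =ᵐ[μ] 0)
    -- conditionally on x, z - x is independent of y:
    (hindep : CondIndepFun (MeasurableSpace.comap x inferInstance) hm
      (fun ω => z ω - x ω) y μ)
    (h : (Fin N → ℝ) → (Fin N → ℝ)) (hmeas : Measurable h)
    (hh2 : MemLp (fun ω => h (y ω)) 2 μ) :
    ∫ ω, ∑ i, (x ω i - h (y ω) i) ^ 2 ∂μ
      = ∫ ω, ∑ i, (z ω i - h (y ω) i) ^ 2 ∂μ
        - ∫ ω, ∑ i, (z ω i - x ω i) ^ 2 ∂μ := by
  classical
  have hw : Measurable (fun ω => z ω - x ω) := hz.sub hx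
  have hae := n2n_ae_indepFun (μ := μ) hm hw hy hindep
  -- componentwise MemLp
  have hcomp : ∀ (f : Ω → Fin N → ℝ), MemLp f 2 μ → ∀ i, MemLp (fun ω => f ω i) 2 μ := by
    intro f hf i
    have := (ContinuousLinearMap.proj (R := ℝ) (φ := fun _ : Fin N => ℝ) i).comp_memLp' hf
    exact this
  have hxi := hcomp x hx2
  have hzi := hcomp z hz2
  have hHi := hcomp _ hh2
  have hwi : ∀ i, MemLp (fun ω => z ω i - x ω i) 2 μ := fun i => (hzi i).sub (hxi i)
  have hbi : ∀ i, MemLp (fun ω => x ω i - h (y ω) i) 2 μ := fun i => (hxi i).sub (hHi i)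
  have zero_int : ∀ (F : Ω → ℝ), Integrable F μ →
      (μ[F | MeasurableSpace.comap x inferInstance] =ᵐ[μ] 0) → ∫ ω, F ω ∂μ = 0 := by
    intro F hF h0
    rw [← integral_condExp hm, integral_congr_ae h0]
    simp
  -- cross term A
  have hxim' : ∀ i, StronglyMeasurable[MeasurableSpace.comap x inferInstance]
      (fun ω => x ω i) := by
    intro i
    have hxc : Measurable[MeasurableSpace.comap x inferInstance] x := fun s hs => ⟨s, hs, rfl⟩
    exact ((measurable_pi_apply i).comp hxc).stronglyMeasurable
  have keyA : ∀ i, ∫ ω, x ω i * (z ω i - x ω i) ∂μ = 0 := by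
    intro i
    have hint : Integrable (fun ω => x ω i * (z ω i - x ω i)) μ :=
      n2n_integrable_mul (hxi i) (hwi i)
    refine zero_int _ hint ?_
    have hpull := condExp_mul_of_stronglyMeasurable_left (μ := μ) (hxim' i)
      (g := fun ω => z ω i - x ω i) hint ((hwi i).integrable one_le_two)
    refine hpull.trans ?_
    filter_upwards [hmean i] with ω hω
    simp only [Pi.mul_apply, Pi.zero_apply] at hω ⊢
    rw [hω, mul_zero]
  -- cross term B
  have keyB : ∀ i, ∫ ω, (z ω i - x ω i) * h (y ω) i ∂μ = 0 := by
    intro i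
    have hint : Integrable (fun ω => (z ω i - x ω i) * h (y ω) i) μ :=
      n2n_integrable_mul (hwi i) (hHi i)
    refine zero_int _ hint ?_
    have h1 := condExp_ae_eq_integral_condExpKernel
      (m := MeasurableSpace.comap x inferInstance) hm hint
    have h2 := condExp_ae_eq_integral_condExpKernel
      (m := MeasurableSpace.comap x inferInstance) hm ((hwi i).integrable one_le_two)
    have hwm : Measurable (fun ω' => z ω' i - x ω' i) :=
      ((measurable_pi_apply i).comp hz).sub ((measurable_pi_apply i).comp hx)
    have hHm : Measurable (fun ω' => h (y ω') i) :=
      (measurable_pi_apply i).comp (hmeas.comp hy)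
    filter_upwards [h1, h2, hmean i, hae] with ω hω1 hω2 hω3 hω4
    have hμω : IndepFun (fun ω' => z ω' i - x ω' i) (fun ω' => h (y ω') i)
        (condExpKernel μ (MeasurableSpace.comap x inferInstance) ω) := by
      have := hω4.comp (φ := fun v : Fin N → ℝ => v i) (ψ := fun v => h v i)
        (measurable_pi_apply i : Measurable fun v : Fin N → ℝ => v i)
        ((measurable_pi_apply i : Measurable fun v : Fin N → ℝ => v i).comp hmeas)
      exact this
    have hIμ := hμω.integral_mul_eq_mul_integral hwm.aestronglyMeasurable hHm.aestronglyMeasurable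
    have hw0 : ∫ ω', (z ω' i - x ω' i)
        ∂(condExpKernel μ (MeasurableSpace.comap x inferInstance) ω) = 0 := by
      rw [← hω2]; simpa using hω3
    simp only [Pi.zero_apply]
    calc (μ[fun ω => (z ω i - x ω i) * h (y ω) i |
          MeasurableSpace.comap x inferInstance]) ω
        = ∫ ω', (z ω' i - x ω' i) * h (y ω') i
            ∂(condExpKernel μ (MeasurableSpace.comap x inferInstance) ω) := hω1
      _ = (∫ ω', (z ω' i - x ω' i)
            ∂(condExpKernel μ (MeasurableSpace.comap x inferInstance) ω))
          * ∫ ω', h (y ω') i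
            ∂(condExpKernel μ (MeasurableSpace.comap x inferInstance) ω) := hIμ
      _ = 0 := by rw [hw0, zero_mul]
  -- integrability of the squares
  have hbint : ∀ i, Integrable (fun ω => (x ω i - h (y ω) i) ^ 2) μ :=
    fun i => (hbi i).integrable_sq
  have hwint : ∀ i, Integrable (fun ω => (z ω i - x ω i) ^ 2) μ :=
    fun i => (hwi i).integrable_sq
  have hzHint : ∀ i, Integrable (fun ω => (z ω i - h (y ω) i) ^ 2) μ :=
    fun i => ((hzi i).sub (hHi i)).integrable_sq
  have habint : ∀ i, Integrable (fun ω => (z ω i - x ω i) * (x ω i - h (y ω) i)) μ :=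
    fun i => n2n_integrable_mul (hwi i) (hbi i)
  have key : ∀ i, ∫ ω, (z ω i - x ω i) * (x ω i - h (y ω) i) ∂μ = 0 := by
    intro i
    have heq : ∫ ω, (z ω i - x ω i) * (x ω i - h (y ω) i) ∂μ
        = ∫ ω, (x ω i * (z ω i - x ω i) - (z ω i - x ω i) * h (y ω) i) ∂μ :=
      integral_congr_ae (Filter.Eventually.of_forall fun ω => by ring)
    rw [heq, integral_sub (n2n_integrable_mul (hxi i) (hwi i))
      (n2n_integrable_mul (hwi i) (hHi i)), keyA i, keyB i, sub_zero]
  rw [integral_finset_sum _ (fun i _ => hbint i), integral_finset_sum _ (fun i _ => hzHint i),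
    integral_finset_sum _ (fun i _ => hwint i), ← Finset.sum_sub_distrib]
  refine Finset.sum_congr rfl fun i _ => ?_
  have hexp : ∫ ω, (z ω i - h (y ω) i) ^ 2 ∂μ
      = ∫ ω, (z ω i - x ω i) ^ 2 ∂μ
        + (2 * ∫ ω, (z ω i - x ω i) * (x ω i - h (y ω) i) ∂μ
          + ∫ ω, (x ω i - h (y ω) i) ^ 2 ∂μ) := by
    have h2 : Integrable (fun ω => 2 * ((z ω i - x ω i) * (x ω i - h (y ω) i))
        + (x ω i - h (y ω) i) ^ 2) μ := ((habint i).const_mul 2).add (hbint i)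
    have e1 : ∫ ω, (z ω i - h (y ω) i) ^ 2 ∂μ
        = ∫ ω, ((z ω i - x ω i) ^ 2 + (2 * ((z ω i - x ω i) * (x ω i - h (y ω) i))
            + (x ω i - h (y ω) i) ^ 2)) ∂μ :=
      integral_congr_ae (Filter.Eventually.of_forall fun ω => by ring)
    rw [e1, integral_add (hwint i) h2, integral_add ((habint i).const_mul 2) (hbint i),
      integral_const_mul]
  rw [hexp, key i]
  ring
end

section
/- One-dimensional eSURE identity: let x ∈ ℝ be fixed, n₁ ~ N(0, σ₁²), z ~ N(0, σ_z²) independent, y₁ = x + n₁, y₂ = y₁ + z. For h: ℝ → ℝ Lipschitz, E[(x - h(y₂))²] = E[(y₁ - h(y₂))²] - σ₁² + 2σ₁²·E[h'(y₂)]. -/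
open MeasureTheory ProbabilityTheory Real Set Filter
open scoped NNReal ENNReal Topology
namespace ESure

variable (v : ℝ≥0)

noncomputable def g (t : ℝ) : ℝ := gaussianPDFReal 0 v t

lemma g_eq (t : ℝ) : g v t = (√(2 * π * v))⁻¹ * Real.exp (-t ^ 2 / (2 * v)) := by
  simp [g, gaussianPDFReal_def]

lemma g_nonneg (t : ℝ) : 0 ≤ g v t := gaussianPDFReal_nonneg 0 v t

lemma g_cont : Continuous (g v) := by
  simp only [funext (g_eq v)]
  exact continuous_const.mul ((continuous_pow 2).neg.div_const _).rexp

lemma g_hasDeriv (hv : v ≠ 0) (t : ℝ) :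
    HasDerivAt (fun s => -(v : ℝ) * g v s) (t * g v t) t := by
  have hv' : (v : ℝ) ≠ 0 := by exact_mod_cast hv
  have h1 : HasDerivAt (fun s : ℝ => -s ^ 2 / (2 * v)) (-t / v) t := by
    have := ((hasDerivAt_pow 2 t).neg).div_const (2 * (v : ℝ))
    exact this.congr_deriv (by field_simp; ring)
  have h2 : HasDerivAt (fun s : ℝ => Real.exp (-s ^ 2 / (2 * v)))
      (Real.exp (-t ^ 2 / (2 * v)) * (-t / v)) t := h1.exp
  have h3 := (h2.const_mul ((√(2 * π * v))⁻¹)).const_mul (-(v : ℝ))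
  simp only [funext (g_eq v)]
  exact h3.congr_deriv (by field_simp)

lemma g_tendsto_atTop (hv : v ≠ 0) : Tendsto (g v) atTop (𝓝 0) := by
  have hv0 : v ≠ 0 := hv
  simp only [funext (g_eq v)]
  rw [show (0:ℝ) = (√(2 * π * v))⁻¹ * 0 by ring]
  refine Tendsto.const_mul _ ?_
  refine Real.tendsto_exp_atBot.comp ?_
  have hv' : (0:ℝ) < v := by positivity
  have h2 : Tendsto (fun t : ℝ => t ^ 2 / (2 * v)) atTop atTop := by
    apply Tendsto.atTop_div_const (by positivity)
    exact tendsto_pow_atTop (by norm_num)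
  have h3 := tendsto_neg_atTop_atBot.comp h2
  refine h3.congr fun t => ?_
  simp [Function.comp, neg_div]

lemma g_tendsto_atBot (hv : v ≠ 0) : Tendsto (g v) atBot (𝓝 0) := by
  have h1 := (g_tendsto_atTop v hv).comp tendsto_neg_atBot_atTop
  refine h1.congr fun t => ?_
  simp [Function.comp, g_eq]

lemma integrable_pow_g (hv : v ≠ 0) (n : ℕ) : Integrable (fun t => |t| ^ n * g v t) := by
  have hv' : (0:ℝ) < v := by positivity
  have hb : (0:ℝ) < (2 * (v:ℝ))⁻¹ := by positivity
  have hs : (-1:ℝ) < (n:ℝ) := lt_of_lt_of_le (by norm_num) (Nat.cast_nonneg n)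
  have h := ((integrable_rpow_mul_exp_neg_mul_sq hb hs).const_mul ((√(2 * π * v))⁻¹)).abs
  refine h.congr (Eventually.of_forall fun t => ?_)
  dsimp only
  rw [g_eq, abs_mul, abs_mul, Real.rpow_natCast, abs_pow,
    abs_of_nonneg (Real.exp_nonneg _), abs_of_nonneg (by positivity : (0:ℝ) ≤ (√(2 * π * v))⁻¹)]
  have h2 : -(2 * (v:ℝ))⁻¹ * t ^ 2 = -t ^ 2 / (2 * v) := by field_simp
  rw [h2]; ring

lemma integrable_tg (hv : v ≠ 0) : Integrable (fun t => t * g v t) := by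
  refine (integrable_pow_g v hv 1).mono' ?_ ?_
  · exact (continuous_id.mul (g_cont v)).aestronglyMeasurable
  · refine Eventually.of_forall fun t => ?_
    simp only [norm_mul, Real.norm_eq_abs, pow_one]
    rw [abs_of_nonneg (g_nonneg v t)]


lemma integral_Ioi_tg (hv : v ≠ 0) (s : ℝ) :
    ∫ t in Ioi s, t * g v t = v * g v s := by
  have := integral_Ioi_of_hasDerivAt_of_tendsto
    (f := fun s => -(v:ℝ) * g v s) (f' := fun t => t * g v t) (a := s) (m := 0)
    ((continuous_const.mul (g_cont v)).continuousWithinAt)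
    (fun x _ => g_hasDeriv v hv x)
    ((integrable_tg v hv).integrableOn)
    ?_
  · rw [this]; ring
  · have := (g_tendsto_atTop v hv).const_mul (-(v:ℝ))
    simpa using this

lemma integral_Iic_tg (hv : v ≠ 0) (s : ℝ) :
    ∫ t in Iic s, t * g v t = -((v:ℝ) * g v s) := by
  have := integral_Iic_of_hasDerivAt_of_tendsto
    (f := fun s => -(v:ℝ) * g v s) (f' := fun t => t * g v t) (a := s) (m := 0)
    ((continuous_const.mul (g_cont v)).continuousWithinAt)
    (fun x _ => g_hasDeriv v hv x)
    ((integrable_tg v hv).integrableOn)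
    ?_
  · rw [this]; ring
  · have := (g_tendsto_atBot v hv).const_mul (-(v:ℝ))
    simpa using this

lemma integral_Ici_tg (hv : v ≠ 0) (s : ℝ) :
    ∫ t in Ici s, t * g v t = v * g v s := by
  rw [integral_Ici_eq_integral_Ioi, integral_Ioi_tg v hv s]

lemma integral_Iio_tg (hv : v ≠ 0) (s : ℝ) :
    ∫ t in Iio s, t * g v t = -((v:ℝ) * g v s) := by
  rw [← integral_Iic_eq_integral_Iio, integral_Iic_tg v hv s]

lemma integral_tg_zero (hv : v ≠ 0) : ∫ t, t * g v t = 0 := by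
  rw [← intervalIntegral.integral_Iic_add_Ioi (b := (0:ℝ)) (integrable_tg v hv).integrableOn
    (integrable_tg v hv).integrableOn, integral_Iic_tg v hv, integral_Ioi_tg v hv]
  ring


/-- limit of difference quotients along a null sequence -/
lemma tendsto_diffquot {F : ℝ → ℝ} {d y : ℝ} (hF : HasDerivAt F d y)
    {u : ℕ → ℝ} (hu0 : ∀ n, u n ≠ 0) (hu : Tendsto u atTop (𝓝 0)) :
    Tendsto (fun n => (F (y + u n) - F y) / u n) atTop (𝓝 d) := by
  rw [hasDerivAt_iff_tendsto_slope] at hF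
  have hcomp : Tendsto (fun n => y + u n) atTop (𝓝[≠] y) := by
    rw [tendsto_nhdsWithin_iff]
    constructor
    · have : Tendsto (fun n => y + u n) atTop (𝓝 (y + 0)) := tendsto_const_nhds.add hu
      simpa using this
    · exact Eventually.of_forall fun n => by simp [hu0 n]
  have := hF.comp hcomp
  refine this.congr fun n => ?_
  simp only [Function.comp, slope_def_field, div_eq_div_iff]
  congr 1
  ring

lemma lipschitz_deriv_le {h : ℝ → ℝ} {K : ℝ≥0} (hlip : LipschitzWith K h) (t : ℝ) :
    |deriv h t| ≤ K := by
  by_cases hd : DifferentiableAt ℝ h t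
  · have hs := hd.hasDerivAt
    rw [hasDerivAt_iff_tendsto_slope] at hs
    have habs : Tendsto (fun y => |slope h t y|) (𝓝[≠] t) (𝓝 |deriv h t|) :=
      hs.abs
    refine le_of_tendsto habs ?_
    refine eventually_nhdsWithin_of_forall fun y hy => ?_
    have hyt : y ≠ t := hy
    rw [slope_def_field, div_eq_inv_mul, abs_mul, abs_inv]
    rw [inv_mul_le_iff₀ (by simp [sub_ne_zero.2 hyt] : 0 < |y - t|)]
    calc |h y - h t| ≤ K * |y - t| := by
            have := hlip.dist_le_mul y t
            simpa [Real.dist_eq] using this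
      _ = |y - t| * K := by ring
  · rw [deriv_zero_of_not_differentiableAt hd]
    simp

lemma lipschitz_ftc_le {h : ℝ → ℝ} {K : ℝ≥0} (hlip : LipschitzWith K h)
    {b c : ℝ} (hbc : b ≤ c) : ∫ s in b..c, deriv h s = h c - h b := by
  have hc : Continuous h := hlip.continuous
  set H : ℝ → ℝ := fun y => ∫ s in (0:ℝ)..y, h s with hH
  have hHd : ∀ y, HasDerivAt H (h y) y := fun y =>
    intervalIntegral.integral_hasDerivAt_right (hc.intervalIntegrable _ _)
      (hc.stronglyMeasurable.stronglyMeasurableAtFilter) hc.continuousAt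
  set u : ℕ → ℝ := fun n => (1:ℝ) / (n + 1) with hu_def
  have hu0 : ∀ n, u n ≠ 0 := fun n => by positivity
  have hu : Tendsto u atTop (𝓝 0) := tendsto_one_div_add_atTop_nhds_zero_nat
  -- key1: rewrite the difference-quotient integral
  have key1 : ∀ n, ∫ s in b..c, (h (s + u n) - h s) / u n =
      ((H (c + u n) - H c) - (H (b + u n) - H b)) / u n := by
    intro n
    have hint1 : IntervalIntegrable (fun s => h (s + u n)) volume b c :=
      (hc.comp (continuous_id.add continuous_const)).intervalIntegrable _ _
    have hint2 : IntervalIntegrable h volume b c := hc.intervalIntegrable _ _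
    have e1 : ∫ s in b..c, (h (s + u n) - h s) / u n
        = ((∫ s in b..c, h (s + u n)) - ∫ s in b..c, h s) / u n := by
      rw [← intervalIntegral.integral_sub hint1 hint2]
      simp_rw [div_eq_inv_mul, intervalIntegral.integral_const_mul]
    have e2 : ∫ s in b..c, h (s + u n) = ∫ s in (b + u n)..(c + u n), h s :=
      intervalIntegral.integral_comp_add_right h (u n)
    have eH : ∀ p q : ℝ, ∫ s in p..q, h s = H q - H p := by
      intro p q
      rw [hH]
      rw [eq_sub_iff_add_eq, add_comm, intervalIntegral.integral_add_adjacent_intervals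
        (hc.intervalIntegrable _ _) (hc.intervalIntegrable _ _)]
    rw [e1, e2, eH, eH]
    ring
  -- key2: limit of RHS
  have key2 : Tendsto (fun n => ((H (c + u n) - H c) - (H (b + u n) - H b)) / u n)
      atTop (𝓝 (h c - h b)) := by
    have t1 := tendsto_diffquot (hHd c) hu0 hu
    have t2 := tendsto_diffquot (hHd b) hu0 hu
    have := t1.sub t2
    refine this.congr fun n => ?_
    ring
  -- key3: DCT
  have key3 : Tendsto (fun n => ∫ s in b..c, (h (s + u n) - h s) / u n)
      atTop (𝓝 (∫ s in b..c, deriv h s)) := by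
    simp_rw [intervalIntegral.integral_of_le hbc]
    refine tendsto_integral_of_dominated_convergence (fun _ => (K:ℝ)) ?_ ?_ ?_ ?_
    · intro n
      exact ((hc.comp (continuous_id.add continuous_const)).sub hc).div_const
        (u n) |>.aestronglyMeasurable.restrict
    · exact integrableOn_const measure_Ioc_lt_top.ne
    · intro n
      refine Eventually.of_forall fun s => ?_
      rw [Real.norm_eq_abs, abs_div]
      rw [div_le_iff₀ (abs_pos.2 (hu0 n))]
      have := hlip.dist_le_mul (s + u n) s
      simpa [Real.dist_eq] using this
    · have hae : ∀ᵐ s : ℝ, DifferentiableAt ℝ h s := hlip.ae_differentiableAt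
      refine ae_restrict_of_ae ?_
      filter_upwards [hae] with s hs
      exact tendsto_diffquot hs.hasDerivAt hu0 hu
  have := tendsto_nhds_unique (key3.congr fun n => key1 n) key2
  rw [intervalIntegral.integral_of_le hbc] at this ⊢
  exact this

lemma lipschitz_ftc {h : ℝ → ℝ} {K : ℝ≥0} (hlip : LipschitzWith K h)
    (b c : ℝ) : ∫ s in b..c, deriv h s = h c - h b := by
  rcases le_total b c with hbc | hbc
  · exact lipschitz_ftc_le hlip hbc
  · rw [intervalIntegral.integral_symm, lipschitz_ftc_le hlip hbc]
    ring
section Stein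

/-- The Fubini kernel. -/
noncomputable def W (p : ℝ × ℝ) : ℝ :=
  ({q : ℝ × ℝ | 0 ≤ q.2 ∧ q.2 ≤ q.1} : Set (ℝ × ℝ)).indicator (fun _ => 1) p
    - ({q : ℝ × ℝ | q.1 ≤ q.2 ∧ q.2 ≤ 0} : Set (ℝ × ℝ)).indicator (fun _ => 1) p

noncomputable def G (v : ℝ≥0) (h : ℝ → ℝ) (a : ℝ) (p : ℝ × ℝ) : ℝ :=
  (p.1 * g v p.1) * deriv h (a + p.2) * W p

lemma meas_S1 : MeasurableSet {q : ℝ × ℝ | 0 ≤ q.2 ∧ q.2 ≤ q.1} :=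
  (isClosed_le continuous_const continuous_snd).measurableSet.inter
    (isClosed_le continuous_snd continuous_fst).measurableSet

lemma meas_S2 : MeasurableSet {q : ℝ × ℝ | q.1 ≤ q.2 ∧ q.2 ≤ 0} :=
  (isClosed_le continuous_fst continuous_snd).measurableSet.inter
    (isClosed_le continuous_snd continuous_const).measurableSet

lemma W_meas : Measurable W :=
  ((measurable_const.indicator meas_S1).sub (measurable_const.indicator meas_S2))

lemma W_abs_le (p : ℝ × ℝ) :
    |W p| ≤ (Icc (-|p.1|) |p.1|).indicator (fun _ => 1) p.2 := by
  rcases p with ⟨t, s⟩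
  simp only [W, indicator_apply, mem_setOf_eq, mem_Icc]
  by_cases h3 : -|t| ≤ s ∧ s ≤ |t|
  · rw [if_pos h3]
    split_ifs <;> norm_num
  · have hA : ¬(0 ≤ s ∧ s ≤ t) := fun hu =>
      h3 ⟨by linarith [abs_nonneg t, hu.1], hu.2.trans (le_abs_self t)⟩
    have hB : ¬(t ≤ s ∧ s ≤ 0) := fun hu =>
      h3 ⟨(neg_abs_le t).trans hu.1, by linarith [abs_nonneg t, hu.2]⟩
    rw [if_neg h3, if_neg hA, if_neg hB]
    simp

lemma G_meas (h : ℝ → ℝ) (a : ℝ) : Measurable (G v h a) := by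
  refine ((measurable_fst.mul ((g_cont v).measurable.comp measurable_fst)).mul
    ((measurable_deriv h).comp (measurable_const.add measurable_snd))).mul W_meas

lemma G_integrable (hv : v ≠ 0) {h : ℝ → ℝ} {K : ℝ≥0} (hlip : LipschitzWith K h) (a : ℝ) :
    Integrable (G v h a) (volume.prod volume) := by
  rw [integrable_prod_iff (G_meas v h a).aestronglyMeasurable]
  constructor
  · refine Eventually.of_forall fun t => ?_
    have hbound : Integrable (fun s : ℝ =>
        |t * g v t| * K * (Icc (-|t|) |t|).indicator (fun _ => (1:ℝ)) s) volume := by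
      refine Integrable.const_mul ?_ _
      exact (integrable_indicator_iff measurableSet_Icc).2
        (integrableOn_const measure_Icc_lt_top.ne)
    refine hbound.mono' ?_ ?_
    · exact ((G_meas v h a).comp measurable_prodMk_left).aestronglyMeasurable
    · refine Eventually.of_forall fun s => ?_
      have h1 : |deriv h (a + s)| ≤ K := lipschitz_deriv_le hlip _
      have h2 := W_abs_le (t, s)
      calc ‖G v h a (t, s)‖ = |t * g v t| * |deriv h (a + s)| * |W (t, s)| := by
            simp [G, abs_mul]
        _ ≤ |t * g v t| * K * ((Icc (-|t|) |t|).indicator (fun _ => 1) s) := by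
            refine mul_le_mul ?_ h2 (abs_nonneg _) (by positivity)
            exact mul_le_mul_of_nonneg_left h1 (abs_nonneg _)
  · have hbound : Integrable (fun t : ℝ => (K:ℝ) * 2 * (|t| ^ 2 * g v t)) volume :=
      (integrable_pow_g v hv 2).const_mul _
    refine hbound.mono' ?_ ?_
    · exact ((G_meas v h a).aestronglyMeasurable.norm.integral_prod_right')
    · refine Eventually.of_forall fun t => ?_
      rw [Real.norm_eq_abs, abs_of_nonneg (integral_nonneg fun s => norm_nonneg _)]
      have step : ∫ s, ‖G v h a (t, s)‖ ≤
          ∫ s, |t * g v t| * K * (Icc (-|t|) |t|).indicator (fun _ => (1:ℝ)) s := by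
        refine integral_mono_of_nonneg (Eventually.of_forall fun s => norm_nonneg _)
          (Integrable.const_mul ((integrable_indicator_iff measurableSet_Icc).2
            (integrableOn_const measure_Icc_lt_top.ne)) _)
          (Eventually.of_forall fun s => ?_)
        have h1 : |deriv h (a + s)| ≤ K := lipschitz_deriv_le hlip _
        have h2 := W_abs_le (t, s)
        calc ‖G v h a (t, s)‖ = |t * g v t| * |deriv h (a + s)| * |W (t, s)| := by
              simp [G, abs_mul]
          _ ≤ |t * g v t| * K * ((Icc (-|t|) |t|).indicator (fun _ => 1) s) := by
              refine mul_le_mul ?_ h2 (abs_nonneg _) (by positivity)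
              exact mul_le_mul_of_nonneg_left h1 (abs_nonneg _)
      refine step.trans ?_
      rw [integral_const_mul, integral_indicator_const _ measurableSet_Icc]
      rw [measureReal_def, Real.volume_Icc]
      have : |t| - -|t| = 2 * |t| := by ring
      rw [this, ENNReal.toReal_ofReal (by positivity)]
      rw [abs_mul, abs_of_nonneg (g_nonneg v t)]
      rw [smul_eq_mul, sq]
      exact le_of_eq (by ring)

lemma integrableOn_deriv {h : ℝ → ℝ} {K : ℝ≥0} (hlip : LipschitzWith K h) (a : ℝ)
    {A : Set ℝ} (hA : MeasurableSet A) (hAfin : volume A < ⊤) :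
    IntegrableOn (fun s => deriv h (a + s)) A volume := by
  refine (integrableOn_const hAfin.ne : IntegrableOn (fun _ => (K:ℝ)) A volume).mono'
    ?_ ?_
  · exact ((measurable_deriv h).comp (measurable_id.const_add a)).aestronglyMeasurable.restrict
  · exact Eventually.of_forall fun s => by
      simpa using lipschitz_deriv_le hlip (a + s)

lemma G_inner_s (hv : v ≠ 0) {h : ℝ → ℝ} {K : ℝ≥0} (hlip : LipschitzWith K h) (a t : ℝ) :
    ∫ s, G v h a (t, s) = (t * g v t) * (h (a + t) - h a) := by
  have hGr : (fun s => G v h a (t, s))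
      = fun s => (t * g v t) * ((Icc 0 t).indicator (fun s => deriv h (a + s)) s
          - (Icc t 0).indicator (fun s => deriv h (a + s)) s) := by
    funext s
    simp only [G, W, indicator_apply, mem_setOf_eq, mem_Icc]
    split_ifs <;> ring
  rw [hGr, integral_const_mul]
  have int1 : Integrable ((Icc 0 t).indicator fun s => deriv h (a + s)) volume :=
    (integrable_indicator_iff measurableSet_Icc).2
      (integrableOn_deriv hlip a measurableSet_Icc measure_Icc_lt_top)
  have int2 : Integrable ((Icc t 0).indicator fun s => deriv h (a + s)) volume :=
    (integrable_indicator_iff measurableSet_Icc).2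
      (integrableOn_deriv hlip a measurableSet_Icc measure_Icc_lt_top)
  rw [integral_sub int1 int2, integral_indicator measurableSet_Icc,
    integral_indicator measurableSet_Icc]
  have ftc : ∫ s in (0:ℝ)..t, deriv h (a + s) = h (a + t) - h a := by
    rw [intervalIntegral.integral_comp_add_left (fun u => deriv h u) a]
    simpa using lipschitz_ftc hlip (a + 0) (a + t)
  rcases le_total 0 t with ht | ht
  · rw [show Icc t 0 = (if t = 0 then {0} else ∅ : Set ℝ) by
      split_ifs with h0
      · simp [h0]
      · exact Icc_eq_empty (fun hc => h0 (le_antisymm hc ht))]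
    have : ∫ (s : ℝ) in Icc 0 t, deriv h (a + s) = ∫ s in (0:ℝ)..t, deriv h (a + s) := by
      rw [integral_Icc_eq_integral_Ioc, intervalIntegral.integral_of_le ht]
    rw [this, ftc]
    split_ifs with h0
    · simp [Real.volume_singleton]
    · simp
  · rw [show Icc 0 t = (if t = 0 then {0} else ∅ : Set ℝ) by
      split_ifs with h0
      · simp [h0]
      · exact Icc_eq_empty (fun hc => h0 (le_antisymm ht hc))]
    have : ∫ (s : ℝ) in Icc t 0, deriv h (a + s) = ∫ s in t..(0:ℝ), deriv h (a + s) := by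
      rw [integral_Icc_eq_integral_Ioc, intervalIntegral.integral_of_le ht]
    rw [this, intervalIntegral.integral_symm, ftc]
    split_ifs with h0
    · simp [Real.volume_singleton, h0]
    · simp

lemma G_inner_t (hv : v ≠ 0) (h : ℝ → ℝ) (a : ℝ) {s : ℝ} (hs : s ≠ 0) :
    ∫ t, G v h a (t, s) = deriv h (a + s) * ((v:ℝ) * g v s) := by
  rcases lt_or_gt_of_ne hs with hneg | hpos
  · have hGr : (fun t => G v h a (t, s))
        = fun t => deriv h (a + s) * (-(Iic s).indicator (fun t => t * g v t) t) := by
      funext t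
      simp only [G, W, indicator_apply, mem_setOf_eq, mem_Iic]
      have c1 : ¬(0 ≤ s ∧ s ≤ t) := fun hu => absurd hu.1 (not_le.2 hneg)
      rw [if_neg c1]
      by_cases hts : t ≤ s
      · rw [if_pos ⟨hts, hneg.le⟩, if_pos hts]; ring
      · rw [if_neg (fun hu => hts hu.1), if_neg hts]; ring
    rw [hGr, integral_const_mul, integral_neg, integral_indicator measurableSet_Iic,
      integral_Iic_tg v hv]
    ring
  · have hGr : (fun t => G v h a (t, s))
        = fun t => deriv h (a + s) * ((Ici s).indicator (fun t => t * g v t) t) := by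
      funext t
      simp only [G, W, indicator_apply, mem_setOf_eq, mem_Ici]
      have c2 : ¬(t ≤ s ∧ s ≤ 0) := fun hu => absurd hu.2 (not_le.2 hpos)
      rw [if_neg c2]
      by_cases hts : s ≤ t
      · rw [if_pos ⟨hpos.le, hts⟩, if_pos hts]; ring
      · rw [if_neg (fun hu => hts hu.2), if_neg hts]; ring
    rw [hGr, integral_const_mul, integral_indicator measurableSet_Ici,
      integral_Ici_tg v hv]

lemma integrable_tg_h (hv : v ≠ 0) {h : ℝ → ℝ} {K : ℝ≥0} (hlip : LipschitzWith K h) (a : ℝ) :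
    Integrable (fun t => (t * g v t) * h (a + t)) volume := by
  have hbound : Integrable (fun t : ℝ =>
      |h a| * (|t| ^ 1 * g v t) + (K:ℝ) * (|t| ^ 2 * g v t)) volume :=
    ((integrable_pow_g v hv 1).const_mul _).add ((integrable_pow_g v hv 2).const_mul _)
  refine hbound.mono' ?_ ?_
  · exact ((continuous_id.mul (g_cont v)).mul
      (hlip.continuous.comp (continuous_const.add continuous_id))).aestronglyMeasurable
  · refine Eventually.of_forall fun t => ?_
    have hh : |h (a + t)| ≤ |h a| + (K:ℝ) * |t| := by
      have := hlip.dist_le_mul (a + t) a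
      rw [Real.dist_eq, Real.dist_eq] at this
      have h2 : |h (a + t)| - |h a| ≤ |h (a + t) - h a| := abs_sub_abs_le_abs_sub _ _
      simp only [add_sub_cancel_left] at this
      linarith
    rw [Real.norm_eq_abs, abs_mul, abs_mul, pow_one, sq]
    calc |t| * |g v t| * |h (a + t)| ≤ |t| * |g v t| * (|h a| + (K:ℝ) * |t|) := by
          refine mul_le_mul_of_nonneg_left hh (by positivity)
      _ = |h a| * (|t| * |g v t|) + (K:ℝ) * (|t| * |t| * |g v t|) := by ring
      _ = |h a| * (|t| * g v t) + (K:ℝ) * (|t| * |t| * g v t) := by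
          rw [abs_of_nonneg (g_nonneg v t)]

lemma stein_density (hv : v ≠ 0) {h : ℝ → ℝ} {K : ℝ≥0} (hlip : LipschitzWith K h) (a : ℝ) :
    ∫ t, (t * g v t) * h (a + t) = (v:ℝ) * ∫ s, g v s * deriv h (a + s) := by
  have swap := integral_integral_swap (f := fun t s => G v h a (t, s))
    (G_integrable v hv hlip a)
  have lhs : ∫ t, ∫ s, G v h a (t, s) = ∫ t, (t * g v t) * h (a + t) := by
    have e1 : ∀ t, ∫ s, G v h a (t, s) = (t * g v t) * (h (a + t) - h a) :=
      G_inner_s v hv hlip a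
    rw [integral_congr_ae (Eventually.of_forall e1)]
    have e2 : (fun t => (t * g v t) * (h (a + t) - h a))
        = fun t => (t * g v t) * h (a + t) - (t * g v t) * h a := by
      funext t; ring
    rw [e2, integral_sub (integrable_tg_h v hv hlip a) ((integrable_tg v hv).mul_const _),
      integral_mul_const, integral_tg_zero v hv]
    ring
  have rhs : ∫ s, ∫ t, G v h a (t, s) = (v:ℝ) * ∫ s, g v s * deriv h (a + s) := by
    have h0 : ∀ᵐ s : ℝ, s ≠ (0:ℝ) := by
      rw [ae_iff]
      simp only [ne_eq, not_not]
      simpa using Real.volume_singleton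
    have e1 : (fun s => ∫ t, G v h a (t, s)) =ᵐ[volume]
        fun s => (v:ℝ) * (g v s * deriv h (a + s)) := by
      filter_upwards [h0] with s hs
      rw [G_inner_t v hv h a hs]
      ring
    rw [integral_congr_ae e1, integral_const_mul]
  rw [← lhs, swap, rhs]

end Stein

section Transfer
variable (v : ℝ≥0)

lemma gaussian_eq_withDensity (hv : v ≠ 0) :
    gaussianReal 0 v = volume.withDensity (fun t => (((g v t).toNNReal : ℝ≥0) : ℝ≥0∞)) := by
  rw [gaussianReal_of_var_ne_zero 0 hv, gaussianPDF_def]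
  rfl

lemma integrable_gaussian_iff (hv : v ≠ 0) (f : ℝ → ℝ) :
    Integrable f (gaussianReal 0 v) ↔ Integrable (fun t => g v t * f t) volume := by
  rw [gaussian_eq_withDensity v hv,
    integrable_withDensity_iff_integrable_smul ((g_cont v).measurable.real_toNNReal)]
  refine integrable_congr (Eventually.of_forall fun t => ?_)
  simp [NNReal.smul_def, Real.coe_toNNReal _ (g_nonneg v t)]

lemma integral_gaussian_eq (hv : v ≠ 0) (f : ℝ → ℝ) :
    ∫ t, f t ∂(gaussianReal 0 v) = ∫ t, g v t * f t := by
  rw [gaussian_eq_withDensity v hv,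
    integral_withDensity_eq_integral_smul ((g_cont v).measurable.real_toNNReal) f]
  refine integral_congr_ae (Eventually.of_forall fun t => ?_)
  simp [NNReal.smul_def, Real.coe_toNNReal _ (g_nonneg v t)]

variable {h : ℝ → ℝ} {K : ℝ≥0}

lemma stein (hv : v ≠ 0) (hlip : LipschitzWith K h) (a : ℝ) :
    ∫ t, t * h (a + t) ∂(gaussianReal 0 v)
      = (v : ℝ) * ∫ t, deriv h (a + t) ∂(gaussianReal 0 v) := by
  rw [integral_gaussian_eq v hv, integral_gaussian_eq v hv]
  have e1 : (fun t => g v t * (t * h (a + t))) = fun t => (t * g v t) * h (a + t) := by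
    funext t; ring
  have e2 : (fun t => g v t * deriv h (a + t)) = fun t => g v t * deriv h (a + t) := rfl
  rw [e1, stein_density v hv hlip a]

lemma int_th (hv : v ≠ 0) (hlip : LipschitzWith K h) (a : ℝ) :
    Integrable (fun t => t * h (a + t)) (gaussianReal 0 v) := by
  rw [integrable_gaussian_iff v hv]
  refine (integrable_tg_h v hv hlip a).congr (Eventually.of_forall fun t => ?_)
  ring

lemma int_dh (hlip : LipschitzWith K h) (a : ℝ) :
    Integrable (fun t => deriv h (a + t)) (gaussianReal 0 v) := by
  refine (integrable_const (K:ℝ)).mono' ?_ ?_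
  · exact ((measurable_deriv h).comp (measurable_id.const_add a)).aestronglyMeasurable
  · exact Eventually.of_forall fun t => by simpa using lipschitz_deriv_le hlip (a + t)

lemma int_t (hv : v ≠ 0) : Integrable (fun t : ℝ => t) (gaussianReal 0 v) := by
  rw [integrable_gaussian_iff v hv]
  exact (integrable_tg v hv).congr (Eventually.of_forall fun t => by ring)

lemma int_t2 (hv : v ≠ 0) : Integrable (fun t : ℝ => t ^ 2) (gaussianReal 0 v) := by
  rw [integrable_gaussian_iff v hv]
  refine (integrable_pow_g v hv 2).congr (Eventually.of_forall fun t => ?_)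
  dsimp only
  rw [sq_abs]; ring

lemma int_sq (hv : v ≠ 0) (hlip : LipschitzWith K h) (a c : ℝ) :
    Integrable (fun t => (c - h (a + t)) ^ 2) (gaussianReal 0 v) := by
  have hbound : Integrable (fun t : ℝ =>
      2 * (c - h a) ^ 2 + 2 * (K:ℝ) ^ 2 * t ^ 2) (gaussianReal 0 v) :=
    (integrable_const _).add ((int_t2 v hv).const_mul _)
  refine hbound.mono' ?_ ?_
  · exact ((continuous_const.sub (hlip.continuous.comp
      (continuous_const.add continuous_id))).pow 2).aestronglyMeasurable
  · refine Eventually.of_forall fun t => ?_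
    have hh : |h (a + t) - h a| ≤ (K:ℝ) * |t| := by
      have := hlip.dist_le_mul (a + t) a
      simpa [Real.dist_eq] using this
    rw [Real.norm_eq_abs, abs_of_nonneg (sq_nonneg _)]
    have habs : |c - h (a + t)| ≤ |c - h a| + (K:ℝ) * |t| := by
      calc |c - h (a + t)| = |(c - h a) + (h a - h (a + t))| := by
            rw [show c - h (a + t) = (c - h a) + (h a - h (a + t)) by ring]
        _ ≤ |c - h a| + |h a - h (a + t)| := abs_add_le _ _
        _ ≤ |c - h a| + (K:ℝ) * |t| := by
            have e := abs_sub_comm (h a) (h (a + t))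
            linarith
    have h1 : (c - h (a + t)) ^ 2 ≤ (|c - h a| + (K:ℝ) * |t|) ^ 2 := by
      rw [← sq_abs (c - h (a + t))]
      exact pow_le_pow_left₀ (abs_nonneg _) habs 2
    have h2 : (|c - h a| + (K:ℝ) * |t|) ^ 2 ≤ 2 * (c - h a) ^ 2 + 2 * (K:ℝ) ^ 2 * t ^ 2 := by
      have e1 : |c - h a| ^ 2 = (c - h a) ^ 2 := sq_abs _
      have e2 : |t| ^ 2 = t ^ 2 := sq_abs _
      nlinarith [sq_nonneg (|c - h a| - (K:ℝ) * |t|), abs_nonneg (c - h a), abs_nonneg t,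
        NNReal.coe_nonneg K]
    linarith

lemma moment1 (hv : v ≠ 0) : ∫ t, t ∂(gaussianReal 0 v) = 0 := by
  rw [integral_gaussian_eq v hv]
  rw [show (fun t => g v t * t) = fun t => t * g v t from funext fun t => by ring]
  exact integral_tg_zero v hv

lemma moment2 (hv : v ≠ 0) : ∫ t, t ^ 2 ∂(gaussianReal 0 v) = v := by
  have := stein v hv (LipschitzWith.id (α := ℝ)) 0
  simp only [id_eq, zero_add] at this
  rw [show (fun t : ℝ => t * t) = fun t : ℝ => t ^ 2 from funext fun t => (sq t).symm] at this
  rw [this]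
  have hd : deriv (id : ℝ → ℝ) = fun _ => (1:ℝ) := funext fun t => deriv_id t
  rw [hd]
  simp

lemma one_dim (hv : v ≠ 0) (hlip : LipschitzWith K h) (x w : ℝ) :
    ∫ t, (x - h (x + t + w)) ^ 2 ∂(gaussianReal 0 v)
      = (∫ t, (x + t - h (x + t + w)) ^ 2 ∂(gaussianReal 0 v)) - (v:ℝ)
        + 2 * (v:ℝ) * ∫ t, deriv h (x + t + w) ∂(gaussianReal 0 v) := by
  have harg : ∀ t : ℝ, x + t + w = (x + w) + t := fun t => by ring
  set a := x + w with ha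
  simp only [harg]
  have expand : (fun t => (x + t - h (a + t)) ^ 2)
      = fun t => (((x - h (a + t)) ^ 2 + (2 * x) * t + t ^ 2) - 2 * (t * h (a + t))) := by
    funext t; ring
  rw [expand]
  have Ia : Integrable (fun t => (x - h (a + t)) ^ 2 + 2 * x * t) (gaussianReal 0 v) :=
    (int_sq v hv hlip a x).add ((int_t v hv).const_mul (2 * x))
  have I1 : Integrable (fun t => (x - h (a + t)) ^ 2 + 2 * x * t + t ^ 2) (gaussianReal 0 v) :=
    Ia.add (int_t2 v hv)
  have I2 : Integrable (fun t => 2 * (t * h (a + t))) (gaussianReal 0 v) :=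
    (int_th v hv hlip a).const_mul 2
  rw [integral_sub I1 I2, integral_add Ia (int_t2 v hv),
    integral_add (int_sq v hv hlip a x) ((int_t v hv).const_mul (2 * x))]
  rw [integral_const_mul, integral_const_mul, moment1 v hv, moment2 v hv,
    stein v hv hlip a]
  ring

end Transfer

section Main

lemma int_t2' (v : ℝ≥0) : Integrable (fun t : ℝ => t ^ 2) (gaussianReal 0 v) := by
  by_cases hv : v = 0
  · rw [hv, gaussianReal_zero_var]
    exact (integrable_const ((0:ℝ) ^ 2)).congr (ae_eq_dirac (fun t : ℝ => t ^ 2)).symm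
  · exact int_t2 v hv

lemma integrable_comp_fst {μ ν : Measure ℝ} [SFinite μ] [IsProbabilityMeasure ν]
    {f : ℝ → ℝ} (hf : Integrable f μ) :
    Integrable (fun p : ℝ × ℝ => f p.1) (μ.prod ν) := by
  have hmap : Measure.map Prod.fst (μ.prod ν) = μ := by
    rw [Measure.map_fst_prod]; simp
  have h1 : Integrable f (Measure.map Prod.fst (μ.prod ν)) := hmap.symm ▸ hf
  exact (integrable_map_measure h1.aestronglyMeasurable
    measurable_fst.aemeasurable).1 h1

lemma integrable_comp_snd {μ ν : Measure ℝ} [SFinite ν] [IsProbabilityMeasure μ]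
    {f : ℝ → ℝ} (hf : Integrable f ν) :
    Integrable (fun p : ℝ × ℝ => f p.2) (μ.prod ν) := by
  have hmap : Measure.map Prod.snd (μ.prod ν) = ν := by
    rw [Measure.map_snd_prod]; simp
  have h1 : Integrable f (Measure.map Prod.snd (μ.prod ν)) := hmap.symm ▸ hf
  exact (integrable_map_measure h1.aestronglyMeasurable
    measurable_snd.aemeasurable).1 h1

end Main
end ESure

open MeasureTheory ProbabilityTheory
open scoped NNReal

/-- One-dimensional eSURE identity: with `y₁ = x + n₁`, `y₂ = y₁ + z`, where
`n₁ ~ N(0, σ₁²)` and `z ~ N(0, σ_z²)` are independent, and `h : ℝ → ℝ` Lipschitz,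
`E[(x - h(y₂))²] = E[(y₁ - h(y₂))²] - σ₁² + 2σ₁²·E[h'(y₂)]`. -/
theorem esure_one_dim (x : ℝ) (σ₁ σz : ℝ≥0) (hσ₁ : 0 < σ₁)
    (h : ℝ → ℝ) (K : ℝ≥0) (hlip : LipschitzWith K h) :
    ∫ p : ℝ × ℝ, (x - h (x + p.1 + p.2)) ^ 2
        ∂((gaussianReal 0 (σ₁ ^ 2)).prod (gaussianReal 0 (σz ^ 2)))
      = (∫ p : ℝ × ℝ, (x + p.1 - h (x + p.1 + p.2)) ^ 2
          ∂((gaussianReal 0 (σ₁ ^ 2)).prod (gaussianReal 0 (σz ^ 2))))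
        - (σ₁ : ℝ) ^ 2
        + 2 * (σ₁ : ℝ) ^ 2 * ∫ p : ℝ × ℝ, deriv h (x + p.1 + p.2)
            ∂((gaussianReal 0 (σ₁ ^ 2)).prod (gaussianReal 0 (σz ^ 2))) := by
  have hv : (σ₁ ^ 2 : ℝ≥0) ≠ 0 := pow_ne_zero 2 hσ₁.ne'
  set μ1 := gaussianReal 0 (σ₁ ^ 2) with hμ1
  set μ2 := gaussianReal 0 (σz ^ 2) with hμ2
  have hmeas : Measurable (fun p : ℝ × ℝ => x + p.1 + p.2) :=
    (measurable_const.add measurable_fst).add measurable_snd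
  have hcont : Continuous (fun p : ℝ × ℝ => x + p.1 + p.2) :=
    (continuous_const.add continuous_fst).add continuous_snd
  set L : ℝ := (K : ℝ) + 1 with hL
  have hL0 : (0:ℝ) ≤ L := by positivity
  -- the dominating function
  have hB : Integrable (fun p : ℝ × ℝ =>
      3 * (x - h x) ^ 2 + (3 * L ^ 2 * p.1 ^ 2 + 3 * L ^ 2 * p.2 ^ 2)) (μ1.prod μ2) := by
    refine (integrable_const _).add (Integrable.add ?_ ?_)
    · exact (ESure.integrable_comp_fst ((ESure.int_t2' _).const_mul (3 * L ^ 2)))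
    · exact (ESure.integrable_comp_snd ((ESure.int_t2' _).const_mul (3 * L ^ 2)))
  have habs : ∀ p : ℝ × ℝ, |h (x + p.1 + p.2) - h x| ≤ (K:ℝ) * |p.1| + (K:ℝ) * |p.2| := by
    intro p
    have h1 : |h (x + p.1 + p.2) - h x| ≤ (K:ℝ) * |p.1 + p.2| := by
      have := hlip.dist_le_mul (x + p.1 + p.2) x
      simpa [Real.dist_eq, add_assoc] using this
    have h2 : |p.1 + p.2| ≤ |p.1| + |p.2| := abs_add_le _ _
    have h4 : (0:ℝ) ≤ (K:ℝ) := NNReal.coe_nonneg K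
    nlinarith [abs_nonneg p.1, abs_nonneg p.2]
  have sqbound : ∀ (A u w : ℝ), |A| ≤ |x - h x| + L * |u| + L * |w| →
      A ^ 2 ≤ 3 * (x - h x) ^ 2 + (3 * L ^ 2 * u ^ 2 + 3 * L ^ 2 * w ^ 2) := by
    intro A u w hA
    have ha2 : |A| ^ 2 ≤ (|x - h x| + L * |u| + L * |w|) ^ 2 :=
      pow_le_pow_left₀ (abs_nonneg _) hA 2
    have e0 : |A| ^ 2 = A ^ 2 := sq_abs A
    have e1 : |x - h x| ^ 2 = (x - h x) ^ 2 := sq_abs _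
    have e2 : |u| ^ 2 = u ^ 2 := sq_abs _
    have e3 : |w| ^ 2 = w ^ 2 := sq_abs _
    nlinarith [sq_nonneg (|x - h x| - L * |u|), sq_nonneg (|x - h x| - L * |w|),
      sq_nonneg (L * |u| - L * |w|)]
  have IF1 : Integrable (fun p : ℝ × ℝ => (x - h (x + p.1 + p.2)) ^ 2) (μ1.prod μ2) := by
    refine hB.mono' ?_ (Eventually.of_forall fun p => ?_)
    · exact ((continuous_const.sub (hlip.continuous.comp hcont)).pow 2).aestronglyMeasurable
    · rw [Real.norm_eq_abs, abs_of_nonneg (sq_nonneg _)]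
      refine sqbound _ _ _ ?_
      have hb := habs p
      have hcomm := abs_sub_comm (h x) (h (x + p.1 + p.2))
      have tri : |x - h (x + p.1 + p.2)| ≤ |x - h x| + |h x - h (x + p.1 + p.2)| := by
        calc |x - h (x + p.1 + p.2)| = |(x - h x) + (h x - h (x + p.1 + p.2))| := by
              rw [show x - h (x + p.1 + p.2) = (x - h x) + (h x - h (x + p.1 + p.2)) by ring]
          _ ≤ _ := abs_add_le _ _
      have hK1 : (K:ℝ) ≤ L := by rw [hL]; linarith
      have := mul_le_mul_of_nonneg_right hK1 (abs_nonneg p.1)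
      have := mul_le_mul_of_nonneg_right hK1 (abs_nonneg p.2)
      linarith
  have IF2 : Integrable (fun p : ℝ × ℝ => (x + p.1 - h (x + p.1 + p.2)) ^ 2) (μ1.prod μ2) := by
    refine hB.mono' ?_ (Eventually.of_forall fun p => ?_)
    · exact (((continuous_const.add continuous_fst).sub
        (hlip.continuous.comp hcont)).pow 2).aestronglyMeasurable
    · rw [Real.norm_eq_abs, abs_of_nonneg (sq_nonneg _)]
      refine sqbound _ _ _ ?_
      have hb := habs p
      have hcomm := abs_sub_comm (h x) (h (x + p.1 + p.2))
      have tri : |x + p.1 - h (x + p.1 + p.2)|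
          ≤ |x - h x| + |p.1| + |h x - h (x + p.1 + p.2)| := by
        calc |x + p.1 - h (x + p.1 + p.2)|
            = |(x - h x) + p.1 + (h x - h (x + p.1 + p.2))| := by
              rw [show x + p.1 - h (x + p.1 + p.2)
                = (x - h x) + p.1 + (h x - h (x + p.1 + p.2)) by ring]
          _ ≤ |x - h x| + |p.1| + |h x - h (x + p.1 + p.2)| := abs_add_three _ _ _
      have hK0 : (0:ℝ) ≤ (K:ℝ) := NNReal.coe_nonneg K
      have hp2 : (0:ℝ) ≤ |p.2| := abs_nonneg p.2
      have e : L * |p.1| = (K:ℝ) * |p.1| + |p.1| := by rw [hL]; ring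
      have e2 : L * |p.2| = (K:ℝ) * |p.2| + |p.2| := by rw [hL]; ring
      linarith
  have IF3 : Integrable (fun p : ℝ × ℝ => deriv h (x + p.1 + p.2)) (μ1.prod μ2) := by
    refine (integrable_const (K:ℝ)).mono' ?_ (Eventually.of_forall fun p => ?_)
    · exact ((measurable_deriv h).comp hmeas).aestronglyMeasurable
    · simpa using ESure.lipschitz_deriv_le hlip (x + p.1 + p.2)
  rw [MeasureTheory.integral_prod_symm _ IF1, MeasureTheory.integral_prod_symm _ IF2,
    MeasureTheory.integral_prod_symm _ IF3]
  have inner : ∀ w : ℝ, ∫ t, (x - h (x + t + w)) ^ 2 ∂μ1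
      = ((∫ t, (x + t - h (x + t + w)) ^ 2 ∂μ1) - (σ₁:ℝ) ^ 2)
        + 2 * (σ₁:ℝ) ^ 2 * ∫ t, deriv h (x + t + w) ∂μ1 := by
    intro w
    have := ESure.one_dim (σ₁ ^ 2) hv hlip x w
    push_cast at this
    rw [this]
  have IA : Integrable (fun w => ∫ t, (x + t - h (x + t + w)) ^ 2 ∂μ1) μ2 :=
    IF2.integral_prod_right
  have IC : Integrable (fun w => ∫ t, deriv h (x + t + w) ∂μ1) μ2 :=
    IF3.integral_prod_right
  rw [integral_congr_ae (Eventually.of_forall inner)]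
  have Isub : Integrable
      (fun w => (∫ t, (x + t - h (x + t + w)) ^ 2 ∂μ1) - (σ₁:ℝ) ^ 2) μ2 :=
    IA.sub (integrable_const _)
  rw [integral_add Isub (IC.const_mul _), integral_sub IA (integrable_const _),
    integral_const_mul, integral_const]
  simp only [measure_univ, ENNReal.toReal_one, one_smul, probReal_univ]
end

section
/- Key covariance identity underlying eSURE: with x deterministic in ℝ^N, y₁ = x + n₁, y₂ = y₁ + z as above (n₁ ~ N(0,σ₁²I), z ~ N(0,σ_z²I) independent), and h C¹ with bounded derivative, E[n₁ᵀ h(y₂)] = σ₁² · E[∑ᵢ ∂hᵢ(y₂)/∂(y₂)ᵢ]. -/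
set_option maxHeartbeats 1000000

open MeasureTheory ProbabilityTheory Real Filter
open scoped NNReal ENNReal

-- integral against gaussianReal as a Lebesgue integral
lemma esure_integral_gauss (v : ℝ≥0) (hv : v ≠ 0) (f : ℝ → ℝ) :
    ∫ t, f t ∂(gaussianReal 0 v) = ∫ t, gaussianPDFReal 0 v t * f t := by
  rw [gaussianReal_of_var_ne_zero _ hv]
  have h1 : gaussianPDF 0 v = fun t => ((gaussianPDFReal 0 v t).toNNReal : ℝ≥0∞) := rfl
  rw [h1, integral_withDensity_eq_integral_smul
    ((measurable_gaussianPDFReal 0 v).real_toNNReal)]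
  congr 1; ext t
  rw [NNReal.smul_def, smul_eq_mul, Real.coe_toNNReal _ (gaussianPDFReal_nonneg _ _ _)]

-- gaussianPDFReal 0 v as const * exp
lemma esure_pdf_eq (v : ℝ≥0) (t : ℝ) :
    gaussianPDFReal 0 v t = (Real.sqrt (2 * π * v))⁻¹ * Real.exp (-(2 * (v:ℝ))⁻¹ * t ^ 2) := by
  rw [gaussianPDFReal, sub_zero]
  by_cases h : (v:ℝ) = 0
  · simp [h]
  · congr 2
    field_simp

lemma esure_pdf_continuous (v : ℝ≥0) : Continuous (gaussianPDFReal 0 v) := by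
  simp only [funext (esure_pdf_eq v)]
  fun_prop

-- integrability of quadratic-growth functions against the gaussian weight
lemma esure_integrable_weight (v : ℝ≥0) (hv : v ≠ 0) {f : ℝ → ℝ} (hf : Continuous f)
    (a b c : ℝ) (hbound : ∀ t, |f t| ≤ a + b * |t| + c * t ^ 2) :
    Integrable (fun t => gaussianPDFReal 0 v t * f t) := by
  have hv' : (0:ℝ) < (2 * (v:ℝ))⁻¹ := by
    have : (0:ℝ) < (v:ℝ) := lt_of_le_of_ne (v.coe_nonneg) (by exact_mod_cast (Ne.symm hv))
    positivity
  set d : ℝ := (2 * (v:ℝ))⁻¹ with hd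
  set c0 : ℝ := (Real.sqrt (2 * π * v))⁻¹ with hc0
  have hc0pos : 0 ≤ c0 := by positivity
  have hint : Integrable (fun t : ℝ =>
      c0 * ((a * Real.exp (-d * t ^ 2)) + (b * (|t| * Real.exp (-d * t ^ 2)))
        + (c * (t ^ 2 * Real.exp (-d * t ^ 2))))) := by
    refine Integrable.const_mul ?_ _
    refine Integrable.add (Integrable.add ?_ ?_) ?_
    · exact (integrable_exp_neg_mul_sq hv').const_mul _
    · refine Integrable.const_mul ?_ _
      have := (integrable_mul_exp_neg_mul_sq hv').abs
      refine this.congr ?_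
      filter_upwards with t
      rw [abs_mul, abs_of_nonneg (Real.exp_pos _).le]
    · refine Integrable.const_mul ?_ _
      have h2 := integrable_rpow_mul_exp_neg_mul_sq hv' (s := 2) (by norm_num)
      refine h2.congr ?_
      filter_upwards with t
      rw [show ((2:ℝ) = ((2:ℕ):ℝ)) by norm_num, Real.rpow_natCast]
  refine hint.mono' ?_ ?_
  · exact (((esure_pdf_continuous v).mul hf)).aestronglyMeasurable
  · filter_upwards with t
    rw [Real.norm_eq_abs, abs_mul, esure_pdf_eq v t, ← hd, ← hc0,
      abs_mul, abs_of_nonneg hc0pos, abs_of_nonneg (Real.exp_pos _).le, mul_assoc]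
    refine mul_le_mul_of_nonneg_left ?_ hc0pos
    have := hbound t
    nlinarith [Real.exp_pos (-d * t ^ 2), abs_nonneg (f t), sq_nonneg t, abs_nonneg t]

lemma esure_integrable_gauss (v : ℝ≥0) {f : ℝ → ℝ} (hf : Continuous f)
    (a b c : ℝ) (hbound : ∀ t, |f t| ≤ a + b * |t| + c * t ^ 2) :
    Integrable f (gaussianReal 0 v) := by
  by_cases hv : v = 0
  · rw [hv, gaussianReal_zero_var]
    refine ⟨hf.aestronglyMeasurable, ?_⟩
    rw [HasFiniteIntegral, lintegral_dirac]
    exact ENNReal.coe_lt_top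
  · rw [gaussianReal_of_var_ne_zero _ hv]
    have h1 : gaussianPDF 0 v = fun t => ((gaussianPDFReal 0 v t).toNNReal : ℝ≥0∞) := rfl
    rw [h1, integrable_withDensity_iff_integrable_smul
      ((measurable_gaussianPDFReal 0 v).real_toNNReal)]
    refine (esure_integrable_weight v hv hf a b c hbound).congr ?_
    filter_upwards with t
    rw [NNReal.smul_def, smul_eq_mul, Real.coe_toNNReal _ (gaussianPDFReal_nonneg _ _ _)]

lemma esure_stein1 (v : ℝ≥0) (hv : v ≠ 0) (g g' : ℝ → ℝ)
    (hg : ∀ t, HasDerivAt g (g' t) t) (hg'c : Continuous g')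
    (C : ℝ) (hb : ∀ t, |g' t| ≤ C) :
    ∫ t, t * g t ∂(gaussianReal 0 v) = (v:ℝ) * ∫ t, g' t ∂(gaussianReal 0 v) := by
  have hvR : (0:ℝ) < (v:ℝ) := lt_of_le_of_ne v.coe_nonneg (by exact_mod_cast (Ne.symm hv))
  have hgc : Continuous g := continuous_iff_continuousAt.2 fun t => (hg t).continuousAt
  have hC0 : (0:ℝ) ≤ C := le_trans (abs_nonneg _) (hb 0)
  have hlip : LipschitzWith C.toNNReal g := by
    refine lipschitzWith_of_nnnorm_deriv_le (fun t => (hg t).differentiableAt) fun t => ?_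
    rw [← NNReal.coe_le_coe, coe_nnnorm, Real.coe_toNNReal C hC0, (hg t).deriv, Real.norm_eq_abs]
    exact hb t
  have hgrow : ∀ t, |g t| ≤ |g 0| + C * |t| := by
    intro t
    have h1 := hlip.dist_le_mul t 0
    rw [Real.dist_eq, Real.dist_eq, sub_zero, Real.coe_toNNReal C hC0] at h1
    have h2 : |g t| ≤ |g t - g 0| + |g 0| := by
      calc |g t| = |(g t - g 0) + g 0| := by ring_nf
      _ ≤ |g t - g 0| + |g 0| := abs_add_le _ _
    linarith
  set φ : ℝ → ℝ := gaussianPDFReal 0 v with hφ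
  set w : ℝ → ℝ := fun t => -(v:ℝ) * φ t with hw
  have hwd : ∀ t, HasDerivAt w (t * φ t) t := by
    intro t
    have h1 : HasDerivAt (fun s : ℝ => -(2*(v:ℝ))⁻¹ * s ^ 2) (-(2*(v:ℝ))⁻¹ * (2 * t ^ 1)) t :=
      (hasDerivAt_pow 2 t).const_mul _
    have h2 := h1.exp
    have h3 := h2.const_mul (-(v:ℝ) * (Real.sqrt (2 * π * v))⁻¹)
    have heq : w = fun s => -(v:ℝ) * (Real.sqrt (2 * π * v))⁻¹
        * Real.exp (-(2*(v:ℝ))⁻¹ * s ^ 2) := by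
      funext s; rw [hw]; dsimp only; rw [hφ, esure_pdf_eq v s]; ring
    rw [heq]
    refine h3.congr_deriv ?_
    rw [hφ, esure_pdf_eq v t]
    field_simp
  have key : ∫ t, g t * (t * φ t) = - ∫ t, g' t * w t := by
    refine integral_mul_deriv_eq_deriv_mul_of_integrable (fun t _ => hg t) (fun t _ => hwd t) ?_ ?_ ?_
    · show Integrable (fun t => g t * (t * φ t))
      have e1 : (fun t => g t * (t * φ t)) = fun t => φ t * (t * g t) := by
        funext t; ring
      rw [e1]
      refine esure_integrable_weight v hv (by fun_prop) 0 |g 0| C fun t => ?_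
      rw [abs_mul]
      have := hgrow t
      nlinarith [abs_nonneg t, abs_nonneg (g t), sq_abs t]
    · show Integrable (fun t => g' t * w t)
      have e1 : (fun t => g' t * w t) = fun t => φ t * (-(v:ℝ) * g' t) := by
        funext t; rw [hw]; ring
      rw [e1]
      refine esure_integrable_weight v hv (by fun_prop) ((v:ℝ) * C) 0 0 fun t => ?_
      rw [abs_mul, abs_neg, abs_of_nonneg hvR.le]
      have := hb t
      nlinarith
    · show Integrable (fun t => g t * w t)
      have e1 : (fun t => g t * w t) = fun t => φ t * (-(v:ℝ) * g t) := by
        funext t; rw [hw]; ring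
      rw [e1]
      refine esure_integrable_weight v hv (by fun_prop) ((v:ℝ) * |g 0|) ((v:ℝ) * C) 0 fun t => ?_
      rw [abs_mul, abs_neg, abs_of_nonneg hvR.le]
      have := hgrow t
      nlinarith [abs_nonneg t, abs_nonneg (g t)]
  rw [esure_integral_gauss v hv, esure_integral_gauss v hv]
  have e2 : (fun t => φ t * (t * g t)) = fun t => g t * (t * φ t) := by funext t; ring
  rw [show ∫ t, gaussianPDFReal 0 v t * (t * g t) = ∫ t, g t * (t * φ t) by rw [← e2]]
  rw [key]
  have e3 : (fun t => g' t * w t) = fun t => -((v:ℝ) * (φ t * g' t)) := by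
    funext t; rw [hw]; ring
  rw [e3, integral_neg, neg_neg, integral_const_mul]

lemma esure_integrable_eval {m : ℕ} (v : ℝ≥0) {f : ℝ → ℝ}
    (hf : Integrable f (gaussianReal 0 v)) (i : Fin m) :
    Integrable (fun y : Fin m → ℝ => f (y i)) (Measure.pi fun _ => gaussianReal 0 v) := by
  have hm : m ≠ 0 := fun h0 => (h0 ▸ i).elim0
  obtain ⟨n, rfl⟩ := Nat.exists_eq_succ_of_ne_zero hm
  have mp := measurePreserving_piFinSuccAbove (fun _ : Fin (n+1) => gaussianReal 0 v) i
  have hint : Integrable (fun q : ℝ × (Fin n → ℝ) => f q.1)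
      ((gaussianReal 0 v).prod (Measure.pi fun _ => gaussianReal 0 v)) := by
    have h1 := hf.mul_prod (integrable_const (c := (1:ℝ))
      (μ := Measure.pi fun _ : Fin n => gaussianReal 0 v))
    simpa using h1
  have h2 := (mp.integrable_comp_emb
    (MeasurableEquiv.piFinSuccAbove (fun _ : Fin (n+1) => ℝ) i).measurableEmbedding).2 hint
  refine h2.congr ?_
  filter_upwards with y
  simp [MeasurableEquiv.piFinSuccAbove, Function.comp]; rfl

lemma esure_integrable_norm_pi {m : ℕ} (v : ℝ≥0) :
    Integrable (fun y : Fin m → ℝ => ‖y‖) (Measure.pi fun _ => gaussianReal 0 v) := by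
  have habs : Integrable (fun t : ℝ => |t|) (gaussianReal 0 v) :=
    esure_integrable_gauss v continuous_abs 0 1 0 fun t => by simp [abs_abs]
  refine Integrable.mono' (g := fun y => ∑ i, |y i|)
    (integrable_finset_sum _ fun i _ => esure_integrable_eval v habs i)
    continuous_norm.aestronglyMeasurable ?_
  filter_upwards with y
  rw [norm_norm]
  refine (pi_norm_le_iff_of_nonneg (by positivity)).2 fun i => ?_
  exact Finset.single_le_sum (f := fun j => |y j|) (fun j _ => abs_nonneg _)
    (Finset.mem_univ i)

lemma esure_integrable_normsq_pi {m : ℕ} (v : ℝ≥0) :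
    Integrable (fun y : Fin m → ℝ => ‖y‖ ^ 2) (Measure.pi fun _ => gaussianReal 0 v) := by
  have hsq : Integrable (fun t : ℝ => t ^ 2) (gaussianReal 0 v) :=
    esure_integrable_gauss v (by fun_prop) 0 0 1 fun t => by simp [abs_of_nonneg (sq_nonneg t), sq_abs]
  refine Integrable.mono' (g := fun y => ∑ i, (y i) ^ 2)
    (integrable_finset_sum _ fun i _ => esure_integrable_eval v hsq i)
    (continuous_norm.pow 2).aestronglyMeasurable ?_
  filter_upwards with y
  have hS : (0:ℝ) ≤ ∑ i, (y i) ^ 2 := Finset.sum_nonneg fun i _ => sq_nonneg _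
  have h1 : ‖y‖ ≤ Real.sqrt (∑ i, (y i) ^ 2) := by
    refine (pi_norm_le_iff_of_nonneg (Real.sqrt_nonneg _)).2 fun i => ?_
    have h2 : (y i) ^ 2 ≤ ∑ j, (y j) ^ 2 :=
      Finset.single_le_sum (f := fun j => (y j) ^ 2) (fun j _ => sq_nonneg _) (Finset.mem_univ i)
    calc ‖y i‖ = Real.sqrt ((y i) ^ 2) := by rw [Real.sqrt_sq_eq_abs]; rfl
    _ ≤ _ := Real.sqrt_le_sqrt h2
  rw [Real.norm_of_nonneg (by positivity)]
  calc ‖y‖ ^ 2 ≤ Real.sqrt (∑ i, (y i) ^ 2) ^ 2 := by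
        exact pow_le_pow_left₀ (norm_nonneg _) h1 2
  _ = ∑ i, (y i) ^ 2 := Real.sq_sqrt hS

lemma esure_insertNth_self {n : ℕ} (i : Fin (n+1)) (y : Fin (n+1) → ℝ) :
    i.insertNth (y i) (fun j => y (i.succAbove j)) = y := by
  funext j
  refine Fin.succAboveCases i ?_ ?_ j
  · simp
  · intro k; simp

lemma esure_insertNth_eq {n : ℕ} (i : Fin (n+1)) (t : ℝ) (w : Fin n → ℝ) :
    (Fin.insertNth (α := fun _ => ℝ) i t w)
      = (Fin.insertNth (α := fun _ => ℝ) i 0 w) + t • (Pi.single i (1:ℝ) : Fin (n+1) → ℝ) := by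
  funext j
  refine Fin.succAboveCases i ?_ ?_ j
  · simp
  · intro k
    simp [Pi.single_eq_of_ne (Fin.succAbove_ne i k)]

lemma esure_insertNth_norm {n : ℕ} (i : Fin (n+1)) (t : ℝ) (w : Fin n → ℝ) :
    ‖(Fin.insertNth (α := fun _ => ℝ) i t w)‖ ≤ |t| + ‖w‖ := by
  refine (pi_norm_le_iff_of_nonneg (by positivity)).2 fun j => ?_
  refine Fin.succAboveCases i ?_ ?_ j
  · simp only [Fin.insertNth_apply_same, Real.norm_eq_abs]
    exact le_add_of_nonneg_right (norm_nonneg _)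
  · intro k
    simp only [Fin.insertNth_apply_succAbove]
    exact le_add_of_nonneg_left (abs_nonneg _) |>.trans' (norm_le_pi_norm w k)

lemma esure_cont_insertNth {n : ℕ} (i : Fin (n+1)) :
    Continuous (fun q : ℝ × (Fin n → ℝ) => (Fin.insertNth (α := fun _ => ℝ) i q.1 q.2)) := by
  refine continuous_pi fun j => ?_
  refine Fin.succAboveCases i ?_ ?_ j
  · simp only [Fin.insertNth_apply_same]; exact continuous_fst
  · intro k
    simp only [Fin.insertNth_apply_succAbove]
    exact (continuous_apply k).comp continuous_snd

lemma esure_stein_pi {n : ℕ} (σ₁ : ℝ≥0) (hσ₁ : σ₁ ≠ 0)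
    (h : (Fin (n+1) → ℝ) → (Fin (n+1) → ℝ)) (hdiff : ContDiff ℝ 1 h)
    (C : ℝ) (hC : ∀ v : Fin (n+1) → ℝ, ‖fderiv ℝ h v‖ ≤ C) (c : Fin (n+1) → ℝ) (i : Fin (n+1)) :
    ∫ y, y i * h (c + y) i ∂(Measure.pi fun _ : Fin (n+1) => gaussianReal 0 (σ₁^2))
      = ((σ₁^2 : ℝ≥0) : ℝ) * ∫ y, fderiv ℝ h (c + y) (Pi.single i 1) i
          ∂(Measure.pi fun _ : Fin (n+1) => gaussianReal 0 (σ₁^2)) := by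
  have hC0 : (0:ℝ) ≤ C := le_trans (norm_nonneg _) (hC 0)
  have hd : Differentiable ℝ h := hdiff.differentiable one_ne_zero
  have hcont : Continuous h := hdiff.continuous
  have hfc : Continuous (fderiv ℝ h) := hdiff.continuous_fderiv one_ne_zero
  have hlip : LipschitzWith C.toNNReal h := by
    refine lipschitzWith_of_nnnorm_fderiv_le hd fun u => ?_
    rw [← NNReal.coe_le_coe, coe_nnnorm, Real.coe_toNNReal C hC0]
    exact hC u
  have hgrow : ∀ u : Fin (n+1) → ℝ, ‖h u‖ ≤ ‖h 0‖ + C * ‖u‖ := by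
    intro u
    have h1 := hlip.dist_le_mul u 0
    rw [dist_eq_norm, dist_eq_norm, sub_zero, Real.coe_toNNReal C hC0] at h1
    calc ‖h u‖ = ‖(h u - h 0) + h 0‖ := by rw [sub_add_cancel]
    _ ≤ ‖h u - h 0‖ + ‖h 0‖ := norm_add_le _ _
    _ ≤ C * ‖u‖ + ‖h 0‖ := by linarith
    _ = _ := by ring
  have hdle : ∀ u : Fin (n+1) → ℝ, |fderiv ℝ h u (Pi.single i 1) i| ≤ C := by
    intro u
    calc |fderiv ℝ h u (Pi.single i 1) i| = ‖fderiv ℝ h u (Pi.single i 1) i‖ :=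
      (Real.norm_eq_abs _).symm
    _ ≤ ‖fderiv ℝ h u (Pi.single i 1)‖ := norm_le_pi_norm _ i
    _ ≤ ‖fderiv ℝ h u‖ * ‖(Pi.single i (1:ℝ) : Fin (n+1) → ℝ)‖ := (fderiv ℝ h u).le_opNorm _
    _ ≤ C * 1 := by
        refine mul_le_mul (hC u) ?_ (norm_nonneg _) hC0
        have : ‖(Pi.single i (1:ℝ) : Fin (n+1) → ℝ)‖ = ‖(1:ℝ)‖ := Pi.norm_single _
        rw [this, norm_one]
    _ = C := mul_one C
  have hg'cont : Continuous fun u : Fin (n+1) → ℝ => fderiv ℝ h u (Pi.single i 1) i :=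
    (continuous_apply i).comp (hfc.clm_apply continuous_const)
  have habs : Integrable (fun t : ℝ => |t|) (gaussianReal 0 (σ₁^2)) :=
    esure_integrable_gauss _ continuous_abs 0 1 0 fun t => by simp [abs_abs]
  have hsq : Integrable (fun t : ℝ => t ^ 2) (gaussianReal 0 (σ₁^2)) :=
    esure_integrable_gauss _ (by fun_prop) 0 0 1 fun t => by
      simp [abs_of_nonneg (sq_nonneg t), sq_abs]
  have mp := measurePreserving_piFinSuccAbove (fun _ : Fin (n+1) => gaussianReal 0 (σ₁^2)) i
  set e := MeasurableEquiv.piFinSuccAbove (fun _ : Fin (n+1) => ℝ) i with he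
  set G : ℝ × (Fin n → ℝ) → ℝ := fun q => q.1 * h (c + Fin.insertNth (α := fun _ => ℝ) i q.1 q.2) i with hG
  set D : ℝ × (Fin n → ℝ) → ℝ :=
    fun q => fderiv ℝ h (c + Fin.insertNth (α := fun _ => ℝ) i q.1 q.2) (Pi.single i 1) i with hD
  have hGcont : Continuous G := by
    refine continuous_fst.mul ?_
    exact (continuous_apply i).comp (hcont.comp (continuous_const.add (esure_cont_insertNth i)))
  have hDcont : Continuous D :=
    hg'cont.comp (continuous_const.add (esure_cont_insertNth i))
  have hGe : ∀ y : Fin (n+1) → ℝ, G (e y) = y i * h (c + y) i := by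
    intro y
    have h1 : e y = (y i, fun j => y (i.succAbove j)) := rfl
    rw [hG]; dsimp only; rw [h1]; dsimp only
    rw [esure_insertNth_self]
  have hDe : ∀ y : Fin (n+1) → ℝ, D (e y) = fderiv ℝ h (c + y) (Pi.single i 1) i := by
    intro y
    have h1 : e y = (y i, fun j => y (i.succAbove j)) := rfl
    rw [hD]; dsimp only; rw [h1]; dsimp only
    rw [esure_insertNth_self]
  have hGint : Integrable G ((gaussianReal 0 (σ₁^2)).prod (Measure.pi fun _ : Fin n => gaussianReal 0 (σ₁^2))) := by
    have b1 : Integrable (fun q : ℝ × (Fin n → ℝ) => |q.1|) ((gaussianReal 0 (σ₁^2)).prod (Measure.pi fun _ : Fin n => gaussianReal 0 (σ₁^2))) := by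
      have := habs.mul_prod (integrable_const (c := (1:ℝ)) (μ := Measure.pi fun _ : Fin n => gaussianReal 0 (σ₁^2))); simpa using this
    have b2 : Integrable (fun q : ℝ × (Fin n → ℝ) => q.1 ^ 2) ((gaussianReal 0 (σ₁^2)).prod (Measure.pi fun _ : Fin n => gaussianReal 0 (σ₁^2))) := by
      have := hsq.mul_prod (integrable_const (c := (1:ℝ)) (μ := Measure.pi fun _ : Fin n => gaussianReal 0 (σ₁^2))); simpa using this
    have b3 : Integrable (fun q : ℝ × (Fin n → ℝ) => |q.1| * ‖q.2‖) ((gaussianReal 0 (σ₁^2)).prod (Measure.pi fun _ : Fin n => gaussianReal 0 (σ₁^2))) :=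
      habs.mul_prod (esure_integrable_norm_pi _)
    refine Integrable.mono'
      (g := fun q => (‖h 0‖ + C * ‖c‖) * |q.1| + C * q.1 ^ 2 + C * (|q.1| * ‖q.2‖))
      (((b1.const_mul _).add (b2.const_mul _)).add (b3.const_mul _))
      hGcont.aestronglyMeasurable ?_
    filter_upwards with q
    rw [hG]; dsimp only
    rw [Real.norm_eq_abs, abs_mul]
    have h1 : |h (c + Fin.insertNth (α := fun _ => ℝ) i q.1 q.2) i| ≤ ‖h 0‖ + C * (‖c‖ + (|q.1| + ‖q.2‖)) := by
      calc |h (c + Fin.insertNth (α := fun _ => ℝ) i q.1 q.2) i| = ‖h (c + Fin.insertNth (α := fun _ => ℝ) i q.1 q.2) i‖ :=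
        (Real.norm_eq_abs _).symm
      _ ≤ ‖h (c + Fin.insertNth (α := fun _ => ℝ) i q.1 q.2)‖ := norm_le_pi_norm _ i
      _ ≤ ‖h 0‖ + C * ‖c + Fin.insertNth (α := fun _ => ℝ) i q.1 q.2‖ := hgrow _
      _ ≤ _ := by
          refine add_le_add_right (mul_le_mul_of_nonneg_left ?_ hC0) _
          exact (norm_add_le _ _).trans (add_le_add_right (esure_insertNth_norm i _ _) _)
    nlinarith [abs_nonneg q.1, norm_nonneg q.2, abs_nonneg (h (c + Fin.insertNth (α := fun _ => ℝ) i q.1 q.2) i),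
      sq_abs q.1, sq_nonneg q.1]
  have hDint : Integrable D ((gaussianReal 0 (σ₁^2)).prod (Measure.pi fun _ : Fin n => gaussianReal 0 (σ₁^2))) := by
    refine Integrable.mono' (g := fun _ => C) (integrable_const C)
      hDcont.aestronglyMeasurable ?_
    filter_upwards with q
    rw [hD]; exact hdle _
  have step1 : ∫ y, y i * h (c + y) i ∂(Measure.pi fun _ : Fin (n+1) => gaussianReal 0 (σ₁^2))
      = ∫ q, G q ∂((gaussianReal 0 (σ₁^2)).prod (Measure.pi fun _ : Fin n => gaussianReal 0 (σ₁^2))) := by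
    rw [← mp.integral_comp e.measurableEmbedding G]
    exact integral_congr_ae (Filter.Eventually.of_forall fun y => (hGe y).symm)
  have step6 : ∫ q, D q ∂((gaussianReal 0 (σ₁^2)).prod (Measure.pi fun _ : Fin n => gaussianReal 0 (σ₁^2)))
      = ∫ y, fderiv ℝ h (c + y) (Pi.single i 1) i ∂(Measure.pi fun _ : Fin (n+1) => gaussianReal 0 (σ₁^2)) := by
    rw [← mp.integral_comp e.measurableEmbedding D]
    exact integral_congr_ae (Filter.Eventually.of_forall fun y => hDe y)
  rw [step1, ← step6]
  rw [integral_prod_symm G hGint, integral_prod_symm D hDint]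
  have step3 : ∀ w : Fin n → ℝ, ∫ t, G (t, w) ∂(gaussianReal 0 (σ₁^2)) = ((σ₁^2 : ℝ≥0) : ℝ) * ∫ t, D (t, w) ∂(gaussianReal 0 (σ₁^2)) := by
    intro w
    refine esure_stein1 (σ₁^2) (pow_ne_zero 2 hσ₁) (fun t => h (c + Fin.insertNth (α := fun _ => ℝ) i t w) i)
      (fun t => D (t, w)) ?_ (hDcont.comp (Continuous.prodMk_left w)) C (fun t => hdle _)
    intro t
    have hb : HasDerivAt (fun t : ℝ => (c + Fin.insertNth (α := fun _ => ℝ) i 0 w) + t • (Pi.single i (1:ℝ) : Fin (n+1) → ℝ))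
        (Pi.single i (1:ℝ)) t := by
      simpa using ((hasDerivAt_id t).smul_const ((Pi.single i (1:ℝ) : Fin (n+1) → ℝ))).const_add
        (c + Fin.insertNth (α := fun _ => ℝ) i 0 w)
    have hhd := (hd _).hasFDerivAt.comp_hasDerivAt t hb
    have hkey := (hasDerivAt_pi.mp hhd) i
    have harg : ∀ s : ℝ, (c + Fin.insertNth (α := fun _ => ℝ) i 0 w) + s • (Pi.single i (1:ℝ) : Fin (n+1) → ℝ) = c + Fin.insertNth (α := fun _ => ℝ) i s w := by
      intro s; rw [esure_insertNth_eq i s w, add_assoc]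
    have hkey' : HasDerivAt (fun s : ℝ => h (c + Fin.insertNth (α := fun _ => ℝ) i s w) i)
        ((fderiv ℝ h (c + Fin.insertNth (α := fun _ => ℝ) i t w)) (Pi.single i 1) i) t := by
      have hfun : (fun s : ℝ => h (c + Fin.insertNth (α := fun _ => ℝ) i s w) i)
          = fun s : ℝ => (h ∘ fun r : ℝ => c + Fin.insertNth (α := fun _ => ℝ) i 0 w
              + r • (Pi.single i (1:ℝ) : Fin (n+1) → ℝ)) s i := by
        funext s
        simp only [Function.comp_apply]
        rw [harg s]
      rw [hfun, ← harg t]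
      exact hkey
    rw [hD]
    exact hkey'
  calc ∫ w, ∫ t, G (t, w) ∂(gaussianReal 0 (σ₁^2)) ∂(Measure.pi fun _ : Fin n => gaussianReal 0 (σ₁^2)) = ∫ w, ((σ₁^2 : ℝ≥0) : ℝ) * ∫ t, D (t, w) ∂(gaussianReal 0 (σ₁^2)) ∂(Measure.pi fun _ : Fin n => gaussianReal 0 (σ₁^2)) :=
        integral_congr_ae (Filter.Eventually.of_forall fun w => step3 w)
  _ = ((σ₁^2 : ℝ≥0) : ℝ) * ∫ w, ∫ t, D (t, w) ∂(gaussianReal 0 (σ₁^2)) ∂(Measure.pi fun _ : Fin n => gaussianReal 0 (σ₁^2)) := integral_const_mul _ _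

/-- Generalized Stein identity underlying eSURE: with `y₂ = x + n₁ + z`, where
`n₁ ~ N(0, σ₁²I)` and `z ~ N(0, σ_z²I)` are independent, and `h` C¹ with bounded
derivative, `E[n₁ᵀ h(y₂)] = σ₁² · E[∑ᵢ ∂hᵢ(y₂)/∂(y₂)ᵢ]`. -/
theorem esure_covariance_identity (N : ℕ) (hN : 0 < N) (x : Fin N → ℝ)
    (σ₁ σz : ℝ≥0) (hσ₁ : 0 < σ₁)
    (h : (Fin N → ℝ) → (Fin N → ℝ)) (hdiff : ContDiff ℝ 1 h)
    (C : ℝ) (hC : ∀ v : Fin N → ℝ, ‖fderiv ℝ h v‖ ≤ C) :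
    ∫ p : (Fin N → ℝ) × (Fin N → ℝ), ∑ i, p.1 i * h (x + p.1 + p.2) i
        ∂((Measure.pi fun _ : Fin N => gaussianReal 0 (σ₁ ^ 2)).prod
            (Measure.pi fun _ : Fin N => gaussianReal 0 (σz ^ 2)))
      = (σ₁ : ℝ) ^ 2
        * ∫ p : (Fin N → ℝ) × (Fin N → ℝ),
            ∑ i, fderiv ℝ h (x + p.1 + p.2) (Pi.single i 1) i
          ∂((Measure.pi fun _ : Fin N => gaussianReal 0 (σ₁ ^ 2)).prod
              (Measure.pi fun _ : Fin N => gaussianReal 0 (σz ^ 2))) := by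
  obtain ⟨n, rfl⟩ := Nat.exists_eq_succ_of_ne_zero hN.ne'
  have hC0 : (0:ℝ) ≤ C := le_trans (norm_nonneg _) (hC 0)
  have hd : Differentiable ℝ h := hdiff.differentiable one_ne_zero
  have hcont : Continuous h := hdiff.continuous
  have hfc : Continuous (fderiv ℝ h) := hdiff.continuous_fderiv one_ne_zero
  have hlip : LipschitzWith C.toNNReal h := by
    refine lipschitzWith_of_nnnorm_fderiv_le hd fun u => ?_
    rw [← NNReal.coe_le_coe, coe_nnnorm, Real.coe_toNNReal C hC0]
    exact hC u
  have hgrow : ∀ u : Fin (n+1) → ℝ, ‖h u‖ ≤ ‖h 0‖ + C * ‖u‖ := by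
    intro u
    have h1 := hlip.dist_le_mul u 0
    rw [dist_eq_norm, dist_eq_norm, sub_zero, Real.coe_toNNReal C hC0] at h1
    calc ‖h u‖ = ‖(h u - h 0) + h 0‖ := by rw [sub_add_cancel]
    _ ≤ ‖h u - h 0‖ + ‖h 0‖ := norm_add_le _ _
    _ ≤ C * ‖u‖ + ‖h 0‖ := by linarith
    _ = _ := by ring
  have hdle : ∀ (i : Fin (n+1)) (u : Fin (n+1) → ℝ),
      |fderiv ℝ h u (Pi.single i 1) i| ≤ C := by
    intro i u
    calc |fderiv ℝ h u (Pi.single i 1) i| = ‖fderiv ℝ h u (Pi.single i 1) i‖ :=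
      (Real.norm_eq_abs _).symm
    _ ≤ ‖fderiv ℝ h u (Pi.single i 1)‖ := norm_le_pi_norm _ i
    _ ≤ ‖fderiv ℝ h u‖ * ‖(Pi.single i (1:ℝ) : Fin (n+1) → ℝ)‖ := (fderiv ℝ h u).le_opNorm _
    _ ≤ C * 1 := by
        refine mul_le_mul (hC u) ?_ (norm_nonneg _) hC0
        have : ‖(Pi.single i (1:ℝ) : Fin (n+1) → ℝ)‖ = ‖(1:ℝ)‖ := Pi.norm_single _
        rw [this, norm_one]
    _ = C := mul_one C
  have hg'cont : ∀ i : Fin (n+1),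
      Continuous fun u : Fin (n+1) → ℝ => fderiv ℝ h u (Pi.single i 1) i := fun i =>
    (continuous_apply i).comp (hfc.clm_apply continuous_const)
  -- integrability of each summand
  have b1 : Integrable (fun p : (Fin (n+1) → ℝ) × (Fin (n+1) → ℝ) => ‖p.1‖)
      ((Measure.pi fun _ : Fin (n+1) => gaussianReal 0 (σ₁ ^ 2)).prod
        (Measure.pi fun _ : Fin (n+1) => gaussianReal 0 (σz ^ 2))) := by
    have := (esure_integrable_norm_pi (m := n+1) (σ₁^2)).mul_prod
      (integrable_const (c := (1:ℝ))
        (μ := Measure.pi fun _ : Fin (n+1) => gaussianReal 0 (σz ^ 2)))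
    simpa using this
  have b2 : Integrable (fun p : (Fin (n+1) → ℝ) × (Fin (n+1) → ℝ) => ‖p.1‖ ^ 2)
      ((Measure.pi fun _ : Fin (n+1) => gaussianReal 0 (σ₁ ^ 2)).prod
        (Measure.pi fun _ : Fin (n+1) => gaussianReal 0 (σz ^ 2))) := by
    have := (esure_integrable_normsq_pi (m := n+1) (σ₁^2)).mul_prod
      (integrable_const (c := (1:ℝ))
        (μ := Measure.pi fun _ : Fin (n+1) => gaussianReal 0 (σz ^ 2)))
    simpa using this
  have b3 : Integrable (fun p : (Fin (n+1) → ℝ) × (Fin (n+1) → ℝ) => ‖p.1‖ * ‖p.2‖)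
      ((Measure.pi fun _ : Fin (n+1) => gaussianReal 0 (σ₁ ^ 2)).prod
        (Measure.pi fun _ : Fin (n+1) => gaussianReal 0 (σz ^ 2))) :=
    (esure_integrable_norm_pi _).mul_prod (esure_integrable_norm_pi _)
  have hFcont : ∀ i : Fin (n+1), Continuous
      (fun p : (Fin (n+1) → ℝ) × (Fin (n+1) → ℝ) => p.1 i * h (x + p.1 + p.2) i) := by
    intro i
    exact ((continuous_apply i).comp continuous_fst).mul ((continuous_apply i).comp
      (hcont.comp ((continuous_const.add continuous_fst).add continuous_snd)))
  have hFint : ∀ i : Fin (n+1), Integrable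
      (fun p : (Fin (n+1) → ℝ) × (Fin (n+1) → ℝ) => p.1 i * h (x + p.1 + p.2) i)
      ((Measure.pi fun _ : Fin (n+1) => gaussianReal 0 (σ₁ ^ 2)).prod
        (Measure.pi fun _ : Fin (n+1) => gaussianReal 0 (σz ^ 2))) := by
    intro i
    refine Integrable.mono'
      (g := fun p => (‖h 0‖ + C * ‖x‖) * ‖p.1‖ + C * ‖p.1‖ ^ 2 + C * (‖p.1‖ * ‖p.2‖))
      (((b1.const_mul _).add (b2.const_mul _)).add (b3.const_mul _))
      (hFcont i).aestronglyMeasurable ?_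
    filter_upwards with p
    rw [Real.norm_eq_abs, abs_mul]
    have h0 : |p.1 i| ≤ ‖p.1‖ := by
      rw [← Real.norm_eq_abs]; exact norm_le_pi_norm _ i
    have h1 : |h (x + p.1 + p.2) i| ≤ ‖h 0‖ + C * (‖x‖ + (‖p.1‖ + ‖p.2‖)) := by
      calc |h (x + p.1 + p.2) i| = ‖h (x + p.1 + p.2) i‖ := (Real.norm_eq_abs _).symm
      _ ≤ ‖h (x + p.1 + p.2)‖ := norm_le_pi_norm _ i
      _ ≤ ‖h 0‖ + C * ‖x + p.1 + p.2‖ := hgrow _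
      _ ≤ _ := by
          refine add_le_add_right (mul_le_mul_of_nonneg_left ?_ hC0) _
          have := (norm_add_le (x + p.1) p.2).trans (add_le_add_left (norm_add_le x p.1) ‖p.2‖)
          linarith
    nlinarith [abs_nonneg (p.1 i), norm_nonneg p.1, norm_nonneg p.2,
      abs_nonneg (h (x + p.1 + p.2) i), sq_nonneg (‖p.1‖ - |p.1 i|)]
  have hDcont : ∀ i : Fin (n+1), Continuous
      (fun p : (Fin (n+1) → ℝ) × (Fin (n+1) → ℝ) =>
        fderiv ℝ h (x + p.1 + p.2) (Pi.single i 1) i) := fun i =>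
    (hg'cont i).comp ((continuous_const.add continuous_fst).add continuous_snd)
  have hDint : ∀ i : Fin (n+1), Integrable
      (fun p : (Fin (n+1) → ℝ) × (Fin (n+1) → ℝ) =>
        fderiv ℝ h (x + p.1 + p.2) (Pi.single i 1) i)
      ((Measure.pi fun _ : Fin (n+1) => gaussianReal 0 (σ₁ ^ 2)).prod
        (Measure.pi fun _ : Fin (n+1) => gaussianReal 0 (σz ^ 2))) := by
    intro i
    refine Integrable.mono' (g := fun _ => C) (integrable_const C)
      (hDcont i).aestronglyMeasurable ?_
    filter_upwards with p
    exact hdle i _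
  rw [integral_finset_sum _ fun i _ => hFint i, integral_finset_sum _ fun i _ => hDint i,
    Finset.mul_sum]
  refine Finset.sum_congr rfl fun i _ => ?_
  rw [integral_prod_symm _ (hFint i), integral_prod_symm _ (hDint i)]
  have key : ∀ p2 : Fin (n+1) → ℝ,
      ∫ p1, p1 i * h (x + p1 + p2) i ∂(Measure.pi fun _ : Fin (n+1) => gaussianReal 0 (σ₁ ^ 2))
      = ((σ₁^2 : ℝ≥0) : ℝ) * ∫ p1, fderiv ℝ h (x + p1 + p2) (Pi.single i 1) i
          ∂(Measure.pi fun _ : Fin (n+1) => gaussianReal 0 (σ₁ ^ 2)) := by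
    intro p2
    have e1 : ∀ p1 : Fin (n+1) → ℝ, x + p1 + p2 = (x + p2) + p1 := by
      intro p1; rw [add_right_comm, add_comm x p2, add_comm _ p1, add_comm p1 (p2 + x),
        add_comm p2 x]
    simp_rw [e1]
    exact esure_stein_pi σ₁ hσ₁.ne' h hdiff C hC (x + p2) i
  calc ∫ p2, ∫ p1, p1 i * h (x + p1 + p2) i
        ∂(Measure.pi fun _ : Fin (n+1) => gaussianReal 0 (σ₁ ^ 2))
        ∂(Measure.pi fun _ : Fin (n+1) => gaussianReal 0 (σz ^ 2))
      = ∫ p2, ((σ₁^2 : ℝ≥0) : ℝ) * ∫ p1, fderiv ℝ h (x + p1 + p2) (Pi.single i 1) i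
        ∂(Measure.pi fun _ : Fin (n+1) => gaussianReal 0 (σ₁ ^ 2))
        ∂(Measure.pi fun _ : Fin (n+1) => gaussianReal 0 (σz ^ 2)) :=
        integral_congr_ae (Filter.Eventually.of_forall fun p2 => key p2)
  _ = (σ₁ : ℝ) ^ 2 * ∫ p2, ∫ p1, fderiv ℝ h (x + p1 + p2) (Pi.single i 1) i
        ∂(Measure.pi fun _ : Fin (n+1) => gaussianReal 0 (σ₁ ^ 2))
        ∂(Measure.pi fun _ : Fin (n+1) => gaussianReal 0 (σz ^ 2)) := by
      rw [integral_const_mul]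
      norm_num
end
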